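/- arXiv:0911.0610 — 8 statements merged into one kernel-verified Lean document; each statement's English description precedes it below -/
import Mathlib

section
/- Let (S, 𝓑, μ) be a standard Borel space with a σ-finite measure μ, let G be a locally compact second-countable topological abelian group, and let 𝓖 = {φ_t}_{t∈G} be a nonsingular G-action on (S,μ). Then there exists ν₀ ∈ Λ(𝓖) whose support S_{ν₀} is maximal modulo μ: (i) for every ν ∈ Λ(𝓖), μ(S_ν \ S_{ν₀}) = 0; and (ii) if ν₁ ∈ Λ(𝓖) also satisfies μ(S_ν \ S_{ν₁}) = 0 for every ν ∈ Λ(𝓖), then μ(S_{ν₀} Δ S_{ν₁}) = 0. -/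
open MeasureTheory
open scoped ENNReal

section Aux

variable {S : Type*} [MeasurableSpace S]

/-- Key: for `ν ≪ μ`, a measurable set is `ν`-null iff its intersection with the
support of `dν/dμ` is `μ`-null. -/
lemma supp_key (μ ν : Measure S) [SigmaFinite μ] [SigmaFinite ν] (h : ν ≪ μ)
    {A : Set S} (hA : MeasurableSet A) :
    μ (A ∩ {s | 0 < ν.rnDeriv μ s}) = 0 ↔ ν A = 0 := by
  rw [← Measure.setLIntegral_rnDeriv h A,
    setLIntegral_eq_zero_iff hA (Measure.measurable_rnDeriv ν μ)]
  rw [ae_iff]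
  have : {x | ¬(x ∈ A → ν.rnDeriv μ x = 0)} = A ∩ {s | 0 < ν.rnDeriv μ s} := by
    ext x
    simp [pos_iff_ne_zero, and_comm]
  rw [this]

end Aux

/-- For a nonsingular action of a locally compact second-countable abelian
group `G` on a standard Borel space `(S, μ)` with `μ` σ-finite, the family
`Λ(𝓖)` of finite `𝓖`-invariant measures absolutely continuous w.r.t. `μ` admits a member
`ν₀` whose support is maximal modulo `μ`, uniquely so modulo `μ`. -/
theorem stmt0
    {S : Type*} [MeasurableSpace S] [StandardBorelSpace S]
    (μ : Measure S) [SigmaFinite μ]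
    {G : Type*} [AddCommGroup G] [TopologicalSpace G] [IsTopologicalAddGroup G]
    [LocallyCompactSpace G] [SecondCountableTopology G]
    [MeasurableSpace G] [BorelSpace G]
    (φ : G → S → S)
    (hjoint : Measurable fun p : G × S => φ p.1 p.2)
    (hid : ∀ s, φ 0 s = s)
    (hcomp : ∀ u v s, φ (u + v) s = φ u (φ v s))
    (hns : ∀ t, μ.map (φ t) ≪ μ ∧ μ ≪ μ.map (φ t)) :
    ∃ ν₀ : Measure S, IsFiniteMeasure ν₀ ∧ ν₀ ≪ μ ∧ (∀ t, ν₀.map (φ t) = ν₀) ∧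
      (∀ ν : Measure S, IsFiniteMeasure ν → ν ≪ μ → (∀ t, ν.map (φ t) = ν) →
        μ ({s | 0 < ν.rnDeriv μ s} \ {s | 0 < ν₀.rnDeriv μ s}) = 0) ∧
      (∀ ν₁ : Measure S, IsFiniteMeasure ν₁ → ν₁ ≪ μ → (∀ t, ν₁.map (φ t) = ν₁) →
        (∀ ν : Measure S, IsFiniteMeasure ν → ν ≪ μ → (∀ t, ν.map (φ t) = ν) →
          μ ({s | 0 < ν.rnDeriv μ s} \ {s | 0 < ν₁.rnDeriv μ s}) = 0) →
        μ (symmDiff {s | 0 < ν₀.rnDeriv μ s} {s | 0 < ν₁.rnDeriv μ s}) = 0) := by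
  classical
  have hφmeas : ∀ t : G, Measurable (φ t) := fun t =>
    hjoint.comp (measurable_const.prodMk measurable_id)
  set P : Measure S → Prop := fun ν => IsFiniteMeasure ν ∧ ν ≪ μ ∧ ∀ t, ν.map (φ t) = ν with hP
  set Sup : Measure S → Set S := fun ν => {s | 0 < ν.rnDeriv μ s} with hSup
  have hSupMeas : ∀ ν : Measure S, MeasurableSet (Sup ν) := fun ν =>
    measurableSet_lt measurable_const (Measure.measurable_rnDeriv ν μ)
  set μ' := μ.toFinite with hμ'
  have hμ'ac : μ' ≪ μ := toFinite_absolutelyContinuous μ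
  have hacμ' : μ ≪ μ' := absolutelyContinuous_toFinite μ
  set R : Set ℝ≥0∞ := (fun ν => μ' (Sup ν)) '' {ν | P ν} with hR
  have hP0 : P 0 := ⟨inferInstance, Measure.AbsolutelyContinuous.zero μ, fun t => by simp⟩
  have hRne : R.Nonempty := ⟨μ' (Sup 0), 0, hP0, rfl⟩
  -- the sup is finite
  have hRbdd : ∀ r ∈ R, r ≤ μ' Set.univ := by
    rintro r ⟨ν, -, rfl⟩
    exact measure_mono (Set.subset_univ _)
  have hsSup_ne : sSup R ≠ ∞ := by
    refine ne_top_of_le_ne_top ?_ (sSup_le hRbdd)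
    exact (measure_lt_top μ' _).ne
  -- maximizing sequence
  obtain ⟨u, hu_mono, hu_tend, hu_mem⟩ := exists_seq_tendsto_sSup hRne (OrderTop.bddAbove R)
  choose νs hνs hνseq using fun n => hu_mem n
  have hfin : ∀ n, IsFiniteMeasure (νs n) := fun n => (hνs n).1
  -- coefficients
  set c : ℕ → ℝ≥0∞ := fun n => (2 ^ (n + 1))⁻¹ * ((νs n) Set.univ + 1)⁻¹ with hc
  have hc_ne : ∀ n, c n ≠ 0 := by
    intro n
    have h1 : ((νs n) Set.univ + 1) ≠ ∞ := by
      have := (hfin n).measure_univ_lt_top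
      simp [this.ne]
    simp [hc, ENNReal.inv_ne_zero, h1, (ENNReal.pow_ne_top (by norm_num : (2:ℝ≥0∞) ≠ ∞))]
  -- the candidate measure
  set ν₀ : Measure S := Measure.sum (fun n => c n • νs n) with hν₀
  have hν₀fin : IsFiniteMeasure ν₀ := by
    constructor
    rw [hν₀, Measure.sum_apply _ MeasurableSet.univ]
    calc ∑' n, (c n • νs n) Set.univ ≤ ∑' n : ℕ, ((2:ℝ≥0∞)⁻¹) ^ (n + 1) := by
          refine ENNReal.tsum_le_tsum fun n => ?_
          rw [Measure.smul_apply, smul_eq_mul, hc, mul_assoc]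
          rw [ENNReal.inv_pow]
          refine mul_le_of_le_one_right' ?_
          rw [← ENNReal.div_eq_inv_mul]
          refine ENNReal.div_le_of_le_mul ?_
          simp
      _ ≤ ∑' n : ℕ, ((2:ℝ≥0∞)⁻¹) ^ n := by
          refine ENNReal.tsum_le_tsum fun n => ?_
          exact pow_le_pow_right_of_le_one' (by simp) (by omega)
      _ < ∞ := by
          rw [ENNReal.tsum_geometric]
          rw [ENNReal.one_sub_inv_two]
          simp
  have hν₀ac : ν₀ ≪ μ := by
    refine Measure.absolutelyContinuous_sum_left fun n => ?_
    exact Measure.AbsolutelyContinuous.smul_left ((hνs n).2.1) (c n)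
  have hν₀inv : ∀ t, ν₀.map (φ t) = ν₀ := by
    intro t
    rw [hν₀, Measure.map_sum (hφmeas t).aemeasurable]
    congr 1
    ext1 n
    rw [Measure.map_smul, (hνs n).2.2 t]
  have hν₀P : P ν₀ := ⟨hν₀fin, hν₀ac, hν₀inv⟩
  haveI := hν₀fin
  -- each νs n's support is a.e. contained in Sup ν₀
  have hcontain : ∀ n, μ (Sup (νs n) \ Sup ν₀) = 0 := by
    intro n
    haveI := hfin n
    have hA : MeasurableSet (Sup (νs n) \ Sup ν₀) := (hSupMeas _).diff (hSupMeas _)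
    have hν₀A : ν₀ (Sup (νs n) \ Sup ν₀) = 0 := by
      rw [← supp_key μ ν₀ hν₀ac hA]
      have he : (Sup (νs n) \ Sup ν₀) ∩ Sup ν₀ = ∅ := by
        simp [Set.diff_inter_self]
      rw [he]; simp
    have hνnA : νs n (Sup (νs n) \ Sup ν₀) = 0 := by
      have hle := Measure.le_sum (fun m => c m • νs m) n (Sup (νs n) \ Sup ν₀)
      rw [← hν₀, hν₀A] at hle
      simp only [Measure.smul_apply, smul_eq_mul, le_zero_iff, mul_eq_zero] at hle
      rcases hle with h | h
      · exact absurd h (hc_ne n)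
      · exact h
    have := (supp_key μ (νs n) (hνs n).2.1 hA).mpr hνnA
    rwa [Set.inter_eq_self_of_subset_left Set.diff_subset] at this
  -- μ'(Sup ν₀) ≥ sSup R
  have hν₀big : sSup R ≤ μ' (Sup ν₀) := by
    refine le_of_tendsto hu_tend (Filter.Eventually.of_forall fun n => ?_)
    rw [← hνseq n]
    refine measure_mono_ae ?_
    rw [ae_le_set]
    exact hμ'ac (hcontain n)
  -- maximality
  have hmax : ∀ ν : Measure S, IsFiniteMeasure ν → ν ≪ μ → (∀ t, ν.map (φ t) = ν) →
      μ (Sup ν \ Sup ν₀) = 0 := by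
    intro ν hνfin hνac hνinv
    haveI := hνfin
    by_contra hA0
    set A := Sup ν \ Sup ν₀ with hAdef
    have hAmeas : MeasurableSet A := (hSupMeas _).diff (hSupMeas _)
    have hμ'A : μ' A ≠ 0 := fun h => hA0 (hacμ' h)
    set ν' : Measure S := ν₀ + ν with hν'
    haveI : IsFiniteMeasure ν' := by rw [hν']; infer_instance
    have hν'ac : ν' ≪ μ := by
      intro s hs
      rw [hν', Measure.coe_add, Pi.add_apply, hν₀ac hs, hνac hs, add_zero]
    have hν'P : P ν' := by
      refine ⟨inferInstance, hν'ac, fun t => ?_⟩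
      rw [hν', Measure.map_add _ _ (hφmeas t), hν₀inv t, hνinv t]
    -- a.e. containments in Sup ν'
    have hsub : ∀ (ρ : Measure S), ρ ≤ ν' → ρ ≪ μ → SigmaFinite ρ →
        μ (Sup ρ \ Sup ν') = 0 := by
      intro ρ hρle hρac hρsf
      haveI := hρsf
      have hD : MeasurableSet (Sup ρ \ Sup ν') := (hSupMeas _).diff (hSupMeas _)
      have hν'D : ν' (Sup ρ \ Sup ν') = 0 := by
        rw [← supp_key μ ν' hν'ac hD]
        have he : (Sup ρ \ Sup ν') ∩ Sup ν' = ∅ := by simp [Set.diff_inter_self]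
        rw [he]; simp
      have hρD : ρ (Sup ρ \ Sup ν') = 0 :=
        le_antisymm (hν'D ▸ hρle _) (zero_le)
      have := (supp_key μ ρ hρac hD).mpr hρD
      rwa [Set.inter_eq_self_of_subset_left Set.diff_subset] at this
    have h0sub : μ (Sup ν₀ \ Sup ν') = 0 :=
      hsub ν₀ (by rw [hν']; exact Measure.le_add_right le_rfl) hν₀ac inferInstance
    have hνsub : μ (Sup ν \ Sup ν') = 0 :=
      hsub ν (by rw [hν']; exact Measure.le_add_left le_rfl) hνac inferInstance
    -- μ'(Sup ν') ≥ μ'(Sup ν₀) + μ' A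
    have hunion_le : μ' (Sup ν₀ ∪ Sup ν) ≤ μ' (Sup ν') := by
      refine measure_mono_ae ?_
      rw [ae_le_set, Set.union_diff_distrib]
      exact measure_union_null (hμ'ac h0sub) (hμ'ac hνsub)
    have hunion_eq : μ' (Sup ν₀ ∪ Sup ν) = μ' (Sup ν₀) + μ' A := by
      have : Sup ν₀ ∪ Sup ν = Sup ν₀ ∪ A := by
        rw [hAdef, Set.union_diff_self]
      rw [this, measure_union (Set.disjoint_sdiff_right) hAmeas]
    have hmem : μ' (Sup ν') ≤ sSup R := le_sSup ⟨ν', hν'P, rfl⟩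
    have : sSup R + μ' A ≤ sSup R := by
      calc sSup R + μ' A ≤ μ' (Sup ν₀) + μ' A := add_le_add_left hν₀big _
        _ = μ' (Sup ν₀ ∪ Sup ν) := hunion_eq.symm
        _ ≤ μ' (Sup ν') := hunion_le
        _ ≤ sSup R := hmem
    have hlt : sSup R < sSup R + μ' A := ENNReal.lt_add_right hsSup_ne hμ'A
    exact absurd (lt_of_lt_of_le hlt this) (lt_irrefl _)
  refine ⟨ν₀, hν₀fin, hν₀ac, hν₀inv, hmax, ?_⟩
  -- uniqueness
  intro ν₁ hν₁fin hν₁ac hν₁inv hν₁max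
  have h01 : μ (Sup ν₀ \ Sup ν₁) = 0 := hν₁max ν₀ hν₀fin hν₀ac hν₀inv
  have h10 : μ (Sup ν₁ \ Sup ν₀) = 0 := hmax ν₁ hν₁fin hν₁ac hν₁inv
  rw [Set.symmDiff_def]
  exact measure_union_null h01 h10
end

section
/- Let (S, 𝓑, μ) be a standard Borel space with a σ-finite measure μ, let G be a locally compact second-countable topological abelian group, let 𝓖 = {φ_t}_{t∈G} be a nonsingular G-action on (S,μ), and let P_𝓖 be a maximal element of {S_ν : ν ∈ Λ(𝓖)} with N_𝓖 := S \ P_𝓖. Then P_𝓖 and N_𝓖 are invariant with respect to 𝓖: for every t ∈ G, μ(φ_t^{-1}(P_𝓖) Δ P_𝓖) = 0 and μ(φ_t^{-1}(N_𝓖) Δ N_𝓖) = 0. -/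
open MeasureTheory

/-- The maximal support `P_𝓖` (and its complement `N_𝓖`) of finite invariant
measures absolutely continuous w.r.t. `μ` are invariant under the nonsingular group action:
`μ(φ_t⁻¹(P_𝓖) Δ P_𝓖) = 0` and `μ(φ_t⁻¹(N_𝓖) Δ N_𝓖) = 0` for all `t ∈ G`. -/
theorem stmt1
    {S : Type*} [MeasurableSpace S] [StandardBorelSpace S]
    (μ : Measure S) [SigmaFinite μ]
    {G : Type*} [AddCommGroup G] [TopologicalSpace G] [IsTopologicalAddGroup G]
    [LocallyCompactSpace G] [SecondCountableTopology G]
    [MeasurableSpace G] [BorelSpace G]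
    (φ : G → S → S)
    (hjoint : Measurable fun p : G × S => φ p.1 p.2)
    (hid : ∀ s, φ 0 s = s)
    (hcomp : ∀ u v s, φ (u + v) s = φ u (φ v s))
    (hns : ∀ t, μ.map (φ t) ≪ μ ∧ μ ≪ μ.map (φ t))
    (ν₀ : Measure S) [IsFiniteMeasure ν₀] (hν₀ac : ν₀ ≪ μ)
    (hν₀inv : ∀ t, ν₀.map (φ t) = ν₀)
    (P : Set S) (hP : P = {s | 0 < ν₀.rnDeriv μ s})
    (hmax : ∀ ν : Measure S, IsFiniteMeasure ν → ν ≪ μ → (∀ t, ν.map (φ t) = ν) →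
      μ ({s | 0 < ν.rnDeriv μ s} \ P) = 0) :
    ∀ t, μ (symmDiff (φ t ⁻¹' P) P) = 0 ∧ μ (symmDiff (φ t ⁻¹' Pᶜ) Pᶜ) = 0 := by
  have hf : Measurable (ν₀.rnDeriv μ) := Measure.measurable_rnDeriv ν₀ μ
  have hPmeas : MeasurableSet P := by
    rw [hP]; exact measurableSet_lt measurable_const hf
  have hφmeas : ∀ t, Measurable (φ t) := fun t =>
    hjoint.comp (measurable_const.prodMk measurable_id)
  -- ν₀ vanishes on Pᶜ
  have hν₀Pc : ν₀ Pᶜ = 0 := by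
    have := Measure.withDensity_rnDeriv_eq ν₀ μ hν₀ac
    rw [← this, withDensity_apply _ hPmeas.compl]
    have : ∀ s ∈ Pᶜ, ν₀.rnDeriv μ s = 0 := by
      intro s hs
      rw [hP] at hs
      simpa using hs
    calc ∫⁻ s in Pᶜ, ν₀.rnDeriv μ s ∂μ = ∫⁻ _ in Pᶜ, 0 ∂μ :=
          setLIntegral_congr_fun hPmeas.compl this
      _ = 0 := lintegral_zero
  -- ν₀-null sets inside P are μ-null
  have hnullP : ∀ A : Set S, MeasurableSet A → A ⊆ P → ν₀ A = 0 → μ A = 0 := by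
    intro A hA hAP hνA
    have := Measure.withDensity_rnDeriv_eq ν₀ μ hν₀ac
    rw [← this, withDensity_apply _ hA] at hνA
    have h0 := (setLIntegral_eq_zero_iff hA hf).mp hνA
    have h2 : μ {s | s ∈ A ∧ ν₀.rnDeriv μ s ≠ 0} = 0 := by
      rw [ae_iff] at h0
      simpa [Classical.not_imp] using h0
    have h3 : A ⊆ {s | s ∈ A ∧ ν₀.rnDeriv μ s ≠ 0} := fun s hs =>
      ⟨hs, by have := hAP hs; rw [hP] at this; exact ne_of_gt this⟩
    exact measure_mono_null h3 h2
  -- key lemma: μ (P \ φ t ⁻¹' P) = 0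
  have keyA : ∀ t, μ (P \ φ t ⁻¹' P) = 0 := by
    intro t
    have hpre : ν₀ (φ t ⁻¹' Pᶜ) = 0 := by
      have : ν₀.map (φ t) Pᶜ = ν₀ Pᶜ := by rw [hν₀inv t]
      rw [Measure.map_apply (hφmeas t) hPmeas.compl] at this
      rw [this, hν₀Pc]
    have hsub : P \ φ t ⁻¹' P ⊆ φ t ⁻¹' Pᶜ := fun s hs => hs.2
    have hνA : ν₀ (P \ φ t ⁻¹' P) = 0 :=
      measure_mono_null hsub hpre
    exact hnullP _ (hPmeas.diff ((hφmeas t) hPmeas)) Set.diff_subset hνA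
  -- key lemma: μ (φ t ⁻¹' P \ P) = 0
  have keyB : ∀ t, μ (φ t ⁻¹' P \ P) = 0 := by
    intro t
    have hset : φ (-t) ⁻¹' (φ t ⁻¹' P \ P) = P \ φ (-t) ⁻¹' P := by
      ext s
      simp only [Set.mem_preimage, Set.mem_diff]
      have : φ t (φ (-t) s) = s := by
        rw [← hcomp, add_neg_cancel, hid]
      rw [this]
    have hmeas : MeasurableSet (φ t ⁻¹' P \ P) :=
      ((hφmeas t) hPmeas).diff hPmeas
    have h0 : μ.map (φ (-t)) (φ t ⁻¹' P \ P) = 0 := by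
      rw [Measure.map_apply (hφmeas (-t)) hmeas, hset]
      exact keyA (-t)
    exact (hns (-t)).2 h0
  intro t
  have hsd : μ (symmDiff (φ t ⁻¹' P) P) = 0 := by
    rw [Set.symmDiff_def]
    exact measure_union_null (keyB t) (keyA t)
  refine ⟨hsd, ?_⟩
  have : symmDiff (φ t ⁻¹' Pᶜ) Pᶜ = symmDiff (φ t ⁻¹' P) P := by
    rw [Set.preimage_compl, compl_symmDiff_compl]
  rw [this]
  exact hsd
end

section
/- Let (S, 𝓑, μ) be a standard Borel space with a σ-finite measure μ, let G be a locally compact second-countable topological abelian group, let 𝓖 = {φ_t}_{t∈G} be a nonsingular G-action on (S,μ), and let P_𝓖 be a maximal element of {S_ν : ν ∈ Λ(𝓖)}. Then for every f ∈ L¹(S,μ) with f(s) > 0 for μ-a.e. s, and for every sequence (u_n)_{n∈ℕ} in G, one has Σ_{n=1}^∞ (φ̂_{u_n} f)(s) = ∞ for μ-a.e. s ∈ P_𝓖. -/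
open MeasureTheory Filter
open scoped ENNReal NNReal Topology

/-- On the positive part `P_𝓖` (the maximal support of finite invariant measures
absolutely continuous w.r.t. `μ`), for every strictly positive `f ∈ L¹(S,μ)` and every
sequence `(u_n)` in `G`, the series `Σ_n (φ̂_{u_n} f)(s)` diverges for `μ`-a.e. `s ∈ P_𝓖`,
where `(φ̂_u f)(s) = (d(μ∘φ_u⁻¹)/dμ)(s) · f(φ_u⁻¹(s)) = (d(μ∘φ_u⁻¹)/dμ)(s) · f(φ_{-u}(s))`. -/
theorem stmt2
    {S : Type*} [MeasurableSpace S] [StandardBorelSpace S]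
    (μ : Measure S) [SigmaFinite μ]
    {G : Type*} [AddCommGroup G] [TopologicalSpace G] [IsTopologicalAddGroup G]
    [LocallyCompactSpace G] [SecondCountableTopology G]
    [MeasurableSpace G] [BorelSpace G]
    (φ : G → S → S)
    (hjoint : Measurable fun p : G × S => φ p.1 p.2)
    (hid : ∀ s, φ 0 s = s)
    (hcomp : ∀ u v s, φ (u + v) s = φ u (φ v s))
    (hns : ∀ t, μ.map (φ t) ≪ μ ∧ μ ≪ μ.map (φ t))
    (ν₀ : Measure S) [IsFiniteMeasure ν₀] (hν₀ac : ν₀ ≪ μ)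
    (hν₀inv : ∀ t, ν₀.map (φ t) = ν₀)
    (P : Set S) (hP : P = {s | 0 < ν₀.rnDeriv μ s})
    (hmax : ∀ ν : Measure S, IsFiniteMeasure ν → ν ≪ μ → (∀ t, ν.map (φ t) = ν) →
      μ ({s | 0 < ν.rnDeriv μ s} \ P) = 0)
    (f : S → ℝ) (hf : Integrable f μ) (hfpos : ∀ᵐ s ∂μ, 0 < f s) :
    ∀ u : ℕ → G, ∀ᵐ s ∂μ, s ∈ P →
      (∑' n : ℕ, ((μ.map (φ (u n))).rnDeriv μ s) * ENNReal.ofReal (f (φ (-(u n)) s))) = ⊤ := by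
  intro u
  -- basic structure of the action
  have hφm : ∀ t : G, Measurable (φ t) := fun t =>
    hjoint.comp (measurable_const.prodMk measurable_id)
  have hinv : ∀ (t : G) (s : S), φ (-t) (φ t s) = s := fun t s => by
    rw [← hcomp, neg_add_cancel, hid]
  have hinv' : ∀ (t : G) (s : S), φ t (φ (-t) s) = s := fun t s => by
    rw [← hcomp, add_neg_cancel, hid]
  have hSF : ∀ t : G, SigmaFinite (μ.map (φ t)) := by
    intro t
    have : μ.map (φ t)
        = μ.map ((⟨⟨φ t, φ (-t), hinv t, hinv' t⟩, hφm t, hφm (-t)⟩ : S ≃ᵐ S)) := rfl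
    rw [this]
    exact MeasurableEquiv.sigmaFinite_map _
  -- translation of a.e. properties
  have htrans : ∀ (t : G) (p : S → Prop), (∀ᵐ s ∂μ, p s) → ∀ᵐ s ∂μ, p (φ t s) := by
    intro t p hp
    exact ae_of_ae_map (hφm t).aemeasurable (hp.filter_mono ((hns t).1.ae_le))
  set h : S → ℝ≥0∞ := ν₀.rnDeriv μ with hh
  have hhm : Measurable h := Measure.measurable_rnDeriv _ _
  -- measurable representative of f
  set f' : S → ℝ := hf.1.mk f with hf'
  have hf'm : Measurable f' := hf.1.stronglyMeasurable_mk.measurable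
  have hff' : ∀ᵐ s ∂μ, f s = f' s := hf.1.ae_eq_mk
  -- the key chain-rule identity:  w_t · (h ∘ φ_{-t}) = h  a.e.
  have hkey : ∀ t : G, ∀ᵐ s ∂μ,
      ((μ.map (φ t)).rnDeriv μ s) * h (φ (-t) s) = h s := by
    intro t
    have := hSF t
    have h1 : (μ.withDensity h).map (φ t)
        = (μ.map (φ t)).withDensity (fun s => h (φ (-t) s)) := by
      ext A hA
      rw [Measure.map_apply (hφm t) hA, withDensity_apply _ (hφm t hA),
        withDensity_apply _ hA,
        setLIntegral_map (f := fun x => h (φ (-t) x)) hA (hhm.comp (hφm (-t))) (hφm t)]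
      simp only [hinv]
    have hpush : ν₀ = μ.withDensity
        ((μ.map (φ t)).rnDeriv μ * fun s => h (φ (-t) s)) := by
      calc ν₀ = ν₀.map (φ t) := (hν₀inv t).symm
        _ = (μ.withDensity h).map (φ t) := by
              rw [hh, Measure.withDensity_rnDeriv_eq ν₀ μ hν₀ac]
        _ = (μ.map (φ t)).withDensity (fun s => h (φ (-t) s)) := h1
        _ = (μ.withDensity ((μ.map (φ t)).rnDeriv μ)).withDensity
              (fun s => h (φ (-t) s)) := by
              rw [Measure.withDensity_rnDeriv_eq (μ.map (φ t)) μ (hns t).1]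
        _ = μ.withDensity ((μ.map (φ t)).rnDeriv μ * fun s => h (φ (-t) s)) :=
              (withDensity_mul μ (Measure.measurable_rnDeriv _ _)
                (hhm.comp (hφm (-t)))).symm
    have hmeasF : Measurable ((μ.map (φ t)).rnDeriv μ * fun s => h (φ (-t) s)) :=
      (Measure.measurable_rnDeriv (μ.map (φ t)) μ).mul (hhm.comp (hφm (-t)))
    have h2 := Measure.rnDeriv_withDensity μ hmeasF
    rw [← hpush] at h2
    filter_upwards [h2] with s hs
    exact hs.symm
  -- the comparison function g = f'/h
  set g : S → ℝ≥0∞ := fun x => ENNReal.ofReal (f' x) / h x with hg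
  have hgm : Measurable g := (ENNReal.measurable_ofReal.comp hf'm).div hhm
  -- termwise identity on P
  have hn : ∀ n : ℕ, ∀ᵐ s ∂μ, s ∈ P →
      ((μ.map (φ (u n))).rnDeriv μ s) * ENNReal.ofReal (f (φ (-(u n)) s))
        = h s * g (φ (-(u n)) s) := by
    intro n
    have := hSF (u n)
    filter_upwards [hkey (u n), Measure.rnDeriv_lt_top (μ.map (φ (u n))) μ,
      htrans (-(u n)) (fun x => h x < ⊤) (Measure.rnDeriv_lt_top ν₀ μ),
      htrans (-(u n)) (fun x => f x = f' x) hff'] with s hks hwlt hhlt hfe hsP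
    rw [hP] at hsP
    have hsP' : 0 < h s := hsP
    have hT0 : h (φ (-(u n)) s) ≠ 0 := by
      intro h0
      rw [h0, mul_zero] at hks
      exact hsP'.ne' hks.symm
    have hcancel : h (φ (-(u n)) s) * g (φ (-(u n)) s)
        = ENNReal.ofReal (f' (φ (-(u n)) s)) := by
      rw [hg]
      exact ENNReal.mul_div_cancel hT0 hhlt.ne
    rw [hfe, ← hks, mul_assoc, hcancel]
  -- the bad set C where the series of g converges
  set C : Set S := {s | ∑' n : ℕ, g (φ (-(u n)) s) ≠ ⊤} with hC
  have hFm : Measurable fun s => ∑' n : ℕ, g (φ (-(u n)) s) :=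
    Measurable.ennreal_tsum fun n => hgm.comp (hφm (-(u n)))
  have hCm : MeasurableSet C := (hFm (measurableSet_singleton ⊤)).compl
  -- ν₀ C = 0
  have hν₀C : ν₀ C = 0 := by
    by_contra hne
    have hCpos : 0 < ν₀ C := pos_iff_ne_zero.2 hne
    have hgpos : ∀ᵐ x ∂ν₀, g x ≠ 0 := by
      refine hν₀ac.ae_le ?_
      filter_upwards [hfpos, hff', Measure.rnDeriv_lt_top ν₀ μ] with x h1 h2 h3
      rw [hg]
      exact (ENNReal.div_pos (ENNReal.ofReal_pos.2 (h2 ▸ h1)).ne' h3.ne).ne'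
    -- choose a level δ = (k+1)⁻¹ with ν₀ {g ≤ δ} < ν₀ C
    set D : ℕ → Set S := fun k => {x | g x ≤ (((k : ℕ) + 1 : ℕ) : ℝ≥0∞)⁻¹} with hD
    have hDm : ∀ k, MeasurableSet (D k) := fun k => hgm measurableSet_Iic
    have hDanti : Antitone D := by
      intro a b hab x hx
      simp only [hD, Set.mem_setOf_eq] at hx ⊢
      exact le_trans hx (ENNReal.inv_le_inv.2 (by exact_mod_cast Nat.succ_le_succ hab))
    have hDint : ⋂ k, D k ⊆ {x | g x = 0} := by
      intro x hx
      by_contra hx0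
      obtain ⟨m, hm⟩ := ENNReal.exists_inv_nat_lt hx0
      have h1 : g x ≤ (((m : ℕ) + 1 : ℕ) : ℝ≥0∞)⁻¹ := Set.mem_iInter.1 hx m
      have h2 : (((m : ℕ) + 1 : ℕ) : ℝ≥0∞)⁻¹ ≤ ((m : ℕ) : ℝ≥0∞)⁻¹ :=
        ENNReal.inv_le_inv.2 (by exact_mod_cast Nat.le_succ m)
      exact absurd (lt_of_le_of_lt (h1.trans h2) hm) (lt_irrefl _)
    have hzero0 : ν₀ {x | g x = 0} = 0 := by
      have := ae_iff.1 hgpos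
      simpa using this
    have hzero : ν₀ (⋂ k, D k) = 0 := measure_mono_null hDint hzero0
    have htend : Tendsto (ν₀ ∘ D) atTop (𝓝 0) := by
      have := tendsto_measure_iInter_atTop (μ := ν₀)
        (fun k => (hDm k).nullMeasurableSet) hDanti ⟨0, measure_ne_top _ _⟩
      rwa [hzero] at this
    obtain ⟨k, hk⟩ := (htend.eventually_lt_const hCpos).exists
    set A : ℕ → Set S := fun n => φ (-(u n)) ⁻¹' (D k) with hA
    have hAmeas : ∀ n, ν₀ (A n) = ν₀ (D k) := by
      intro n
      calc ν₀ (φ (-(u n)) ⁻¹' (D k))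
          = (ν₀.map (φ (-(u n)))) (D k) := (Measure.map_apply (hφm _) (hDm k)).symm
        _ = ν₀ (D k) := by rw [hν₀inv]
    set E : ℕ → Set S := fun N => ⋂ n, ⋂ (_ : N ≤ n), A n with hE
    have hEmono : Monotone E := by
      intro a b hab x hx
      exact Set.mem_iInter₂.2 fun n hn => Set.mem_iInter₂.1 hx n (hab.trans hn)
    have hCsub : C ⊆ ⋃ N, E N := by
      intro s hs
      have hs' : ∑' n : ℕ, g (φ (-(u n)) s) ≠ ⊤ := hs
      have htend2 : Tendsto (fun n => g (φ (-(u n)) s)) atTop (𝓝 0) :=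
        ENNReal.tendsto_atTop_zero_of_tsum_ne_top hs'
      have hev : ∀ᶠ n in atTop, g (φ (-(u n)) s) ≤ (((k : ℕ) + 1 : ℕ) : ℝ≥0∞)⁻¹ :=
        htend2.eventually_le_const (ENNReal.inv_pos.2 (ENNReal.natCast_ne_top _))
      obtain ⟨N, hN⟩ := eventually_atTop.1 hev
      exact Set.mem_iUnion.2 ⟨N, Set.mem_iInter₂.2 fun n hn => hN n hn⟩
    have hle : ν₀ C ≤ ν₀ (D k) := by
      calc ν₀ C ≤ ν₀ (⋃ N, E N) := measure_mono hCsub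
        _ ≤ ν₀ (D k) := by
            refine le_of_tendsto' (tendsto_measure_iUnion_atTop hEmono) ?_
            intro N
            calc ν₀ (E N) ≤ ν₀ (A N) := measure_mono (Set.iInter₂_subset N le_rfl)
              _ = ν₀ (D k) := hAmeas N
    exact absurd (lt_of_le_of_lt hle hk) (lt_irrefl _)
  -- transfer nullity to μ on P
  have hPmeas : MeasurableSet P := by
    rw [hP]; exact measurableSet_lt measurable_const hhm
  have hμPC : μ (P ∩ C) = 0 := by
    have h1 : ∫⁻ x in P ∩ C, h x ∂μ = 0 := by
      rw [hh, Measure.setLIntegral_rnDeriv hν₀ac]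
      exact measure_mono_null Set.inter_subset_right hν₀C
    have h3 : ∀ᵐ x ∂μ, x ∈ P ∩ C → h x = 0 :=
      (setLIntegral_eq_zero_iff (hPmeas.inter hCm) hhm).1 h1
    rw [measure_eq_zero_iff_ae_notMem]
    filter_upwards [h3] with x hx hmem
    have hxP : 0 < h x := by
      have := hmem.1
      rw [hP] at this
      exact this
    exact hxP.ne' (hx hmem)
  -- conclusion
  have hPCae : ∀ᵐ s ∂μ, s ∉ P ∩ C := measure_eq_zero_iff_ae_notMem.1 hμPC
  filter_upwards [ae_all_iff.2 hn, hPCae] with s hsn hsPC hsP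
  have hs0 : 0 < h s := by
    have := hsP
    rw [hP] at this
    exact this
  have htop : ∑' n : ℕ, g (φ (-(u n)) s) = ⊤ := by
    by_contra hne
    exact hsPC ⟨hsP, hne⟩
  calc ∑' n : ℕ, ((μ.map (φ (u n))).rnDeriv μ s) * ENNReal.ofReal (f (φ (-(u n)) s))
      = ∑' n : ℕ, h s * g (φ (-(u n)) s) := tsum_congr fun n => hsn n hsP
    _ = h s * ∑' n : ℕ, g (φ (-(u n)) s) := ENNReal.tsum_mul_left
    _ = ⊤ := by rw [htop, ENNReal.mul_top hs0.ne']
end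

section
/- Let (S, 𝓑, μ) be a standard Borel space with a σ-finite measure μ, let G be a locally compact second-countable topological abelian group, let 𝓖 = {φ_t}_{t∈G} be a nonsingular G-action on (S,μ), and let P_𝓖 be a maximal element of {S_ν : ν ∈ Λ(𝓖)}. Then P_𝓖 contains no weakly wandering set of positive measure: every measurable W ⊆ P_𝓖 that is weakly wandering with respect to 𝓖 satisfies μ(W) = 0. -/
open MeasureTheory

/-- The positive part `P_𝓖` (the maximal support of finite invariant measures
absolutely continuous w.r.t. `μ`) contains no weakly wandering measurable set of positive
measure. -/
theorem stmt4
    {S : Type*} [MeasurableSpace S] [StandardBorelSpace S]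
    (μ : Measure S) [SigmaFinite μ]
    {G : Type*} [AddCommGroup G] [TopologicalSpace G] [IsTopologicalAddGroup G]
    [LocallyCompactSpace G] [SecondCountableTopology G]
    [MeasurableSpace G] [BorelSpace G]
    (φ : G → S → S)
    (hjoint : Measurable fun p : G × S => φ p.1 p.2)
    (hid : ∀ s, φ 0 s = s)
    (hcomp : ∀ u v s, φ (u + v) s = φ u (φ v s))
    (hns : ∀ t, μ.map (φ t) ≪ μ ∧ μ ≪ μ.map (φ t))
    (ν₀ : Measure S) [IsFiniteMeasure ν₀] (hν₀ac : ν₀ ≪ μ)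
    (hν₀inv : ∀ t, ν₀.map (φ t) = ν₀)
    (P : Set S) (hP : P = {s | 0 < ν₀.rnDeriv μ s})
    (hmax : ∀ ν : Measure S, IsFiniteMeasure ν → ν ≪ μ → (∀ t, ν.map (φ t) = ν) →
      μ ({s | 0 < ν.rnDeriv μ s} \ P) = 0) :
    ∀ W : Set S, MeasurableSet W → W ⊆ P →
      (∃ t : ℕ → G, ∀ n m, n ≠ m → μ (φ (t n) ⁻¹' W ∩ φ (t m) ⁻¹' W) = 0) →
      μ W = 0 := by
  rintro W hW hWP ⟨t, ht⟩
  have hφ : ∀ u, Measurable (φ u) := fun u =>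
    hjoint.comp (measurable_const.prodMk measurable_id)
  have hpre : ∀ u, ν₀ (φ u ⁻¹' W) = ν₀ W := fun u => by
    calc ν₀ (φ u ⁻¹' W) = (ν₀.map (φ u)) W := (Measure.map_apply (hφ u) hW).symm
      _ = ν₀ W := by rw [hν₀inv u]
  have hdisj : Pairwise (Function.onFun (AEDisjoint ν₀) fun n => φ (t n) ⁻¹' W) := fun n m hnm =>
    hν₀ac (ht n m hnm)
  have hnull : ∀ n, NullMeasurableSet (φ (t n) ⁻¹' W) ν₀ :=
    fun n => ((hφ (t n)) hW).nullMeasurableSet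
  have hsum : ∑' _ : ℕ, ν₀ W = ν₀ (⋃ n, φ (t n) ⁻¹' W) := by
    rw [measure_iUnion₀ hdisj hnull]
    exact tsum_congr fun n => (hpre (t n)).symm
  have hW0 : ν₀ W = 0 := by
    by_contra h
    have htop : ∑' _ : ℕ, ν₀ W = ⊤ := ENNReal.tsum_const_eq_top_of_ne_zero h
    rw [hsum] at htop
    exact (measure_lt_top ν₀ _).ne htop
  have hle : ∫⁻ s in W, ν₀.rnDeriv μ s ∂μ = 0 := by
    rw [Measure.setLIntegral_rnDeriv hν₀ac]; exact hW0
  have hae : ν₀.rnDeriv μ =ᵐ[μ.restrict W] 0 :=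
    (lintegral_eq_zero_iff (Measure.measurable_rnDeriv ν₀ μ)).mp hle
  have hzero : μ.restrict W {s | ¬ ν₀.rnDeriv μ s = 0} = 0 := ae_iff.mp hae
  have hsub : W ⊆ {s | ¬ ν₀.rnDeriv μ s = 0} := fun s hs => by
    have := hWP hs
    rw [hP] at this
    exact fun h0 => by simp [h0] at this
  refine le_antisymm ?_ zero_le
  calc μ W = μ.restrict W W := (Measure.restrict_apply_self μ W).symm
    _ ≤ μ.restrict W {s | ¬ ν₀.rnDeriv μ s = 0} := measure_mono hsub
    _ = 0 := hzero
end

section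
/- Let (S, 𝓑, μ) be a standard Borel space with a σ-finite measure μ, let G be a locally compact second-countable topological abelian group, let 𝓖 = {φ_t}_{t∈G} be a nonsingular G-action on (S,μ), let P_𝓖 be a maximal element of {S_ν : ν ∈ Λ(𝓖)}, and set N_𝓖 := S \ P_𝓖. Then N_𝓖 is, modulo μ-null sets, a countable union of weakly wandering sets: there exist measurable sets W_k ⊆ S, k ∈ ℕ, each weakly wandering with respect to 𝓖, such that μ(N_𝓖 Δ ⋃_{k∈ℕ} W_k) = 0. -/
open MeasureTheory

namespace Stmt5Aux

section InvariantMean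

variable {G : Type*} [AddCommGroup G]

/-- Bounded real functions on `G`. -/
def Bdd (f : G → ℝ) : Prop := ∃ C : ℝ, ∀ t, |f t| ≤ C

lemma Bdd.negcomp {f : G → ℝ} (h : Bdd f) : Bdd (fun t => f (-t)) := by
  obtain ⟨C, hC⟩ := h; exact ⟨C, fun t => hC _⟩

lemma Bdd.add {f g : G → ℝ} (hf : Bdd f) (hg : Bdd g) : Bdd (fun t => f t + g t) := by
  obtain ⟨C, hC⟩ := hf; obtain ⟨D, hD⟩ := hg
  exact ⟨C + D, fun t => (abs_add_le _ _).trans (add_le_add (hC t) (hD t))⟩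

lemma Bdd.sub {f g : G → ℝ} (hf : Bdd f) (hg : Bdd g) : Bdd (fun t => f t - g t) := by
  obtain ⟨C, hC⟩ := hf; obtain ⟨D, hD⟩ := hg
  exact ⟨C + D, fun t => (abs_sub _ _).trans (add_le_add (hC t) (hD t))⟩

lemma Bdd.const (c : ℝ) : Bdd (fun _ : G => c) := ⟨|c|, fun _ => le_rfl⟩

lemma Bdd.mul_const {f : G → ℝ} (hf : Bdd f) (c : ℝ) : Bdd (fun t => c * f t) := by
  obtain ⟨C, hC⟩ := hf
  exact ⟨|c| * C, fun t => by
    rw [abs_mul]; exact mul_le_mul_of_nonneg_left (hC t) (abs_nonneg c)⟩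

lemma Bdd.finsum {ι : Type*} (s : Finset ι) (F : ι → G → ℝ) (h : ∀ i ∈ s, Bdd (F i)) :
    Bdd (fun t => ∑ i ∈ s, F i t) := by
  classical
  induction s using Finset.induction_on with
  | empty => simpa using Bdd.const 0
  | insert a s hnotmem ih =>
    simp only [Finset.sum_insert hnotmem]
    exact (h a (Finset.mem_insert_self a s)).add
      (ih (fun i hi => h i (Finset.mem_insert_of_mem hi)))

variable (G) in
noncomputable instance : Nonempty G := ⟨0⟩

/-- `QQ f n T = sup_s (1/n) ∑ᵢ f (s + T i)`. -/
noncomputable def QQ (f : G → ℝ) (n : ℕ) (T : Fin n → G) : ℝ :=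
  sSup (Set.range fun s : G => (∑ i, f (s + T i)) / n)

lemma avg_le {f : G → ℝ} {C : ℝ} (hC : ∀ t, |f t| ≤ C) {n : ℕ} (T : Fin n → G) (s : G) :
    (∑ i, f (s + T i)) / n ≤ C := by
  rcases Nat.eq_zero_or_pos n with h | h
  · subst h
    simp
    exact le_trans (abs_nonneg _) (hC 0)
  · rw [div_le_iff₀ (by exact_mod_cast h)]
    calc (∑ i, f (s + T i)) ≤ ∑ _i : Fin n, C :=
          Finset.sum_le_sum (fun i _ => (abs_le.mp (hC _)).2)
      _ = n * C := by simp [Finset.sum_const, nsmul_eq_mul]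
      _ = C * n := mul_comm _ _

lemma neg_le_avg {f : G → ℝ} {C : ℝ} (hC : ∀ t, |f t| ≤ C) {n : ℕ} (hn : 0 < n)
    (T : Fin n → G) (s : G) : -C ≤ (∑ i, f (s + T i)) / n := by
  rw [le_div_iff₀ (by exact_mod_cast hn)]
  calc -C * n = ∑ _i : Fin n, (-C) := by simp [Finset.sum_const, nsmul_eq_mul]; ring
    _ ≤ ∑ i, f (s + T i) := Finset.sum_le_sum (fun i _ => (abs_le.mp (hC _)).1)

lemma bddAbove_avg {f : G → ℝ} {C : ℝ} (hC : ∀ t, |f t| ≤ C) {n : ℕ} (T : Fin n → G) :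
    BddAbove (Set.range fun s : G => (∑ i, f (s + T i)) / n) := by
  refine ⟨C, ?_⟩
  rintro y ⟨s, rfl⟩
  exact avg_le hC T s

lemma QQ_le {f : G → ℝ} {C : ℝ} (hC : ∀ t, |f t| ≤ C) {n : ℕ} (T : Fin n → G) :
    QQ f n T ≤ C := by
  refine csSup_le ⟨_, Set.mem_range_self 0⟩ ?_
  rintro y ⟨s, rfl⟩
  exact avg_le hC T s

lemma neg_le_QQ {f : G → ℝ} {C : ℝ} (hC : ∀ t, |f t| ≤ C) {n : ℕ} (hn : 0 < n)
    (T : Fin n → G) : -C ≤ QQ f n T :=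
  le_csSup_of_le (bddAbove_avg hC T) (Set.mem_range_self 0) (neg_le_avg hC hn T 0)

lemma avg_le_QQ {f : G → ℝ} {C : ℝ} (hC : ∀ t, |f t| ≤ C) {n : ℕ} (T : Fin n → G) (s : G) :
    (∑ i, f (s + T i)) / n ≤ QQ f n T :=
  le_csSup (bddAbove_avg hC T) (Set.mem_range_self s)

lemma sum_le_QQ_mul {f : G → ℝ} {C : ℝ} (hC : ∀ t, |f t| ≤ C) {n : ℕ} (hn : 0 < n)
    (T : Fin n → G) (s : G) : (∑ i, f (s + T i)) ≤ QQ f n T * n := by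
  rw [← div_le_iff₀ (by exact_mod_cast hn)]
  exact avg_le_QQ hC T s

/-- The set over which the infimum defining the sublinear functional is taken. -/
def pset (f : G → ℝ) : Set ℝ := {y | ∃ n : ℕ, ∃ T : Fin n → G, 0 < n ∧ y = QQ f n T}

noncomputable def pp (f : G → ℝ) : ℝ := sInf (pset f)

lemma pset_nonempty (f : G → ℝ) : (pset f).Nonempty :=
  ⟨QQ f 1 (fun _ => 0), 1, fun _ => 0, one_pos, rfl⟩

lemma pset_bddBelow {f : G → ℝ} {C : ℝ} (hC : ∀ t, |f t| ≤ C) : BddBelow (pset f) := by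
  refine ⟨-C, ?_⟩
  rintro y ⟨n, T, hn, rfl⟩
  exact neg_le_QQ hC hn T

lemma pp_le_QQ {f : G → ℝ} {C : ℝ} (hC : ∀ t, |f t| ≤ C) {n : ℕ} (hn : 0 < n)
    (T : Fin n → G) : pp f ≤ QQ f n T :=
  csInf_le (pset_bddBelow hC) ⟨n, T, hn, rfl⟩

end InvariantMean

end Stmt5Aux
section InvariantMean2

namespace Stmt5Aux

variable {G : Type*} [AddCommGroup G]

set_option linter.unusedSectionVars false

lemma QQ_add_le {f g : G → ℝ} {Cf Cg : ℝ} (hf : ∀ t, |f t| ≤ Cf) (hg : ∀ t, |g t| ≤ Cg)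
    {n₁ n₂ : ℕ} (h₁ : 0 < n₁) (h₂ : 0 < n₂) (T₁ : Fin n₁ → G) (T₂ : Fin n₂ → G) :
    QQ (fun t => f t + g t) (n₁ * n₂)
      (fun i => T₁ (finProdFinEquiv.symm i).1 + T₂ (finProdFinEquiv.symm i).2)
      ≤ QQ f n₁ T₁ + QQ g n₂ T₂ := by
  have hN : (0:ℝ) < (n₁ * n₂ : ℕ) := by positivity
  refine csSup_le ⟨_, Set.mem_range_self 0⟩ ?_
  rintro y ⟨s, rfl⟩
  rw [div_le_iff₀ hN]
  -- rewrite the sum over Fin (n₁*n₂) as a sum over the product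
  have hsum : ∀ (F : G → ℝ),
      (∑ i : Fin (n₁ * n₂), F (s + (T₁ (finProdFinEquiv.symm i).1 + T₂ (finProdFinEquiv.symm i).2)))
        = ∑ p : Fin n₁ × Fin n₂, F (s + (T₁ p.1 + T₂ p.2)) := by
    intro F
    rw [← Equiv.sum_comp finProdFinEquiv (fun i =>
      F (s + (T₁ (finProdFinEquiv.symm i).1 + T₂ (finProdFinEquiv.symm i).2)))]
    refine Finset.sum_congr rfl (fun p _ => ?_)
    rw [Equiv.symm_apply_apply]
  have split : (∑ i : Fin (n₁ * n₂),
      (f (s + (T₁ (finProdFinEquiv.symm i).1 + T₂ (finProdFinEquiv.symm i).2))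
        + g (s + (T₁ (finProdFinEquiv.symm i).1 + T₂ (finProdFinEquiv.symm i).2))))
      = (∑ p : Fin n₁ × Fin n₂, f (s + (T₁ p.1 + T₂ p.2)))
        + (∑ p : Fin n₁ × Fin n₂, g (s + (T₁ p.1 + T₂ p.2))) := by
    rw [Finset.sum_add_distrib, hsum f, hsum g]
  have hfpart : (∑ p : Fin n₁ × Fin n₂, f (s + (T₁ p.1 + T₂ p.2))) ≤ QQ f n₁ T₁ * (n₁ * n₂) := by
    have : (∑ p : Fin n₁ × Fin n₂, f (s + (T₁ p.1 + T₂ p.2)))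
        = ∑ b : Fin n₂, ∑ a : Fin n₁, f ((s + T₂ b) + T₁ a) := by
      rw [Fintype.sum_prod_type]
      rw [Finset.sum_comm]
      refine Finset.sum_congr rfl (fun b _ => Finset.sum_congr rfl (fun a _ => ?_))
      exact congrArg f (by abel)
    rw [this]
    calc (∑ b : Fin n₂, ∑ a : Fin n₁, f ((s + T₂ b) + T₁ a))
        ≤ ∑ _b : Fin n₂, QQ f n₁ T₁ * n₁ :=
          Finset.sum_le_sum (fun b _ => sum_le_QQ_mul hf h₁ T₁ _)
      _ = QQ f n₁ T₁ * (n₁ * n₂) := by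
          simp [Finset.sum_const, nsmul_eq_mul]; ring
  have hgpart : (∑ p : Fin n₁ × Fin n₂, g (s + (T₁ p.1 + T₂ p.2))) ≤ QQ g n₂ T₂ * (n₁ * n₂) := by
    have : (∑ p : Fin n₁ × Fin n₂, g (s + (T₁ p.1 + T₂ p.2)))
        = ∑ a : Fin n₁, ∑ b : Fin n₂, g ((s + T₁ a) + T₂ b) := by
      rw [Fintype.sum_prod_type]
      refine Finset.sum_congr rfl (fun a _ => Finset.sum_congr rfl (fun b _ => ?_))
      exact congrArg g (by abel)
    rw [this]
    calc (∑ a : Fin n₁, ∑ b : Fin n₂, g ((s + T₁ a) + T₂ b))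
        ≤ ∑ _a : Fin n₁, QQ g n₂ T₂ * n₂ :=
          Finset.sum_le_sum (fun a _ => sum_le_QQ_mul hg h₂ T₂ _)
      _ = QQ g n₂ T₂ * (n₁ * n₂) := by
          simp [Finset.sum_const, nsmul_eq_mul]; ring
  calc (∑ i : Fin (n₁ * n₂),
      (fun t => f t + g t) (s + (T₁ (finProdFinEquiv.symm i).1 + T₂ (finProdFinEquiv.symm i).2)))
      = _ := split
    _ ≤ QQ f n₁ T₁ * (n₁ * n₂) + QQ g n₂ T₂ * (n₁ * n₂) := add_le_add hfpart hgpart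
    _ = (QQ f n₁ T₁ + QQ g n₂ T₂) * ((n₁ * n₂ : ℕ) : ℝ) := by push_cast; ring

lemma pp_add_le {f g : G → ℝ} (hf : Bdd f) (hg : Bdd g) :
    pp (fun t => f t + g t) ≤ pp f + pp g := by
  obtain ⟨Cf, hCf⟩ := hf; obtain ⟨Cg, hCg⟩ := hg
  have key : ∀ y₁ ∈ pset f, ∀ y₂ ∈ pset g, pp (fun t => f t + g t) ≤ y₁ + y₂ := by
    rintro _ ⟨n₁, T₁, h₁, rfl⟩ _ ⟨n₂, T₂, h₂, rfl⟩
    exact le_trans (pp_le_QQ (fun t => (abs_add_le _ _).trans (add_le_add (hCf t) (hCg t)))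
      (Nat.mul_pos h₁ h₂) _) (QQ_add_le hCf hCg h₁ h₂ T₁ T₂)
  have step1 : ∀ y₂ ∈ pset g, pp (fun t => f t + g t) - y₂ ≤ pp f := by
    intro y₂ hy₂
    refine le_csInf (pset_nonempty f) (fun y₁ hy₁ => ?_)
    rw [sub_le_iff_le_add]
    exact (key y₁ hy₁ y₂ hy₂).trans (by ring_nf; rfl)
  have step2 : pp (fun t => f t + g t) - pp f ≤ pp g := by
    refine le_csInf (pset_nonempty g) (fun y₂ hy₂ => ?_)
    rw [sub_le_iff_le_add]
    have := step1 y₂ hy₂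
    linarith
  linarith

lemma pp_smul_le {f : G → ℝ} (hf : Bdd f) {c : ℝ} (hc : 0 < c) :
    pp (fun t => c * f t) ≤ c * pp f := by
  obtain ⟨Cf, hCf⟩ := hf
  have hCcf : ∀ t, |c * f t| ≤ c * Cf := fun t => by
    rw [abs_mul, abs_of_pos hc]
    exact mul_le_mul_of_nonneg_left (hCf t) hc.le
  have key : ∀ y ∈ pset f, pp (fun t => c * f t) ≤ c * y := by
    rintro _ ⟨n, T, hn, rfl⟩
    refine le_trans (pp_le_QQ hCcf hn T) ?_
    refine csSup_le ⟨_, Set.mem_range_self 0⟩ ?_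
    rintro y ⟨s, rfl⟩
    show (∑ i : Fin n, c * f (s + T i)) / (n:ℝ) ≤ c * QQ f n T
    have : (∑ i, c * f (s + T i)) / (n:ℝ) = c * ((∑ i, f (s + T i)) / n) := by
      rw [← Finset.mul_sum]; ring
    rw [this]
    exact mul_le_mul_of_nonneg_left (avg_le_QQ hCf T s) hc.le
  have : ∀ y ∈ pset f, pp (fun t => c * f t) / c ≤ y := by
    intro y hy
    rw [div_le_iff₀ hc, mul_comm]
    exact key y hy
  have h2 : pp (fun t => c * f t) / c ≤ pp f := le_csInf (pset_nonempty f) this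
  calc pp (fun t => c * f t) = c * (pp (fun t => c * f t) / c) := by field_simp
    _ ≤ c * pp f := mul_le_mul_of_nonneg_left h2 hc.le

lemma pp_smul {f : G → ℝ} (hf : Bdd f) {c : ℝ} (hc : 0 < c) :
    pp (fun t => c * f t) = c * pp f := by
  refine le_antisymm (pp_smul_le hf hc) ?_
  have hcf : Bdd (fun t => c * f t) := hf.mul_const c
  have := pp_smul_le hcf (inv_pos.mpr hc)
  have heq : (fun t => c⁻¹ * (c * f t)) = f := by
    funext t; field_simp
  rw [heq] at this
  calc c * pp f ≤ c * (c⁻¹ * pp (fun t => c * f t)) :=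
        mul_le_mul_of_nonneg_left this hc.le
    _ = pp (fun t => c * f t) := by field_simp

lemma QQ_nonpos {f : G → ℝ} (h : ∀ t, f t ≤ 0) {n : ℕ} (T : Fin n → G) :
    QQ f n T ≤ 0 := by
  refine csSup_le ⟨_, Set.mem_range_self 0⟩ ?_
  rintro y ⟨s, rfl⟩
  rcases Nat.eq_zero_or_pos n with h0 | h0
  · subst h0; simp
  · apply div_nonpos_of_nonpos_of_nonneg
    · exact Finset.sum_nonpos (fun i _ => h _)
    · positivity

lemma pp_nonpos {f : G → ℝ} (hf : Bdd f) (h : ∀ t, f t ≤ 0) : pp f ≤ 0 := by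
  obtain ⟨C, hC⟩ := hf
  exact (pp_le_QQ hC one_pos (fun _ => (0:G))).trans (QQ_nonpos h _)

lemma pp_zero_eq : pp (fun _ : G => (0:ℝ)) = 0 := by
  have hmem : (0:ℝ) ∈ pset (fun _ : G => (0:ℝ)) := by
    refine ⟨1, fun _ => 0, one_pos, ?_⟩
    have : QQ (fun _ : G => (0:ℝ)) 1 (fun _ => 0) ≤ 0 := QQ_nonpos (fun _ => le_rfl) _
    have h2 : (-0:ℝ) ≤ QQ (fun _ : G => (0:ℝ)) 1 (fun _ => 0) :=
      neg_le_QQ (fun t => by simp) one_pos _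
    simp at h2
    linarith [le_antisymm this h2]
  refine le_antisymm ?_ ?_
  · exact csInf_le (pset_bddBelow (C := 0) (fun t => by simp)) hmem
  · refine le_csInf (pset_nonempty _) ?_
    rintro y ⟨n, T, hn, rfl⟩
    simpa using neg_le_QQ (C := 0) (fun t => by simp) hn T

/-- The key translation estimate: `pp (τ_a f - f) ≤ 0`. -/
lemma pp_transl_sub {f : G → ℝ} (hf : Bdd f) (a : G) :
    pp (fun t => f (t + a) - f t) ≤ 0 := by
  obtain ⟨C, hC⟩ := hf
  have hC0 : 0 ≤ C := le_trans (abs_nonneg _) (hC 0)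
  have hd : ∀ t, |f (t + a) - f t| ≤ C + C := fun t =>
    (abs_sub _ _).trans (add_le_add (hC _) (hC _))
  have key : ∀ n : ℕ, 0 < n → pp (fun t => f (t + a) - f t) ≤ (2*C) / n := by
    intro n hn
    refine le_trans (pp_le_QQ hd hn (fun i : Fin n => (i:ℕ) • a)) ?_
    refine csSup_le ⟨_, Set.mem_range_self 0⟩ ?_
    rintro y ⟨s, rfl⟩
    show (∑ i : Fin n, (f (s + (i:ℕ) • a + a) - f (s + (i:ℕ) • a))) / (n:ℝ) ≤ 2*C/n
    have htele : (∑ i : Fin n, (f ((s + (i:ℕ) • a) + a) - f (s + (i:ℕ) • a)))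
        = f (s + n • a) - f (s + 0 • a) := by
      rw [Fin.sum_univ_eq_sum_range (fun i => f ((s + i • a) + a) - f (s + i • a))]
      have : ∀ i : ℕ, f ((s + i • a) + a) - f (s + i • a)
          = (fun j => f (s + j • a)) (i+1) - (fun j => f (s + j • a)) i := by
        intro i
        simp only
        congr 2
        rw [succ_nsmul, add_assoc]
      rw [Finset.sum_congr rfl (fun i _ => this i)]
      exact Finset.sum_range_sub (fun j => f (s + j • a)) n
    have harg : ∀ i : Fin n, s + (i:ℕ) • a + a = (s + (i:ℕ) • a) + a := fun i => rfl
    have : (∑ i : Fin n, (f (s + (i:ℕ) • a + a) - f (s + (i:ℕ) • a)))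
        = f (s + n • a) - f (s + 0 • a) := htele
    rw [this]
    rw [div_le_div_iff_of_pos_right (by exact_mod_cast hn)]
    have h1 : f (s + n • a) ≤ C := (abs_le.mp (hC _)).2
    have h2 : -C ≤ f (s + 0 • a) := (abs_le.mp (hC _)).1
    linarith
  by_contra hcon
  push_neg at hcon
  obtain ⟨n, hngt⟩ := exists_nat_gt (2*C / pp (fun t => f (t + a) - f t))
  have hn0 : 0 < n := by
    by_contra hn
    push_neg at hn
    interval_cases n
    have : 0 ≤ 2*C / pp (fun t => f (t + a) - f t) := by positivity
    simp at hngt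
    linarith
  have := key n hn0
  have h2 : 2*C / (n:ℝ) < pp (fun t => f (t + a) - f t) := by
    rw [div_lt_iff₀ (by exact_mod_cast hn0)]
    rw [div_lt_iff₀ hcon] at hngt
    linarith [hngt]
  linarith

end Stmt5Aux

end InvariantMean2
namespace Stmt5Aux

section InvariantMean3

variable {G : Type*} [AddCommGroup G]

set_option linter.unusedSectionVars false

variable (G) in
/-- The submodule of bounded functions. -/
def bddE : Submodule ℝ (G → ℝ) where
  carrier := {f | Bdd f}
  add_mem' := fun hf hg => hf.add hg
  zero_mem' := ⟨0, by simp⟩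
  smul_mem' := fun c f hf => by
    exact hf.mul_const c

lemma exists_L : ∃ L : (bddE G) →ₗ[ℝ] ℝ, ∀ x : bddE G, L x ≤ pp (x : G → ℝ) := by
  obtain ⟨g, -, hg⟩ := exists_extension_of_le_sublinear
    (LinearMap.toPMap (0 : (bddE G) →ₗ[ℝ] ℝ) ⊥)
    (fun x : bddE G => pp (x : G → ℝ))
    (by
      intro c hc x
      show pp ((c • x : bddE G) : G → ℝ) = c * pp (x : G → ℝ)
      have : ((c • x : bddE G) : G → ℝ) = fun t => c * (x : G → ℝ) t := rfl
      rw [this, pp_smul x.2 hc])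
    (by
      intro x y
      show pp ((x + y : bddE G) : G → ℝ) ≤ pp (x : G → ℝ) + pp (y : G → ℝ)
      have : ((x + y : bddE G) : G → ℝ) = fun t => (x : G → ℝ) t + (y : G → ℝ) t := rfl
      rw [this]
      exact pp_add_le x.2 y.2)
    (by
      rintro ⟨x, hx⟩
      have hx0 : x = 0 := by simpa using hx
      subst hx0
      simp only [LinearMap.toPMap_apply, LinearMap.zero_apply]
      have : ((0 : bddE G) : G → ℝ) = fun _ : G => (0:ℝ) := rfl
      rw [this, pp_zero_eq]
      exact le_rfl)
  exact ⟨g, hg⟩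

variable (G) in
noncomputable def L0 : (bddE G) →ₗ[ℝ] ℝ := (exists_L (G := G)).choose

lemma L0_le_pp (x : bddE G) : L0 G x ≤ pp (x : G → ℝ) := (exists_L (G := G)).choose_spec x

lemma L0_congr {x y : bddE G} (h : (x : G → ℝ) = y) : L0 G x = L0 G y := by
  congr 1; exact Subtype.ext h

lemma L0_nonneg (x : bddE G) (h : ∀ t, 0 ≤ (x : G → ℝ) t) : 0 ≤ L0 G x := by
  have h1 : L0 G (-x) ≤ pp ((-x : bddE G) : G → ℝ) := L0_le_pp _
  have h2 : pp ((-x : bddE G) : G → ℝ) ≤ 0 := by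
    refine pp_nonpos (-x).2 ?_
    intro t
    have : ((-x : bddE G) : G → ℝ) t = -((x : G → ℝ) t) := rfl
    rw [this]
    linarith [h t]
  rw [map_neg] at h1
  linarith

lemma L0_transl (x y : bddE G) (a : G)
    (h : ∀ t, (y : G → ℝ) t = (x : G → ℝ) (t + a)) : L0 G y = L0 G x := by
  have hd1 : L0 G (y - x) ≤ pp (fun t => (x : G → ℝ) (t + a) - (x : G → ℝ) t) := by
    have : ((y - x : bddE G) : G → ℝ) = fun t => (x : G → ℝ) (t + a) - (x : G → ℝ) t := by
      funext t
      have : ((y - x : bddE G) : G → ℝ) t = (y : G → ℝ) t - (x : G → ℝ) t := rfl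
      rw [this, h t]
    rw [← this]
    exact L0_le_pp _
  have hd2 : L0 G (x - y) ≤ pp (fun t => (y : G → ℝ) (t + (-a)) - (y : G → ℝ) t) := by
    have : ((x - y : bddE G) : G → ℝ) = fun t => (y : G → ℝ) (t + (-a)) - (y : G → ℝ) t := by
      funext t
      have h1 : ((x - y : bddE G) : G → ℝ) t = (x : G → ℝ) t - (y : G → ℝ) t := rfl
      rw [h1, h (t + (-a)), neg_add_cancel_right, h t]
    rw [← this]
    exact L0_le_pp _
  have p1 : pp (fun t => (x : G → ℝ) (t + a) - (x : G → ℝ) t) ≤ 0 := pp_transl_sub x.2 a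
  have p2 : pp (fun t => (y : G → ℝ) (t + (-a)) - (y : G → ℝ) t) ≤ 0 := pp_transl_sub y.2 (-a)
  have e1 : L0 G (y - x) = L0 G y - L0 G x := map_sub _ _ _
  have e2 : L0 G (x - y) = L0 G x - L0 G y := map_sub _ _ _
  linarith [hd1.trans p1, hd2.trans p2, e1 ▸ hd1.trans p1, e2 ▸ hd2.trans p2]

open scoped Classical in
/-- The invariant mean on bounded functions (symmetrized under negation). -/
noncomputable def mean (f : G → ℝ) : ℝ :=
  if h : Bdd f then
    (L0 G ⟨f, h⟩ + L0 G ⟨fun t => f (-t), h.negcomp⟩) / 2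
  else 0

lemma mean_eq {f : G → ℝ} (h : Bdd f) :
    mean f = (L0 G ⟨f, h⟩ + L0 G ⟨fun t => f (-t), h.negcomp⟩) / 2 := by
  rw [mean]
  exact dif_pos h

lemma mean_add {f g : G → ℝ} (hf : Bdd f) (hg : Bdd g) :
    mean (fun t => f t + g t) = mean f + mean g := by
  rw [mean_eq (hf.add hg), mean_eq hf, mean_eq hg]
  have e1 : (⟨fun t => f t + g t, hf.add hg⟩ : bddE G) = ⟨f, hf⟩ + ⟨g, hg⟩ := rfl
  have e2 : (⟨fun t => (fun t => f t + g t) (-t), (hf.add hg).negcomp⟩ : bddE G)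
      = ⟨fun t => f (-t), hf.negcomp⟩ + ⟨fun t => g (-t), hg.negcomp⟩ := rfl
  rw [e1, e2, map_add, map_add]
  ring

lemma mean_smul {f : G → ℝ} (hf : Bdd f) (c : ℝ) :
    mean (fun t => c * f t) = c * mean f := by
  rw [mean_eq (hf.mul_const c), mean_eq hf]
  have e1 : (⟨fun t => c * f t, hf.mul_const c⟩ : bddE G) = c • ⟨f, hf⟩ := rfl
  have e2 : (⟨fun t => (fun t => c * f t) (-t), (hf.mul_const c).negcomp⟩ : bddE G)
      = c • ⟨fun t => f (-t), hf.negcomp⟩ := rfl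
  rw [e1, e2, LinearMap.map_smul, LinearMap.map_smul, smul_eq_mul, smul_eq_mul]
  ring

lemma mean_nonneg {f : G → ℝ} (hf : Bdd f) (h : ∀ t, 0 ≤ f t) : 0 ≤ mean f := by
  rw [mean_eq hf]
  have h1 := L0_nonneg (⟨f, hf⟩ : bddE G) h
  have h2 := L0_nonneg (⟨fun t => f (-t), hf.negcomp⟩ : bddE G) (fun t => h (-t))
  linarith

lemma mean_mono {f g : G → ℝ} (hf : Bdd f) (hg : Bdd g) (h : ∀ t, f t ≤ g t) :
    mean f ≤ mean g := by
  have hd : Bdd (fun t => g t - f t) := hg.sub hf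
  have h0 : 0 ≤ mean (fun t => g t - f t) := mean_nonneg hd (fun t => by linarith [h t])
  have : mean (fun t => f t + (g t - f t)) = mean f + mean (fun t => g t - f t) :=
    mean_add hf hd
  have he : (fun t => f t + (g t - f t)) = g := by funext t; ring
  rw [he] at this
  linarith

lemma mean_one : mean (fun _ : G => (1:ℝ)) = 1 := by
  have hb : Bdd (fun _ : G => (1:ℝ)) := Bdd.const 1
  rw [mean_eq hb]
  have key : ∀ (x : bddE G), (x : G → ℝ) = (fun _ => (1:ℝ)) → L0 G x = 1 := by
    intro x hx
    have h1 : L0 G x ≤ pp (x : G → ℝ) := L0_le_pp x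
    have h2 : pp (x : G → ℝ) ≤ 1 := by
      rw [hx]
      obtain ⟨C, hC⟩ : Bdd (fun _ : G => (1:ℝ)) := hb
      refine le_trans (pp_le_QQ hC one_pos (fun _ => (0:G))) ?_
      refine csSup_le ⟨_, Set.mem_range_self 0⟩ ?_
      rintro y ⟨s, rfl⟩
      simp
    have h3 : L0 G (-x) ≤ pp ((-x : bddE G) : G → ℝ) := L0_le_pp _
    have h4 : pp ((-x : bddE G) : G → ℝ) ≤ -1 := by
      have hneg : ((-x : bddE G) : G → ℝ) = fun _ : G => (-1:ℝ) := by
        funext t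
        have : ((-x : bddE G) : G → ℝ) t = -((x : G → ℝ) t) := rfl
        rw [this, hx]
      rw [hneg]
      refine le_trans (pp_le_QQ (C := 1) (fun t => by norm_num) one_pos (fun _ => (0:G))) ?_
      refine csSup_le ⟨_, Set.mem_range_self 0⟩ ?_
      rintro y ⟨s, rfl⟩
      simp
    rw [map_neg] at h3
    linarith
  have k1 : L0 G ⟨fun _ : G => (1:ℝ), hb⟩ = 1 := key _ rfl
  have k2 : L0 G ⟨fun t : G => (fun _ : G => (1:ℝ)) (-t), hb.negcomp⟩ = 1 := key _ rfl
  rw [k1] at *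
  linarith [k1, k2]

lemma mean_transl {f : G → ℝ} (hf : Bdd f) (a : G) :
    mean (fun t => f (t + a)) = mean f := by
  have hfa : Bdd (fun t => f (t + a)) := by
    obtain ⟨C, hC⟩ := hf; exact ⟨C, fun t => hC _⟩
  rw [mean_eq hfa, mean_eq hf]
  have h1 : L0 G ⟨fun t => f (t + a), hfa⟩ = L0 G ⟨f, hf⟩ := by
    exact L0_transl ⟨f, hf⟩ ⟨fun t => f (t + a), hfa⟩ a (fun t => rfl)
  have h2 : L0 G ⟨fun t => (fun t => f (t + a)) (-t), hfa.negcomp⟩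
      = L0 G ⟨fun t => f (-t), hf.negcomp⟩ := by
    refine L0_transl ⟨fun t => f (-t), hf.negcomp⟩ _ (-a) (fun t => ?_)
    show f (-t + a) = f (-(t + -a))
    congr 1
    abel
  rw [h1, h2]

lemma mean_negcomp {f : G → ℝ} (hf : Bdd f) :
    mean (fun t => f (-t)) = mean f := by
  rw [mean_eq hf.negcomp, mean_eq hf]
  have h2 : L0 G ⟨fun t => (fun t => f (-t)) (-t), hf.negcomp.negcomp⟩ = L0 G ⟨f, hf⟩ := by
    refine L0_congr ?_
    funext t
    show f (-(-t)) = f t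
    rw [neg_neg]
  rw [h2]
  ring

lemma mean_sum {ι : Type*} (s : Finset ι) (F : ι → G → ℝ) (h : ∀ i ∈ s, Bdd (F i)) :
    mean (fun t => ∑ i ∈ s, F i t) = ∑ i ∈ s, mean (F i) := by
  classical
  induction s using Finset.induction_on with
  | empty =>
    simp only [Finset.sum_empty]
    have : mean (fun _ : G => (0:ℝ)) = 0 := by
      have h0 := mean_smul (Bdd.const (G := G) (1:ℝ)) 0
      simpa using h0
    exact this
  | insert a s hnotmem ih =>
    have ha := h a (Finset.mem_insert_self a s)
    have hs : ∀ i ∈ s, Bdd (F i) := fun i hi => h i (Finset.mem_insert_of_mem hi)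
    have e : (fun t => ∑ i ∈ insert a s, F i t)
        = fun t => F a t + ∑ i ∈ s, F i t := by
      funext t; rw [Finset.sum_insert hnotmem]
    rw [e, mean_add ha (Bdd.finsum s F hs), ih hs, Finset.sum_insert hnotmem]

end InvariantMean3

end Stmt5Aux
namespace Stmt5Aux

open scoped ENNReal NNReal

section Content

variable {S : Type*} [MeasurableSpace S] {G : Type*} [AddCommGroup G]

set_option linter.unusedSectionVars false

lemma mean_zero : mean (fun _ : G => (0:ℝ)) = 0 := by
  have h0 := mean_smul (Bdd.const (G := G) (1:ℝ)) 0
  simpa using h0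

/-- The finitely additive invariant content. -/
noncomputable def lam (m : Measure S) (φ : G → S → S) (A : Set S) : ℝ :=
  mean (fun t => (m (φ t ⁻¹' A)).toReal)

lemma bdd_lamfun (m : Measure S) [IsFiniteMeasure m] (φ : G → S → S) (A : Set S) :
    Bdd (fun t : G => (m (φ t ⁻¹' A)).toReal) := by
  refine ⟨(m Set.univ).toReal, fun t => ?_⟩
  rw [abs_of_nonneg ENNReal.toReal_nonneg]
  exact ENNReal.toReal_mono (measure_ne_top m _) (measure_mono (Set.subset_univ _))

lemma lam_nonneg (m : Measure S) [IsFiniteMeasure m] (φ : G → S → S) (A : Set S) :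
    0 ≤ lam m φ A :=
  mean_nonneg (bdd_lamfun m φ A) (fun t => ENNReal.toReal_nonneg)

lemma lam_empty (m : Measure S) (φ : G → S → S) : lam m φ ∅ = 0 := by
  unfold lam
  simp only [Set.preimage_empty, measure_empty, ENNReal.toReal_zero]
  exact mean_zero

lemma lam_mono (m : Measure S) [IsFiniteMeasure m] (φ : G → S → S) {A B : Set S}
    (h : A ⊆ B) : lam m φ A ≤ lam m φ B :=
  mean_mono (bdd_lamfun m φ A) (bdd_lamfun m φ B)
    (fun t => ENNReal.toReal_mono (measure_ne_top m _)
      (measure_mono (Set.preimage_mono h)))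

lemma lam_union (m : Measure S) [IsFiniteMeasure m] (φ : G → S → S) {A B : Set S}
    (hA : MeasurableSet A) (hB : MeasurableSet B)
    (hmeasφ : ∀ t, Measurable (φ t)) (hd : Disjoint A B) :
    lam m φ (A ∪ B) = lam m φ A + lam m φ B := by
  unfold lam
  have key : (fun t : G => (m (φ t ⁻¹' (A ∪ B))).toReal)
      = fun t => (m (φ t ⁻¹' A)).toReal + (m (φ t ⁻¹' B)).toReal := by
    funext t
    rw [Set.preimage_union, measure_union (hd.preimage _) ((hmeasφ t) hB),
      ENNReal.toReal_add (measure_ne_top m _) (measure_ne_top m _)]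
  rw [key]
  exact mean_add (bdd_lamfun m φ A) (bdd_lamfun m φ B)

lemma lam_invariant (m : Measure S) [IsFiniteMeasure m] {φ : G → S → S}
    (hcomp : ∀ u v s, φ (u + v) s = φ u (φ v s)) (u : G) (A : Set S) :
    lam m φ (φ u ⁻¹' A) = lam m φ A := by
  unfold lam
  have key : (fun t : G => (m (φ t ⁻¹' (φ u ⁻¹' A))).toReal)
      = fun t : G => (m (φ (t + u) ⁻¹' A)).toReal := by
    funext t
    congr 1
    rw [← Set.preimage_comp]
    have hfun : φ u ∘ φ t = φ (t + u) := by
      funext x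
      show φ u (φ t x) = φ (t + u) x
      rw [add_comm t u, hcomp u t x]
    rw [hfun]
  rw [key]
  exact mean_transl (bdd_lamfun m φ A) u

lemma lam_null (m : Measure S) [IsFiniteMeasure m] (φ : G → S → S) {A : Set S}
    (h : ∀ t, m (φ t ⁻¹' A) = 0) : lam m φ A = 0 := by
  unfold lam
  have : (fun t : G => (m (φ t ⁻¹' A)).toReal) = fun _ : G => (0:ℝ) := by
    funext t; rw [h t]; simp
  rw [this]
  exact mean_zero

open scoped Classical in
/-- The generating function for the countably additive part. -/
noncomputable def lamFn (m : Measure S) (φ : G → S → S) (A : Set S) : ℝ≥0∞ :=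
  if MeasurableSet A then ENNReal.ofReal (lam m φ A) else ⊤

lemma lamFn_empty (m : Measure S) (φ : G → S → S) : lamFn m φ ∅ = 0 := by
  unfold lamFn
  rw [if_pos MeasurableSet.empty, lam_empty]
  simp

/-- The outer measure. -/
noncomputable def lamOM (m : Measure S) (φ : G → S → S) : OuterMeasure S :=
  OuterMeasure.ofFunction (lamFn m φ) (lamFn_empty m φ)

lemma lamFn_split (m : Measure S) [IsFiniteMeasure m] (φ : G → S → S)
    (hmeasφ : ∀ t, Measurable (φ t)) {E : Set S} (hE : MeasurableSet E) (t : Set S) :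
    lamFn m φ (t ∩ E) + lamFn m φ (t \ E) ≤ lamFn m φ t := by
  by_cases ht : MeasurableSet t
  · unfold lamFn
    rw [if_pos (ht.inter hE), if_pos (ht.diff hE), if_pos ht,
      ← ENNReal.ofReal_add (lam_nonneg m φ _) (lam_nonneg m φ _)]
    apply ENNReal.ofReal_le_ofReal
    rw [← lam_union m φ (ht.inter hE) (ht.diff hE) hmeasφ
      (disjoint_sdiff_self_right.mono_left Set.inter_subset_right)]
    exact le_of_eq (by rw [Set.inter_union_diff])
  · unfold lamFn
    rw [if_neg ht]
    exact le_top

lemma lamOM_caratheodory (m : Measure S) [IsFiniteMeasure m] (φ : G → S → S)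
    (hmeasφ : ∀ t, Measurable (φ t)) :
    (inferInstance : MeasurableSpace S) ≤ (lamOM m φ).caratheodory := by
  intro E hE
  exact MeasureTheory.OuterMeasure.ofFunction_caratheodory
    (fun t => lamFn_split m φ hmeasφ hE t)

/-- The countably additive invariant measure extracted from `lam`. -/
noncomputable def nuM (m : Measure S) [IsFiniteMeasure m] (φ : G → S → S)
    (hmeasφ : ∀ t, Measurable (φ t)) : Measure S :=
  (lamOM m φ).toMeasure (lamOM_caratheodory m φ hmeasφ)

lemma nuM_apply (m : Measure S) [IsFiniteMeasure m] (φ : G → S → S)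
    (hmeasφ : ∀ t, Measurable (φ t)) {A : Set S} (hA : MeasurableSet A) :
    nuM m φ hmeasφ A = lamOM m φ A :=
  MeasureTheory.toMeasure_apply _ _ hA

lemma lamOM_le_lamFn (m : Measure S) (φ : G → S → S) (A : Set S) :
    lamOM m φ A ≤ lamFn m φ A :=
  MeasureTheory.OuterMeasure.ofFunction_le _

lemma nuM_le (m : Measure S) [IsFiniteMeasure m] (φ : G → S → S)
    (hmeasφ : ∀ t, Measurable (φ t)) {A : Set S} (hA : MeasurableSet A) :
    nuM m φ hmeasφ A ≤ ENNReal.ofReal (lam m φ A) := by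
  rw [nuM_apply m φ hmeasφ hA]
  refine (lamOM_le_lamFn m φ A).trans ?_
  unfold lamFn
  rw [if_pos hA]

lemma nuM_finite (m : Measure S) [IsFiniteMeasure m] (φ : G → S → S)
    (hmeasφ : ∀ t, Measurable (φ t)) : IsFiniteMeasure (nuM m φ hmeasφ) := by
  constructor
  calc nuM m φ hmeasφ Set.univ ≤ ENNReal.ofReal (lam m φ Set.univ) :=
        nuM_le m φ hmeasφ MeasurableSet.univ
    _ < ⊤ := ENNReal.ofReal_lt_top

lemma lamOM_preimage_le (m : Measure S) [IsFiniteMeasure m] {φ : G → S → S}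
    (hmeasφ : ∀ t, Measurable (φ t)) (hcomp : ∀ u v s, φ (u + v) s = φ u (φ v s))
    (u : G) (X : Set S) : lamOM m φ (φ u ⁻¹' X) ≤ lamOM m φ X := by
  unfold lamOM
  rw [MeasureTheory.OuterMeasure.ofFunction_apply, MeasureTheory.OuterMeasure.ofFunction_apply]
  refine le_iInf fun C => le_iInf fun hC => ?_
  have hcover : φ u ⁻¹' X ⊆ ⋃ i, φ u ⁻¹' (C i) := by
    intro x hx
    obtain ⟨i, hi⟩ := Set.mem_iUnion.mp (hC hx)
    exact Set.mem_iUnion.mpr ⟨i, hi⟩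
  refine le_trans (iInf_le_of_le (fun i => φ u ⁻¹' (C i)) (iInf_le_of_le hcover le_rfl)) ?_
  refine ENNReal.tsum_le_tsum fun i => ?_
  by_cases hCi : MeasurableSet (C i)
  · unfold lamFn
    rw [if_pos ((hmeasφ u) hCi), if_pos hCi, lam_invariant m hcomp u (C i)]
  · unfold lamFn
    rw [if_neg hCi]
    exact le_top

lemma lamOM_preimage_eq (m : Measure S) [IsFiniteMeasure m] {φ : G → S → S}
    (hmeasφ : ∀ t, Measurable (φ t)) (hid : ∀ s, φ 0 s = s)
    (hcomp : ∀ u v s, φ (u + v) s = φ u (φ v s))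
    (u : G) (X : Set S) : lamOM m φ (φ u ⁻¹' X) = lamOM m φ X := by
  refine le_antisymm (lamOM_preimage_le m hmeasφ hcomp u X) ?_
  have key : φ (-u) ⁻¹' (φ u ⁻¹' X) = X := by
    rw [← Set.preimage_comp]
    have : φ u ∘ φ (-u) = id := by
      funext x
      show φ u (φ (-u) x) = x
      rw [← hcomp u (-u) x]
      simp [hid]
    rw [this, Set.preimage_id]
  calc lamOM m φ X = lamOM m φ (φ (-u) ⁻¹' (φ u ⁻¹' X)) := by rw [key]
    _ ≤ lamOM m φ (φ u ⁻¹' X) := lamOM_preimage_le m hmeasφ hcomp (-u) _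

lemma nuM_invariant (m : Measure S) [IsFiniteMeasure m] {φ : G → S → S}
    (hmeasφ : ∀ t, Measurable (φ t)) (hid : ∀ s, φ 0 s = s)
    (hcomp : ∀ u v s, φ (u + v) s = φ u (φ v s)) (u : G) :
    (nuM m φ hmeasφ).map (φ u) = nuM m φ hmeasφ := by
  refine Measure.ext fun A hA => ?_
  rw [Measure.map_apply (hmeasφ u) hA, nuM_apply m φ hmeasφ ((hmeasφ u) hA),
    nuM_apply m φ hmeasφ hA]
  exact lamOM_preimage_eq m hmeasφ hid hcomp u A

lemma nuM_ac (μ : Measure S) (m : Measure S) [IsFiniteMeasure m] {φ : G → S → S}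
    (hmeasφ : ∀ t, Measurable (φ t))
    (hnull : ∀ ⦃A : Set S⦄, MeasurableSet A → μ A = 0 → ∀ t, m (φ t ⁻¹' A) = 0) :
    nuM m φ hmeasφ ≪ μ := by
  refine Measure.AbsolutelyContinuous.mk fun A hA h0 => ?_
  have : lam m φ A = 0 := lam_null m φ (hnull hA h0)
  have h1 := nuM_le m φ hmeasφ hA
  rw [this] at h1
  simpa using h1

end Content

end Stmt5Aux
namespace Stmt5Aux

section Extraction1

variable {S : Type*} [MeasurableSpace S] {G : Type*} [AddCommGroup G]

set_option linter.unusedSectionVars false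

open scoped ENNReal

lemma lam_union_le (m : Measure S) [IsFiniteMeasure m] (φ : G → S → S)
    (hmeasφ : ∀ t, Measurable (φ t)) {A B : Set S} (hA : MeasurableSet A)
    (hB : MeasurableSet B) : lam m φ (A ∪ B) ≤ lam m φ A + lam m φ B := by
  have he : A ∪ B = A ∪ (B \ A) := by rw [Set.union_diff_self]
  rw [he, lam_union m φ hA (hB.diff hA) hmeasφ disjoint_sdiff_self_right]
  exact add_le_add_right (lam_mono m φ Set.diff_subset) _

lemma lam_biUnion_le (m : Measure S) [IsFiniteMeasure m] (φ : G → S → S)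
    (hmeasφ : ∀ t, Measurable (φ t)) (C : ℕ → Set S) (hC : ∀ i, MeasurableSet (C i)) :
    ∀ N : ℕ, lam m φ (⋃ i ∈ Finset.range N, C i) ≤ ∑ i ∈ Finset.range N, lam m φ (C i) := by
  intro N
  induction N with
  | zero => simp [lam_empty]
  | succ N ih =>
    have he : (⋃ i ∈ Finset.range (N+1), C i) = (⋃ i ∈ Finset.range N, C i) ∪ C N := by
      rw [Finset.range_add_one, Finset.set_biUnion_insert, Set.union_comm]
    rw [he, Finset.sum_range_succ]
    calc lam m φ ((⋃ i ∈ Finset.range N, C i) ∪ C N)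
        ≤ lam m φ (⋃ i ∈ Finset.range N, C i) + lam m φ (C N) :=
          lam_union_le m φ hmeasφ (Finset.measurableSet_biUnion _ (fun i _ => hC i)) (hC N)
      _ ≤ (∑ i ∈ Finset.range N, lam m φ (C i)) + lam m φ (C N) := add_le_add_left ih _

lemma shrink (m : Measure S) [IsFiniteMeasure m] {φ : G → S → S}
    (hmeasφ : ∀ t, Measurable (φ t))
    {B : Set S} (hB : MeasurableSet B) (h0 : nuM m φ hmeasφ B = 0)
    {ε δ : ℝ} (hε : 0 < ε) (hδ : 0 < δ) :
    ∃ B' : Set S, MeasurableSet B' ∧ B' ⊆ B ∧ lam m φ B' < ε ∧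
      m B ≤ m B' + ENNReal.ofReal δ := by
  rcases eq_or_ne (m B) 0 with hmB | hmB
  · exact ⟨∅, MeasurableSet.empty, Set.empty_subset _, by rw [lam_empty]; exact hε,
      by simp [hmB]⟩
  have h1 : lamOM m φ B < ENNReal.ofReal ε := by
    rw [← nuM_apply m φ hmeasφ hB, h0]
    exact ENNReal.ofReal_pos.mpr hε
  unfold lamOM at h1
  rw [MeasureTheory.OuterMeasure.ofFunction_apply] at h1
  obtain ⟨C, hC⟩ := iInf_lt_iff.mp h1
  obtain ⟨hcover, hlt⟩ := iInf_lt_iff.mp hC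
  have hCmeas : ∀ i, MeasurableSet (C i) := by
    intro i
    by_contra hi
    have htop : lamFn m φ (C i) = ⊤ := by unfold lamFn; rw [if_neg hi]
    have : (∑' i, lamFn m φ (C i)) = ⊤ := ENNReal.tsum_eq_top_of_eq_top ⟨i, htop⟩
    rw [this] at hlt
    exact not_top_lt hlt
  set C' : ℕ → Set S := fun i => C i ∩ B with hC'
  have hc'meas : ∀ i, MeasurableSet (C' i) := fun i => (hCmeas i).inter hB
  have hBeq : B = ⋃ i, C' i := by
    apply Set.Subset.antisymm
    · intro x hx
      obtain ⟨_, ⟨⟨i, rfl⟩, hi⟩⟩ := hcover hx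
      exact Set.mem_iUnion.mpr ⟨i, hi, hx⟩
    · exact Set.iUnion_subset fun i => Set.inter_subset_right
  have hsumreal : ∀ N, ∑ i ∈ Finset.range N, lam m φ (C i) < ε := by
    intro N
    have h2 : ∑ i ∈ Finset.range N, lamFn m φ (C i) ≤ ∑' i, lamFn m φ (C i) :=
      ENNReal.sum_le_tsum _
    have h3 : ∑ i ∈ Finset.range N, lamFn m φ (C i)
        = ENNReal.ofReal (∑ i ∈ Finset.range N, lam m φ (C i)) := by
      rw [ENNReal.ofReal_sum_of_nonneg (fun i _ => lam_nonneg m φ _)]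
      refine Finset.sum_congr rfl fun i _ => ?_
      unfold lamFn
      rw [if_pos (hCmeas i)]
    have h4 : ENNReal.ofReal (∑ i ∈ Finset.range N, lam m φ (C i)) < ENNReal.ofReal ε :=
      lt_of_le_of_lt (h3 ▸ h2) hlt
    exact (ENNReal.ofReal_lt_ofReal_iff_of_nonneg
      (Finset.sum_nonneg (fun i _ => lam_nonneg m φ _))).mp h4
  set D : ℕ → Set S := fun N => ⋃ i ∈ Finset.range N, C' i with hD
  have hDmono : Monotone D := by
    intro a b hab
    exact Set.biUnion_subset_biUnion_left (Finset.range_subset_range.mpr hab)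
  have hDunion : (⋃ N, D N) = B := by
    rw [hBeq]
    apply Set.Subset.antisymm
    · exact Set.iUnion_subset fun N => Set.iUnion₂_subset fun i _ => Set.subset_iUnion C' i
    · intro x hx
      obtain ⟨i, hi⟩ := Set.mem_iUnion.mp hx
      exact Set.mem_iUnion.mpr ⟨i+1, Set.mem_biUnion (Finset.self_mem_range_succ i) hi⟩
  have hsup : m B = ⨆ N, m (D N) := by
    rw [← hDunion]
    exact Directed.measure_iUnion (hDmono.directed_le)
  have hexN : ∃ N, m B ≤ m (D N) + ENNReal.ofReal δ := by
    by_contra hcon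
    push_neg at hcon
    have hle : ∀ N, m (D N) ≤ m B - ENNReal.ofReal δ := fun N =>
      ENNReal.le_sub_of_add_le_right ENNReal.ofReal_ne_top (hcon N).le
    have hsup_le : m B ≤ m B - ENNReal.ofReal δ := by
      conv_lhs => rw [hsup]
      exact iSup_le hle
    have hlt2 : m B - ENNReal.ofReal δ < m B :=
      ENNReal.sub_lt_self (measure_ne_top m B) hmB
        (by simpa using ENNReal.ofReal_pos.mpr hδ)
    exact absurd hsup_le (not_le.mpr hlt2)
  obtain ⟨N, hN⟩ := hexN
  refine ⟨D N, Finset.measurableSet_biUnion _ (fun i _ => hc'meas i),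
    Set.iUnion₂_subset (fun i _ => Set.inter_subset_right), ?_, hN⟩
  calc lam m φ (D N) ≤ ∑ i ∈ Finset.range N, lam m φ (C' i) :=
        lam_biUnion_le m φ hmeasφ C' hc'meas N
    _ ≤ ∑ i ∈ Finset.range N, lam m φ (C i) :=
        Finset.sum_le_sum (fun i _ => lam_mono m φ Set.inter_subset_left)
    _ < ε := hsumreal N

end Extraction1

/-- Recursive sequence builder with history. -/
def seqRec {α : Type*} (z : α) (f : ℕ → (ℕ → α) → α) : ℕ → (ℕ → α) := fun n =>
  Nat.rec (fun _ => z) (fun k prev => Function.update prev k (f k prev)) n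

/-- The recursively chosen sequence. -/
def seqVal {α : Type*} (z : α) (f : ℕ → (ℕ → α) → α) (k : ℕ) : α := seqRec z f (k+1) k

lemma seqRec_succ {α : Type*} (z : α) (f : ℕ → (ℕ → α) → α) (k : ℕ) :
    seqRec z f (k+1) = Function.update (seqRec z f k) k (f k (seqRec z f k)) := rfl

lemma seqVal_eq {α : Type*} (z : α) (f : ℕ → (ℕ → α) → α) (k : ℕ) :
    seqVal z f k = f k (seqRec z f k) := by
  rw [seqVal, seqRec_succ, Function.update_self]

lemma seqRec_agree {α : Type*} (z : α) (f : ℕ → (ℕ → α) → α) :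
    ∀ k j, j < k → seqRec z f k j = seqVal z f j := by
  intro k
  induction k with
  | zero => omega
  | succ k ih =>
    intro j hj
    rcases Nat.lt_succ_iff_lt_or_eq.mp hj with h | h
    · rw [seqRec_succ, Function.update_of_ne (by omega)]
      exact ih j h
    · subst h
      rfl

end Stmt5Aux
namespace Stmt5Aux

section Extraction2

variable {S : Type*} [MeasurableSpace S] {G : Type*} [AddCommGroup G]

set_option linter.unusedSectionVars false

open scoped ENNReal Classical

lemma exists_good_point (m : Measure S) [IsFiniteMeasure m] (φ : G → S → S)
    {B : Set S} {η : ℝ} (hη : 0 < η) {k : ℕ}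
    (hsmall : (k:ℝ) * lam m φ B < η) (sv : ℕ → G) :
    ∃ s : G, ∀ i < k, (m (φ (s - sv i) ⁻¹' B)).toReal < η := by
  by_contra hcon
  push_neg at hcon
  set h : G → ℝ := fun u => (m (φ u ⁻¹' B)).toReal with hh
  have hhbdd : Bdd h := bdd_lamfun m φ _
  set I : G → ℝ := fun u => if η ≤ h u then 1 else 0 with hI
  have hIbdd : Bdd I := ⟨1, fun t => by
    by_cases hc : η ≤ h t <;> simp [hI, hc]⟩
  have hInonneg : ∀ u, 0 ≤ I u := fun u => by
    by_cases hc : η ≤ h u <;> simp [hI, hc]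
  have hImean_nonneg : 0 ≤ mean I := mean_nonneg hIbdd hInonneg
  have hImean : η * mean I ≤ lam m φ B := by
    have hpt : ∀ u, η * I u ≤ h u := by
      intro u
      by_cases hc : η ≤ h u
      · simp only [hI, if_pos hc, mul_one]
        exact hc
      · simp only [hI, if_neg hc, mul_zero]
        exact ENNReal.toReal_nonneg
    calc η * mean I = mean (fun u => η * I u) := (mean_smul hIbdd η).symm
      _ ≤ mean h := mean_mono (hIbdd.mul_const η) hhbdd hpt
      _ = lam m φ B := rfl
  set u : ℕ → G → ℝ := fun i t => I (t + (- sv i)) with hu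
  have hubdd : ∀ i, Bdd (u i) := fun i => by
    obtain ⟨C, hC⟩ := hIbdd
    exact ⟨C, fun t => hC _⟩
  have humean : ∀ i, mean (u i) = mean I := fun i => mean_transl hIbdd (- sv i)
  have hpt1 : ∀ t, (1:ℝ) ≤ ∑ i ∈ Finset.range k, u i t := by
    intro t
    obtain ⟨i, hik, hbad⟩ := hcon t
    have hui : u i t = 1 := by
      have he : t + (- sv i) = t - sv i := (sub_eq_add_neg t (sv i)).symm
      simp only [hu, he, hI]
      rw [if_pos hbad]
    have hnn : ∀ j ∈ Finset.range k, 0 ≤ u j t := fun j _ => hInonneg _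
    calc (1:ℝ) = u i t := hui.symm
      _ ≤ ∑ j ∈ Finset.range k, u j t :=
          Finset.single_le_sum hnn (Finset.mem_range.mpr hik)
  have hsum : mean (fun t => ∑ i ∈ Finset.range k, u i t)
      = ∑ i ∈ Finset.range k, mean (u i) := mean_sum _ _ (fun i _ => hubdd i)
  have h1 : (1:ℝ) ≤ ∑ i ∈ Finset.range k, mean (u i) := by
    have hmono := mean_mono (Bdd.const 1) (Bdd.finsum _ _ (fun i _ => hubdd i)) hpt1
    rw [mean_one] at hmono
    rw [← hsum]
    exact hmono
  have h2 : ∑ i ∈ Finset.range k, mean (u i) = (k:ℝ) * mean I := by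
    rw [Finset.sum_congr rfl (fun i _ => humean i), Finset.sum_const, Finset.card_range,
      nsmul_eq_mul]
  rw [h2] at h1
  -- η ≤ η * (k * mean I) = k * (η * mean I) ≤ k * lam < η
  have h3 : η * 1 ≤ η * ((k:ℝ) * mean I) := by
    exact mul_le_mul_of_nonneg_left h1 hη.le
  have h4 : η * ((k:ℝ) * mean I) = (k:ℝ) * (η * mean I) := by ring
  have h5 : (k:ℝ) * (η * mean I) ≤ (k:ℝ) * lam m φ B :=
    mul_le_mul_of_nonneg_left hImean (by positivity)
  rw [mul_one] at h3
  linarith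

end Extraction2

end Stmt5Aux
namespace Stmt5Aux

section Extraction3

variable {S : Type*} [MeasurableSpace S] {G : Type*} [AddCommGroup G]

set_option linter.unusedSectionVars false
set_option maxHeartbeats 1000000

open scoped ENNReal Classical

theorem exists_ww_subset (m : Measure S) [IsFiniteMeasure m] {φ : G → S → S}
    (hmeasφ : ∀ t, Measurable (φ t)) (hcomp : ∀ u v s, φ (u + v) s = φ u (φ v s))
    {R : Set S} (hR : MeasurableSet R) (hRpos : m R ≠ 0)
    (h0 : nuM m φ hmeasφ R = 0) :
    ∃ W : Set S, MeasurableSet W ∧ W ⊆ R ∧ m W ≠ 0 ∧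
      ∃ sq : ℕ → G, ∀ n j : ℕ, n ≠ j → φ (sq n) ⁻¹' W ∩ φ (sq j) ⁻¹' W = ∅ := by
  set βr := (m R).toReal with hβr
  have hβpos : 0 < βr := ENNReal.toReal_pos hRpos (measure_ne_top m R)
  set η : ℕ → ℝ := fun k => βr * (2⁻¹:ℝ)^(2*k+6) with hηdef
  have hηpos : ∀ k, 0 < η k := fun k => by positivity
  set εs : ℕ → ℝ := fun k => η k / (2*(k+1)) with hεdef
  have hεpos : ∀ k, 0 < εs k := fun k => by positivity
  set δs : ℕ → ℝ := fun k => βr * (2⁻¹:ℝ)^(k+3) with hδdef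
  have hδpos : ∀ k, 0 < δs k := fun k => by positivity
  -- recursive construction of the decreasing sets B_k
  have hstep : ∀ (k : ℕ) (B : {B : Set S // MeasurableSet B ∧ B ⊆ R}),
      ∃ B' : Set S, MeasurableSet B' ∧ B' ⊆ B.1 ∧ lam m φ B' < εs (k+1) ∧
        m B.1 ≤ m B' + ENNReal.ofReal (δs (k+1)) := by
    intro k B
    refine shrink m hmeasφ B.2.1 ?_ (hεpos (k+1)) (hδpos (k+1))
    exact le_antisymm (le_trans (measure_mono B.2.2) (le_of_eq h0)) zero_le
  choose F hF1 hF2 hF3 hF4 using hstep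
  let BB : ℕ → {B : Set S // MeasurableSet B ∧ B ⊆ R} := fun n =>
    Nat.rec ⟨R, hR, subset_rfl⟩
      (fun k prev => ⟨F k prev, hF1 k prev, (hF2 k prev).trans prev.2.2⟩) n
  have hBB0 : (BB 0).1 = R := rfl
  have hBBsucc : ∀ k, (BB (k+1)).1 = F k (BB k) := fun k => rfl
  have hBmeas : ∀ k, MeasurableSet (BB k).1 := fun k => (BB k).2.1
  have hBsubR : ∀ k, (BB k).1 ⊆ R := fun k => (BB k).2.2
  have hBmono : ∀ k, (BB (k+1)).1 ⊆ (BB k).1 := fun k => hF2 k (BB k)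
  have hBlam : ∀ k, lam m φ (BB (k+1)).1 < εs (k+1) := fun k => hF3 k (BB k)
  have hBm : ∀ k, m (BB k).1 ≤ m (BB (k+1)).1 + ENNReal.ofReal (δs (k+1)) :=
    fun k => hF4 k (BB k)
  -- choice of the translation elements
  have hgood : ∀ (k : ℕ) (sv : ℕ → G), ∃ s : G,
      ∀ i < k, (m (φ (s - sv i) ⁻¹' (BB k).1)).toReal < η k := by
    intro k sv
    rcases Nat.eq_zero_or_pos k with hk0 | hkpos
    · subst hk0
      exact ⟨0, fun i hi => absurd hi (Nat.not_lt_zero i)⟩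
    · refine exists_good_point m φ (hηpos k) ?_ sv
      have hlamk : lam m φ (BB k).1 < εs k := by
        cases k with
        | zero => omega
        | succ k' => exact hBlam k'
      have hk1 : (1:ℝ) ≤ (k:ℝ) := by exact_mod_cast hkpos
      have hklt : (k:ℝ) < 2*(k+1) := by push_cast; linarith
      calc (k:ℝ) * lam m φ (BB k).1 ≤ (k:ℝ) * εs k := by
            refine mul_le_mul_of_nonneg_left hlamk.le (by positivity)
        _ < η k := by
          rw [hεdef]
          simp only
          rw [mul_div_assoc']
          rw [div_lt_iff₀ (by positivity)]
          have := hηpos k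
          nlinarith [hηpos k]
  choose pick hpick using hgood
  set sv : ℕ → G := seqVal 0 pick with hsvdef
  have hconstraint : ∀ k, ∀ i < k,
      (m (φ (sv k - sv i) ⁻¹' (BB k).1)).toReal < η k := by
    intro k i hik
    have h := hpick k (seqRec 0 pick k) i hik
    rw [seqRec_agree 0 pick k i hik] at h
    rw [hsvdef, seqVal_eq]
    exact h
  -- the weakly wandering set
  set Binf := ⋂ k, (BB k).1 with hBinfdef
  have hBinfMeas : MeasurableSet Binf := MeasurableSet.iInter (fun k => hBmeas k)
  set Rem := ⋃ (k:ℕ), ⋃ (i:ℕ), ⋃ (_ : i < k), φ (sv k - sv i) ⁻¹' (BB k).1 with hRemdef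
  have hRemMeas : MeasurableSet Rem :=
    MeasurableSet.iUnion fun k => MeasurableSet.iUnion fun i =>
      MeasurableSet.iUnion fun _ => (hmeasφ _) (hBmeas k)
  have hWsub : Binf \ Rem ⊆ R := by
    refine Set.diff_subset.trans ?_
    refine (Set.iInter_subset _ 0).trans ?_
    rw [hBB0]
  -- measure bounds
  have hchain : ∀ k, m R ≤ m (BB k).1
      + ENNReal.ofReal (∑ j ∈ Finset.range k, δs (j+1)) := by
    intro k
    induction k with
    | zero => simp [hBB0]
    | succ k ih =>
      calc m R ≤ m (BB k).1 + ENNReal.ofReal (∑ j ∈ Finset.range k, δs (j+1)) := ih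
        _ ≤ (m (BB (k+1)).1 + ENNReal.ofReal (δs (k+1)))
            + ENNReal.ofReal (∑ j ∈ Finset.range k, δs (j+1)) :=
          add_le_add_left (hBm k) _
        _ = m (BB (k+1)).1 + ENNReal.ofReal (∑ j ∈ Finset.range (k+1), δs (j+1)) := by
          rw [add_assoc, ← ENNReal.ofReal_add (hδpos (k+1)).le
            (Finset.sum_nonneg (fun j _ => (hδpos (j+1)).le)), Finset.sum_range_succ]
          congr 1
          congr 1
          ring
  have hdelta : ∀ k, ∑ j ∈ Finset.range k, δs (j+1) ≤ βr/8 := by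
    intro k
    have he : ∀ j, δs (j+1) = (βr * (2⁻¹:ℝ)^4) * (2⁻¹:ℝ)^j := by
      intro j
      rw [hδdef]
      simp only
      rw [show j+1+3 = 4+j from by omega, pow_add]
      ring
    rw [Finset.sum_congr rfl (fun j _ => he j), ← Finset.mul_sum]
    have hgeom : ∑ j ∈ Finset.range k, (2⁻¹:ℝ)^j ≤ 2 := by
      have := sum_geometric_two_le k
      simpa [one_div] using this
    have hco : (0:ℝ) ≤ βr * (2⁻¹:ℝ)^4 := by positivity
    calc (βr * (2⁻¹:ℝ)^4) * ∑ j ∈ Finset.range k, (2⁻¹:ℝ)^j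
        ≤ (βr * (2⁻¹:ℝ)^4) * 2 := mul_le_mul_of_nonneg_left hgeom hco
      _ = βr/8 := by ring
  have hBk_lb : ∀ k, m R ≤ m (BB k).1 + ENNReal.ofReal (βr/8) := fun k =>
    (hchain k).trans (add_le_add_right (ENNReal.ofReal_le_ofReal (hdelta k)) _)
  have hBanti : Antitone (fun k => (BB k).1) := antitone_nat_of_succ_le hBmono
  have hBinf_m : m R ≤ m Binf + ENNReal.ofReal (βr/8) := by
    have hinter : m Binf = ⨅ k, m (BB k).1 := by
      rw [hBinfdef]
      exact Directed.measure_iInter (fun k => (hBmeas k).nullMeasurableSet)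
        (hBanti.directed_ge) ⟨0, measure_ne_top m _⟩
    rw [hinter, ENNReal.iInf_add]
    exact le_iInf (fun k => hBk_lb k)
  have hRem_i : ∀ k, m (⋃ (i:ℕ), ⋃ (_ : i < k), φ (sv k - sv i) ⁻¹' (BB k).1)
      ≤ ENNReal.ofReal (βr * (2⁻¹:ℝ)^(k+5)) := by
    intro k
    have hterm : ∀ i : ℕ, m (⋃ (_ : i < k), φ (sv k - sv i) ⁻¹' (BB k).1)
        ≤ (if i < k then ENNReal.ofReal (η k) else 0) := by
      intro i
      by_cases hik : i < k
      · rw [if_pos hik, Set.iUnion_eq_if, if_pos hik]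
        have := hconstraint k i hik
        exact ((ENNReal.lt_ofReal_iff_toReal_lt (measure_ne_top m _)).mpr this).le
      · rw [if_neg hik, Set.iUnion_eq_if, if_neg hik]
        simp
    calc m (⋃ (i:ℕ), ⋃ (_ : i < k), φ (sv k - sv i) ⁻¹' (BB k).1)
        ≤ ∑' (i:ℕ), m (⋃ (_ : i < k), φ (sv k - sv i) ⁻¹' (BB k).1) :=
          measure_iUnion_le _
      _ ≤ ∑' (i:ℕ), (if i < k then ENNReal.ofReal (η k) else 0) :=
          ENNReal.tsum_le_tsum hterm
      _ = ∑ i ∈ Finset.range k, (if i < k then ENNReal.ofReal (η k) else 0) := by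
          refine tsum_eq_sum ?_
          intro i hi
          rw [if_neg (by simpa using hi)]
      _ = (k : ℝ≥0∞) * ENNReal.ofReal (η k) := by
          rw [Finset.sum_congr rfl (fun i hi => if_pos (Finset.mem_range.mp hi)),
            Finset.sum_const, Finset.card_range, nsmul_eq_mul]
      _ = ENNReal.ofReal ((k:ℝ) * η k) := by
          rw [← ENNReal.ofReal_natCast k,
            ← ENNReal.ofReal_mul (by positivity : (0:ℝ) ≤ (k:ℝ))]
      _ ≤ ENNReal.ofReal (βr * (2⁻¹:ℝ)^(k+5)) := by
          apply ENNReal.ofReal_le_ofReal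
          -- k * η k = k * βr * 2⁻¹^(2k+6) ≤ βr * 2⁻¹^(k+5)
          rw [hηdef]
          simp only
          have hk2 : (k:ℝ) ≤ 2^(k+1) := by
            exact_mod_cast (Nat.lt_two_pow_self (n := k)).le.trans
              (Nat.pow_le_pow_right (by norm_num) (Nat.le_succ k))
          have hsplit : (2⁻¹:ℝ)^(2*k+6) = (2⁻¹:ℝ)^(k+1) * (2⁻¹:ℝ)^(k+5) := by
            rw [← pow_add]
            congr 1
            omega
          rw [hsplit]
          have h1 : (k:ℝ) * (2⁻¹:ℝ)^(k+1) ≤ 1 := by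
            rw [inv_pow, ← div_eq_mul_inv, div_le_one (by positivity)]
            exact hk2
          calc (k:ℝ) * (βr * ((2⁻¹:ℝ)^(k+1) * (2⁻¹:ℝ)^(k+5)))
              = ((k:ℝ) * (2⁻¹:ℝ)^(k+1)) * (βr * (2⁻¹:ℝ)^(k+5)) := by ring
            _ ≤ 1 * (βr * (2⁻¹:ℝ)^(k+5)) := by
                refine mul_le_mul_of_nonneg_right h1 (by positivity)
            _ = βr * (2⁻¹:ℝ)^(k+5) := one_mul _
  have hRemBound : m Rem ≤ ENNReal.ofReal (βr/16) := by
    have hrw : ∀ k : ℕ, βr * (2⁻¹:ℝ)^(k+5) = (βr * (2⁻¹:ℝ)^5) * (2⁻¹:ℝ)^k := by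
      intro k
      rw [pow_add]
      ring
    have hsummable : Summable (fun k : ℕ => βr * (2⁻¹:ℝ)^(k+5)) := by
      refine Summable.congr ?_ (fun k => (hrw k).symm)
      exact (summable_geometric_of_lt_one (by norm_num) (by norm_num)).mul_left _
    have htsum : (∑' k : ℕ, βr * (2⁻¹:ℝ)^(k+5)) = βr/16 := by
      rw [tsum_congr hrw, tsum_mul_left,
        tsum_geometric_of_lt_one (by norm_num) (by norm_num)]
      ring
    calc m Rem ≤ ∑' (k:ℕ), m (⋃ (i:ℕ), ⋃ (_ : i < k), φ (sv k - sv i) ⁻¹' (BB k).1) :=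
          measure_iUnion_le _
      _ ≤ ∑' (k:ℕ), ENNReal.ofReal (βr * (2⁻¹:ℝ)^(k+5)) := ENNReal.tsum_le_tsum hRem_i
      _ = ENNReal.ofReal (∑' k : ℕ, βr * (2⁻¹:ℝ)^(k+5)) :=
          (ENNReal.ofReal_tsum_of_nonneg (fun k => by positivity) hsummable).symm
      _ = ENNReal.ofReal (βr/16) := by rw [htsum]
  -- the set W and its properties
  refine ⟨Binf \ Rem, hBinfMeas.diff hRemMeas, hWsub, ?_, sv, ?_⟩
  · -- m W ≠ 0
    intro hW0
    have hsplit : m Binf ≤ m Rem := by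
      have hsub2 : Binf ⊆ (Binf \ Rem) ∪ Rem := by
        intro x hx
        by_cases hxr : x ∈ Rem
        · exact Set.mem_union_right _ hxr
        · exact Set.mem_union_left _ ⟨hx, hxr⟩
      calc m Binf ≤ m ((Binf \ Rem) ∪ Rem) := measure_mono hsub2
        _ ≤ m (Binf \ Rem) + m Rem := measure_union_le _ _
        _ = m Rem := by rw [hW0, zero_add]
    have hfinal : m R ≤ ENNReal.ofReal (βr/16) + ENNReal.ofReal (βr/8) :=
      hBinf_m.trans (add_le_add_left (hsplit.trans hRemBound) _)
    rw [← ENNReal.ofReal_add (by positivity) (by positivity)] at hfinal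
    have hmr : m R = ENNReal.ofReal βr := (ENNReal.ofReal_toReal (measure_ne_top m R)).symm
    rw [hmr] at hfinal
    have hreal : βr ≤ βr/16 + βr/8 :=
      (ENNReal.ofReal_le_ofReal_iff (by positivity)).mp hfinal
    linarith
  · -- disjointness
    have key : ∀ i j : ℕ, i < j →
        φ (sv j) ⁻¹' (Binf \ Rem) ∩ φ (sv i) ⁻¹' (Binf \ Rem) = ∅ := by
      intro i j hij
      ext x
      simp only [Set.mem_inter_iff, Set.mem_preimage, Set.mem_empty_iff_false, iff_false,
        not_and]
      intro hxj hxi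
      have himg : φ (sv j - sv i) (φ (sv i) x) = φ (sv j) x := by
        rw [← hcomp (sv j - sv i) (sv i) x, sub_add_cancel]
      have hyRem : φ (sv i) x ∈ Rem := by
        rw [hRemdef]
        refine Set.mem_iUnion.mpr ⟨j, Set.mem_iUnion.mpr ⟨i, Set.mem_iUnion.mpr ⟨hij, ?_⟩⟩⟩
        rw [Set.mem_preimage, himg]
        exact Set.mem_iInter.mp hxj.1 j
      exact hxi.2 hyRem
    intro n j hnj
    rcases lt_or_gt_of_ne hnj with h | h
    · rw [Set.inter_comm]
      exact key n j h
    · exact key j n h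

end Extraction3

end Stmt5Aux
open MeasureTheory Stmt5Aux
open scoped ENNReal NNReal symmDiff

set_option maxHeartbeats 1000000 in
/-- The null part `N_𝓖 = S \ P_𝓖` is, modulo `μ`-null sets, a countable union
of measurable sets each of which is weakly wandering with respect to the action. -/
theorem stmt5
    {S : Type*} [MeasurableSpace S] [StandardBorelSpace S]
    (μ : Measure S) [SigmaFinite μ]
    {G : Type*} [AddCommGroup G] [TopologicalSpace G] [IsTopologicalAddGroup G]
    [LocallyCompactSpace G] [SecondCountableTopology G]
    [MeasurableSpace G] [BorelSpace G]
    (φ : G → S → S)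
    (hjoint : Measurable fun p : G × S => φ p.1 p.2)
    (hid : ∀ s, φ 0 s = s)
    (hcomp : ∀ u v s, φ (u + v) s = φ u (φ v s))
    (hns : ∀ t, μ.map (φ t) ≪ μ ∧ μ ≪ μ.map (φ t))
    (ν₀ : Measure S) [IsFiniteMeasure ν₀] (hν₀ac : ν₀ ≪ μ)
    (hν₀inv : ∀ t, ν₀.map (φ t) = ν₀)
    (P : Set S) (hP : P = {s | 0 < ν₀.rnDeriv μ s})
    (hmax : ∀ ν : Measure S, IsFiniteMeasure ν → ν ≪ μ → (∀ t, ν.map (φ t) = ν) →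
      μ ({s | 0 < ν.rnDeriv μ s} \ P) = 0) :
    ∃ W : ℕ → Set S, (∀ k, MeasurableSet (W k)) ∧
      (∀ k, ∃ t : ℕ → G, ∀ n m, n ≠ m → μ (φ (t n) ⁻¹' (W k) ∩ φ (t m) ⁻¹' (W k)) = 0) ∧
      μ (symmDiff Pᶜ (⋃ k, W k)) = 0 := by
  classical
  -- measurability of each `φ t`
  have hφmeas : ∀ t, Measurable (φ t) := fun t =>
    hjoint.comp (measurable_const.prodMk measurable_id)
  -- an equivalent finite measure
  obtain ⟨m, hmfin, hμm, hmμ⟩ := exists_isFiniteMeasure_absolutelyContinuous μ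
  haveI : IsFiniteMeasure m := hmfin
  -- null sets are preserved by preimages
  have hnull : ∀ ⦃A : Set S⦄, MeasurableSet A → μ A = 0 → ∀ t, m (φ t ⁻¹' A) = 0 := by
    intro A hA h0 t
    apply hmμ
    have : μ.map (φ t) A = 0 := (hns t).1 h0
    rwa [Measure.map_apply (hφmeas t) hA] at this
  have hPmeas : MeasurableSet P := by
    rw [hP]
    exact measurableSet_lt measurable_const (Measure.measurable_rnDeriv ν₀ μ)
  -- the class of weakly wandering subsets of Pᶜ
  set isC : Set S → Prop := fun Ws => MeasurableSet Ws ∧ Ws ⊆ Pᶜ ∧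
    ∃ t : ℕ → G, ∀ n j, n ≠ j → μ (φ (t n) ⁻¹' Ws ∩ φ (t j) ⁻¹' Ws) = 0 with hisC
  have hCempty : isC ∅ := by
    refine ⟨MeasurableSet.empty, Set.empty_subset _, fun _ => 0, fun n j _ => ?_⟩
    simp
  set 𝒮 : Set ℝ≥0∞ := {x | ∃ f : ℕ → Set S, (∀ k, isC (f k)) ∧ x = m (⋃ k, f k)} with h𝒮
  have hSne : 𝒮.Nonempty := ⟨m (⋃ _ : ℕ, (∅ : Set S)), fun _ => ∅, fun _ => hCempty, rfl⟩
  set σ : ℝ≥0∞ := sSup 𝒮 with hσ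
  have hσle : σ ≤ m Set.univ := by
    refine sSup_le ?_
    rintro x ⟨f, hf, rfl⟩
    exact measure_mono (Set.subset_univ _)
  have hσtop : σ ≠ ⊤ := (hσle.trans_lt (measure_lt_top m _)).ne
  have happrox : ∀ n : ℕ, ∃ g : ℕ → Set S, (∀ k, isC (g k)) ∧
      σ < m (⋃ k, g k) + ((n:ℝ≥0∞)+1)⁻¹ := by
    intro n
    have hεpos : ((n:ℝ≥0∞)+1)⁻¹ ≠ 0 := by simp
    by_contra hc
    push_neg at hc
    have hc' : ∀ x ∈ 𝒮, x + ((n:ℝ≥0∞)+1)⁻¹ ≤ σ := by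
      rintro x ⟨f, hf, rfl⟩
      exact hc f hf
    have hσ0 : ((n:ℝ≥0∞)+1)⁻¹ ≤ σ := by
      have := hc' _ ⟨fun _ => ∅, fun _ => hCempty, rfl⟩
      simpa using this
    have hle : ∀ x ∈ 𝒮, x ≤ σ - ((n:ℝ≥0∞)+1)⁻¹ := fun x hx =>
      ENNReal.le_sub_of_add_le_right (by simp) (hc' x hx)
    have h1 : σ ≤ σ - ((n:ℝ≥0∞)+1)⁻¹ := sSup_le hle
    have h2 : σ - ((n:ℝ≥0∞)+1)⁻¹ < σ :=
      ENNReal.sub_lt_self hσtop (fun h => hεpos (le_antisymm (h ▸ hσ0) zero_le) ) hεpos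
    exact absurd h1 (not_le.mpr h2)
  choose g hg1 hg2 using happrox
  set W' : ℕ → Set S := fun j => g (Nat.unpair j).1 (Nat.unpair j).2 with hW'
  have hW'C : ∀ j, isC (W' j) := fun j => hg1 _ _
  set U : Set S := ⋃ j, W' j with hU
  have hUmeas : MeasurableSet U := MeasurableSet.iUnion fun j => (hW'C j).1
  have hUsub : U ⊆ Pᶜ := Set.iUnion_subset fun j => (hW'C j).2.1
  have hUsup : ∀ n : ℕ, (⋃ k, g n k) ⊆ U := by
    intro n
    refine Set.iUnion_subset fun k => ?_
    intro x hx
    refine Set.mem_iUnion.mpr ⟨Nat.pair n k, ?_⟩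
    rw [hW']
    simp only [Nat.unpair_pair]
    exact hx
  have hUmem : m U ∈ 𝒮 := ⟨W', hW'C, rfl⟩
  have hUle : m U ≤ σ := le_sSup hUmem
  have hUge : σ ≤ m U := by
    refine ENNReal.le_of_forall_pos_le_add fun ε hε _ => ?_
    obtain ⟨n, hn⟩ := ENNReal.exists_inv_nat_lt (a := (ε:ℝ≥0∞))
      (by exact_mod_cast hε.ne')
    have h1 : σ < m (⋃ k, g n k) + ((n:ℝ≥0∞)+1)⁻¹ := hg2 n
    have h2 : m (⋃ k, g n k) ≤ m U := measure_mono (hUsup n)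
    have h3 : ((n:ℝ≥0∞)+1)⁻¹ ≤ (n:ℝ≥0∞)⁻¹ :=
      ENNReal.inv_le_inv.mpr (le_add_of_nonneg_right zero_le)
    refine le_of_lt ?_
    calc σ < m (⋃ k, g n k) + ((n:ℝ≥0∞)+1)⁻¹ := h1
      _ ≤ m U + (ε:ℝ≥0∞) := add_le_add h2 (h3.trans hn.le)
  have hUσ : m U = σ := le_antisymm hUle hUge
  -- the residual set
  set R : Set S := Pᶜ \ U with hRdef
  have hRmeas : MeasurableSet R := hPmeas.compl.diff hUmeas
  have hRnull : μ R = 0 := by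
    by_contra hR0
    have hmR : m R ≠ 0 := fun h => hR0 (hμm h)
    rcases eq_or_ne (nuM m φ hφmeas R) 0 with hnuR | hnuR
    · -- extraction: a weakly wandering subset of positive measure, contradicting maximality of σ
      obtain ⟨Ws, hWsMeas, hWsSub, hWsPos, sq, hsq⟩ :=
        exists_ww_subset m hφmeas hcomp hRmeas hmR hnuR
      have hWsC : isC Ws := by
        refine ⟨hWsMeas, hWsSub.trans (Set.diff_subset), sq, fun n j hnj => ?_⟩
        rw [hsq n j hnj]
        simp
      set f' : ℕ → Set S := fun j => Nat.casesOn j Ws (fun i => W' i) with hf'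
      have hf'C : ∀ j, isC (f' j) := by
        intro j
        cases j with
        | zero => exact hWsC
        | succ i => exact hW'C i
      have hf'union : (⋃ j, f' j) = Ws ∪ U := by
        apply Set.Subset.antisymm
        · refine Set.iUnion_subset fun j => ?_
          cases j with
          | zero => exact Set.subset_union_left
          | succ i => exact (Set.subset_iUnion W' i).trans Set.subset_union_right
        · refine Set.union_subset ?_ ?_
          · exact Set.subset_iUnion f' 0
          · exact Set.iUnion_subset fun i => Set.subset_iUnion f' (i+1)
      have hmem : m (Ws ∪ U) ∈ 𝒮 := ⟨f', hf'C, by rw [hf'union]⟩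
      have hdisj : Disjoint Ws U := Set.disjoint_left.mpr (fun x hx => (hWsSub hx).2)
      have hsum : m (Ws ∪ U) = m Ws + m U := measure_union hdisj hUmeas
      have hlt : σ < m (Ws ∪ U) := by
        rw [hsum, hUσ, add_comm]
        exact ENNReal.lt_add_right hσtop hWsPos
      exact absurd (le_sSup hmem) (not_le.mpr hlt)
    · -- otherwise `nuM` is a nontrivial finite invariant measure charging `R ⊆ Pᶜ`
      set ν := nuM m φ hφmeas with hν
      haveI : IsFiniteMeasure ν := nuM_finite m φ hφmeas
      have hνac : ν ≪ μ := nuM_ac μ m hφmeas hnull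
      have hνinv : ∀ t, ν.map (φ t) = ν := fun t => nuM_invariant m hφmeas hid hcomp t
      have hmax' := hmax ν inferInstance hνac hνinv
      have hRZ : μ (R ∩ {s | 0 < ν.rnDeriv μ s}) = 0 := by
        refine measure_mono_null ?_ hmax'
        intro x hx
        exact ⟨hx.2, fun hxP => hx.1.1 hxP⟩
      have hae : ∀ᵐ x ∂μ, x ∈ R → ν.rnDeriv μ x = 0 := by
        rw [MeasureTheory.ae_iff]
        refine measure_mono_null ?_ hRZ
        intro x hx
        simp only [Set.mem_setOf_eq] at hx
        push_neg at hx
        exact ⟨hx.1, pos_iff_ne_zero.mpr hx.2⟩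
      have hwd : μ.withDensity (ν.rnDeriv μ) = ν := Measure.withDensity_rnDeriv_eq ν μ hνac
      have hνR : ν R = ∫⁻ x in R, ν.rnDeriv μ x ∂μ := by
        conv_lhs => rw [← hwd]
        rw [withDensity_apply _ hRmeas]
      have hνR0 : ν R = 0 := by
        rw [hνR]
        exact (setLIntegral_eq_zero_iff hRmeas (Measure.measurable_rnDeriv ν μ)).mpr hae
      exact hnuR hνR0
  -- conclusion
  refine ⟨W', fun k => (hW'C k).1, fun k => (hW'C k).2.2, ?_⟩
  have hsd : symmDiff Pᶜ (⋃ k, W' k) = (Pᶜ \ U) ∪ (U \ Pᶜ) := by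
    rw [Set.symmDiff_def]
  rw [hsd]
  refine measure_union_null hRnull ?_
  rw [Set.diff_eq_empty.mpr hUsub]
  simp
end

section
/- (Koopman–von Neumann lemma, continuous multiparameter case.) Let f : ℝ^d → ℝ be measurable, nonnegative, and bounded: 0 ≤ f(t) ≤ M < ∞ for all t ∈ ℝ^d. Then lim_{T→∞} (2T)^{-d} ∫_{(−T,T]^d} f(t) dt = 0 if and only if there exists a measurable set D ⊆ ℝ^d of density one such that f(t_n) → 0 as n → ∞ for every sequence (t_n)_{n∈ℕ} in D with ‖t_n‖_∞ → ∞. -/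
open MeasureTheory Filter Set

namespace KvN

variable {d : ℕ}

/-- The box `(-T, T]^d`. -/
def Q (d : ℕ) (T : ℝ) : Set (Fin d → ℝ) := Set.univ.pi fun _ : Fin d => Set.Ioc (-T) T

lemma measQ (T : ℝ) : MeasurableSet (Q d T) :=
  MeasurableSet.univ_pi fun _ => measurableSet_Ioc

lemma volQ (T : ℝ) : volume (Q d T) = (ENNReal.ofReal (2 * T)) ^ d := by
  rw [Q, volume_pi_pi]
  simp [Real.volume_Ioc, two_mul, sub_neg_eq_add]

lemma volQ_ne_top (T : ℝ) : volume (Q d T) ≠ ⊤ := by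
  rw [volQ]; exact (ENNReal.pow_lt_top ENNReal.ofReal_lt_top).ne

lemma volQ_toReal {T : ℝ} (hT : 0 ≤ T) : (volume (Q d T)).toReal = (2 * T) ^ d := by
  rw [volQ, ENNReal.toReal_pow, ENNReal.toReal_ofReal (by linarith)]

lemma Qmono {T T' : ℝ} (h : T ≤ T') : Q d T ⊆ Q d T' :=
  Set.pi_mono fun _ _ => Set.Ioc_subset_Ioc (neg_le_neg h) h

lemma norm_le_of_mem_Q {T : ℝ} (hT : 0 ≤ T) {t : Fin d → ℝ} (ht : t ∈ Q d T) : ‖t‖ ≤ T := by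
  rw [pi_norm_le_iff_of_nonneg hT]
  intro i
  have := ht i (Set.mem_univ i)
  rw [Real.norm_eq_abs, abs_le]
  exact ⟨(this.1).le, this.2⟩

lemma mem_Q_of_norm_lt {T : ℝ} {t : Fin d → ℝ} (ht : ‖t‖ < T) : t ∈ Q d T := by
  intro i _
  have h := (norm_le_pi_norm t i).trans_lt ht
  rw [Real.norm_eq_abs, abs_lt] at h
  exact ⟨h.1, h.2.le⟩

lemma integrableOn_of_bdd {f : (Fin d → ℝ) → ℝ} {M : ℝ} (hm : Measurable f)
    (h0 : ∀ t, 0 ≤ f t) (hM : ∀ t, f t ≤ M) {s : Set (Fin d → ℝ)} (hs : volume s ≠ ⊤) :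
    IntegrableOn f s volume :=
  Measure.integrableOn_of_bounded hs hm.aestronglyMeasurable
    (ae_of_all _ fun t => by rw [Real.norm_eq_abs, abs_of_nonneg (h0 t)]; exact hM t)

lemma forward {f : (Fin d → ℝ) → ℝ} {M : ℝ}
    (hfmeas : Measurable f) (hf0 : ∀ t, 0 ≤ f t) (hfM : ∀ t, f t ≤ M)
    (h : Tendsto (fun T : ℝ => ((2 * T) ^ d)⁻¹ * ∫ t in Q d T, f t) atTop (nhds 0)) :
    ∃ D : Set (Fin d → ℝ), MeasurableSet D ∧
      Tendsto (fun T : ℝ => (volume (Dᶜ ∩ Q d T)).toReal / (2 * T) ^ d) atTop (nhds 0) ∧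
      ∀ tseq : ℕ → (Fin d → ℝ), (∀ n, tseq n ∈ D) →
        Tendsto (fun n => ‖tseq n‖) atTop atTop →
        Tendsto (fun n => f (tseq n)) atTop (nhds 0) := by
  classical
  set E : ℕ → Set (Fin d → ℝ) := fun k => {t | 1 / ((k : ℝ) + 1) ≤ f t} with hE
  have hEmeas : ∀ k, MeasurableSet (E k) := fun k => measurableSet_le measurable_const hfmeas
  set δ : ℕ → ℝ → ℝ := fun k T => (volume (E k ∩ Q d T)).toReal / (2 * T) ^ d with hδ
  have hδ0 : ∀ k : ℕ, ∀ T : ℝ, 1 ≤ T → 0 ≤ δ k T := by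
    intro k T hT
    have hT0 : (0:ℝ) < T := lt_of_lt_of_le one_pos hT
    exact div_nonneg ENNReal.toReal_nonneg (by positivity)
  have key : ∀ k : ℕ, ∀ T : ℝ, 1 ≤ T →
      δ k T ≤ ((k : ℝ) + 1) * (((2 * T) ^ d)⁻¹ * ∫ t in Q d T, f t) := by
    intro k T hT
    have hT0 : (0:ℝ) < T := lt_of_lt_of_le one_pos hT
    have h2T : (0:ℝ) < (2 * T) ^ d := by positivity
    have hint : IntegrableOn f (Q d T) volume :=
      integrableOn_of_bdd hfmeas hf0 hfM (volQ_ne_top T)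
    have markov := mul_meas_ge_le_integral_of_nonneg (μ := volume.restrict (Q d T))
      (ae_of_all _ hf0) hint (1 / ((k : ℝ) + 1))
    change 1 / ((k : ℝ) + 1) * ((volume.restrict (Q d T)) (E k)).toReal ≤ _ at markov
    rw [Measure.restrict_apply (hEmeas k)] at markov
    have hk1 : (0:ℝ) < (k : ℝ) + 1 := by positivity
    have h2 : (volume (E k ∩ Q d T)).toReal ≤ ((k : ℝ) + 1) * ∫ t in Q d T, f t := by
      have := mul_le_mul_of_nonneg_left markov hk1.le
      calc (volume (E k ∩ Q d T)).toReal
          = ((k : ℝ) + 1) * (1 / ((k : ℝ) + 1) * (volume (E k ∩ Q d T)).toReal) := by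
            field_simp
        _ ≤ ((k : ℝ) + 1) * ∫ t in Q d T, f t := this
    calc δ k T = (volume (E k ∩ Q d T)).toReal * ((2 * T) ^ d)⁻¹ := div_eq_mul_inv _ _
      _ ≤ (((k : ℝ) + 1) * ∫ t in Q d T, f t) * ((2 * T) ^ d)⁻¹ :=
          mul_le_mul_of_nonneg_right h2 (inv_nonneg.2 h2T.le)
      _ = ((k : ℝ) + 1) * (((2 * T) ^ d)⁻¹ * ∫ t in Q d T, f t) := by ring
  have hδtend : ∀ k : ℕ, Tendsto (fun T => δ k T) atTop (nhds 0) := by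
    intro k
    apply squeeze_zero' (eventually_atTop.2 ⟨1, fun T hT => hδ0 k T hT⟩)
      (eventually_atTop.2 ⟨1, fun T hT => key k T hT⟩)
    simpa using h.const_mul ((k : ℝ) + 1)
  have hsum : ∀ k : ℕ, Tendsto (fun T => ∑ j ∈ Finset.range (k + 1), δ j T) atTop (nhds 0) := by
    intro k
    have := tendsto_finset_sum (Finset.range (k + 1)) (fun j _ => hδtend j)
    simpa using this
  have hSex : ∀ k : ℕ, ∃ S : ℝ, ∀ T : ℝ, S ≤ T →
      ∑ j ∈ Finset.range (k + 1), δ j T ≤ 1 / ((k : ℝ) + 1) := by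
    intro k
    have hpos : (0:ℝ) < 1 / ((k : ℝ) + 1) := by positivity
    have := (hsum k).eventually (gt_mem_nhds hpos)
    obtain ⟨S, hS⟩ := eventually_atTop.1 this
    exact ⟨S, fun T hT => (hS T hT).le⟩
  choose S hSspec using hSex
  set Tk : ℕ → ℝ := fun k => (k : ℝ) + ∑ j ∈ Finset.range (k + 1), max (S j) 0 + 1 with hTk
  have hTk_ge_nat : ∀ k : ℕ, (k : ℝ) ≤ Tk k := by
    intro k
    have hs : (0:ℝ) ≤ ∑ j ∈ Finset.range (k + 1), max (S j) 0 :=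
      Finset.sum_nonneg fun j _ => le_max_right _ _
    simp only [hTk]; linarith
  have hTk_nonneg : ∀ k : ℕ, (0:ℝ) ≤ Tk k := fun k => le_trans (Nat.cast_nonneg k) (hTk_ge_nat k)
  have hTk_ge_S : ∀ k : ℕ, S k ≤ Tk k := by
    intro k
    have h1 : max (S k) 0 ≤ ∑ j ∈ Finset.range (k + 1), max (S j) 0 :=
      Finset.single_le_sum (f := fun j => max (S j) 0) (fun j _ => le_max_right _ _)
        (Finset.self_mem_range_succ k)
    have h2 : S k ≤ max (S k) 0 := le_max_left _ _
    have h3 : (0:ℝ) ≤ (k : ℝ) := Nat.cast_nonneg k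
    simp only [hTk]; linarith
  refine ⟨(⋃ k, E k \ Q d (Tk k))ᶜ,
    (MeasurableSet.iUnion fun k => (hEmeas k).diff (measQ _)).compl, ?_, ?_⟩
  · -- density-zero of the complement
    rw [NormedAddCommGroup.tendsto_nhds_zero]
    intro ε hε
    obtain ⟨k₀, hk₀⟩ := exists_nat_gt (1 / ε)
    have hεk : 1 / ((k₀ : ℝ) + 1) < ε := by
      have h1 : (0:ℝ) < (k₀ : ℝ) + 1 := by positivity
      rw [div_lt_iff₀ h1]
      have h2 : 1 < (k₀ : ℝ) * ε := by
        have := (div_lt_iff₀ hε).1 hk₀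
        linarith
      nlinarith
    filter_upwards [eventually_ge_atTop (max (Tk k₀) 1)] with T hT
    have hT1 : (1:ℝ) ≤ T := le_trans (le_max_right _ _) hT
    have hT0 : (0:ℝ) < T := lt_of_lt_of_le one_pos hT1
    have h2T : (0:ℝ) < (2 * T) ^ d := by positivity
    have hTk₀ : Tk k₀ ≤ T := le_trans (le_max_left _ _) hT
    set m := Nat.findGreatest (fun k => Tk k ≤ T) ⌈T⌉₊ with hm
    have hle_ceil : ∀ j : ℕ, Tk j ≤ T → j ≤ ⌈T⌉₊ := by
      intro j hj
      have h1 : (j : ℝ) ≤ T := le_trans (hTk_ge_nat j) hj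
      have h2 : (j : ℝ) ≤ (⌈T⌉₊ : ℝ) := h1.trans (Nat.le_ceil T)
      exact_mod_cast h2
    have hmem : ∀ j : ℕ, Tk j ≤ T → j ≤ m := by
      intro j hj
      by_contra hc
      push_neg at hc
      exact Nat.findGreatest_is_greatest hc (hle_ceil j hj) hj
    have hmk₀ : k₀ ≤ m := hmem k₀ hTk₀
    have hTm : Tk m ≤ T := Nat.findGreatest_spec (P := fun k => Tk k ≤ T) (hle_ceil k₀ hTk₀) hTk₀
    have hsub : (⋃ k, E k \ Q d (Tk k))ᶜᶜ ∩ Q d T ⊆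
        ⋃ j ∈ Finset.range (m + 1), (E j ∩ Q d T) := by
      rintro x ⟨hx1, hx2⟩
      rw [compl_compl] at hx1
      obtain ⟨k, hk⟩ := mem_iUnion.1 hx1
      have hkm : k ≤ m := by
        by_contra hc
        push_neg at hc
        have hTkk : T < Tk k := by
          by_contra h'
          push_neg at h'
          exact absurd (hmem k h') (by omega)
        exact hk.2 (Qmono hTkk.le hx2)
      exact mem_biUnion (Finset.mem_range.2 (Nat.lt_succ_of_le hkm)) ⟨hk.1, hx2⟩
    have hfin : ∀ j : ℕ, volume (E j ∩ Q d T) ≠ ⊤ := fun j =>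
      ne_top_of_le_ne_top (volQ_ne_top T) (measure_mono inter_subset_right)
    have hμ : volume ((⋃ k, E k \ Q d (Tk k))ᶜᶜ ∩ Q d T) ≤
        ∑ j ∈ Finset.range (m + 1), volume (E j ∩ Q d T) :=
      (measure_mono hsub).trans (measure_biUnion_finset_le _ _)
    have hsne : (∑ j ∈ Finset.range (m + 1), volume (E j ∩ Q d T)) ≠ ⊤ :=
      (ENNReal.sum_lt_top.2 fun j _ => (hfin j).lt_top).ne
    have htR : (volume ((⋃ k, E k \ Q d (Tk k))ᶜᶜ ∩ Q d T)).toReal ≤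
        ∑ j ∈ Finset.range (m + 1), (volume (E j ∩ Q d T)).toReal := by
      calc (volume ((⋃ k, E k \ Q d (Tk k))ᶜᶜ ∩ Q d T)).toReal
          ≤ (∑ j ∈ Finset.range (m + 1), volume (E j ∩ Q d T)).toReal :=
            ENNReal.toReal_mono hsne hμ
        _ = ∑ j ∈ Finset.range (m + 1), (volume (E j ∩ Q d T)).toReal :=
            ENNReal.toReal_sum fun j _ => hfin j
    have hfrac : (volume ((⋃ k, E k \ Q d (Tk k))ᶜᶜ ∩ Q d T)).toReal / (2 * T) ^ d ≤
        ∑ j ∈ Finset.range (m + 1), δ j T := by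
      rw [hδ, ← Finset.sum_div]
      gcongr
    have hsum_le : ∑ j ∈ Finset.range (m + 1), δ j T ≤ 1 / ((m : ℝ) + 1) :=
      hSspec m T (le_trans (hTk_ge_S m) hTm)
    have hmono : 1 / ((m : ℝ) + 1) ≤ 1 / ((k₀ : ℝ) + 1) := by
      apply one_div_le_one_div_of_le (by positivity)
      have : (k₀ : ℝ) ≤ (m : ℝ) := by exact_mod_cast hmk₀
      linarith
    have hnn : 0 ≤ (volume ((⋃ k, E k \ Q d (Tk k))ᶜᶜ ∩ Q d T)).toReal / (2 * T) ^ d :=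
      div_nonneg ENNReal.toReal_nonneg h2T.le
    rw [Real.norm_eq_abs, abs_of_nonneg hnn]
    calc (volume ((⋃ k, E k \ Q d (Tk k))ᶜᶜ ∩ Q d T)).toReal / (2 * T) ^ d
        ≤ ∑ j ∈ Finset.range (m + 1), δ j T := hfrac
      _ ≤ 1 / ((m : ℝ) + 1) := hsum_le
      _ ≤ 1 / ((k₀ : ℝ) + 1) := hmono
      _ < ε := hεk
  · -- sequences
    intro tseq htD htnorm
    rw [NormedAddCommGroup.tendsto_nhds_zero]
    intro ε hε
    obtain ⟨k₀, hk₀⟩ := exists_nat_gt (1 / ε)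
    have hεk : 1 / ((k₀ : ℝ) + 1) < ε := by
      have h1 : (0:ℝ) < (k₀ : ℝ) + 1 := by positivity
      rw [div_lt_iff₀ h1]
      have h2 : 1 < (k₀ : ℝ) * ε := by
        have := (div_lt_iff₀ hε).1 hk₀
        linarith
      nlinarith
    filter_upwards [htnorm.eventually (eventually_gt_atTop (Tk k₀))] with n hn
    have hnotQ : tseq n ∉ Q d (Tk k₀) := fun hc =>
      absurd (norm_le_of_mem_Q (hTk_nonneg k₀) hc) (not_le.2 hn)
    have hnotE : tseq n ∉ E k₀ := by
      intro hE'
      exact htD n (mem_iUnion.2 ⟨k₀, hE', hnotQ⟩)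
    have hlt : f (tseq n) < 1 / ((k₀ : ℝ) + 1) := not_le.1 hnotE
    rw [Real.norm_eq_abs, abs_of_nonneg (hf0 _)]
    linarith


lemma backward (hd : 0 < d) {f : (Fin d → ℝ) → ℝ} {M : ℝ}
    (hfmeas : Measurable f) (hf0 : ∀ t, 0 ≤ f t) (hfM : ∀ t, f t ≤ M)
    {D : Set (Fin d → ℝ)} (hDmeas : MeasurableSet D)
    (hdens : Tendsto (fun T : ℝ => (volume (Dᶜ ∩ Q d T)).toReal / (2 * T) ^ d) atTop (nhds 0))
    (hseq : ∀ tseq : ℕ → (Fin d → ℝ), (∀ n, tseq n ∈ D) →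
        Tendsto (fun n => ‖tseq n‖) atTop atTop →
        Tendsto (fun n => f (tseq n)) atTop (nhds 0)) :
    Tendsto (fun T : ℝ => ((2 * T) ^ d)⁻¹ * ∫ t in Q d T, f t) atTop (nhds 0) := by
  classical
  have hM0 : (0:ℝ) ≤ M := (hf0 (fun _ => 0)).trans (hfM (fun _ => 0))
  have claim : ∀ ε : ℝ, 0 < ε → ∃ R : ℝ, ∀ t ∈ D, R ≤ ‖t‖ → f t < ε := by
    intro ε hε
    by_contra hc
    push_neg at hc
    choose t ht1 ht2 ht3 using fun n : ℕ => hc (n : ℝ)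
    have hnorm : Tendsto (fun n => ‖t n‖) atTop atTop :=
      tendsto_atTop_mono ht2 tendsto_natCast_atTop_atTop
    have htend := hseq t ht1 hnorm
    obtain ⟨n, hn⟩ := (htend.eventually (gt_mem_nhds hε)).exists
    exact absurd (ht3 n) (not_le.2 hn)
  rw [NormedAddCommGroup.tendsto_nhds_zero]
  intro ε hε
  obtain ⟨R, hR⟩ := claim (ε / 4) (by positivity)
  set R' : ℝ := max R 1 with hR'
  have hR'1 : (1:ℝ) ≤ R' := le_max_right _ _
  have hR'0 : (0:ℝ) < R' := lt_of_lt_of_le one_pos hR'1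
  -- eventual smallness of the boundary terms
  have hpow : Tendsto (fun T : ℝ => (2 * T) ^ d) atTop atTop := by
    have h2t : Tendsto (fun T : ℝ => 2 * T) atTop atTop :=
      Tendsto.const_mul_atTop two_pos tendsto_id
    exact (tendsto_pow_atTop hd.ne').comp h2t
  have hinv : Tendsto (fun T : ℝ => M * (2 * R') ^ d * ((2 * T) ^ d)⁻¹) atTop (nhds 0) := by
    have := (tendsto_inv_atTop_zero.comp hpow).const_mul (M * (2 * R') ^ d)
    simpa using this
  have ev2 := hinv.eventually (gt_mem_nhds (show (0:ℝ) < ε / 4 by positivity))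
  have hdensM : Tendsto (fun T : ℝ => M * ((volume (Dᶜ ∩ Q d T)).toReal / (2 * T) ^ d))
      atTop (nhds 0) := by simpa using hdens.const_mul M
  have ev3 := hdensM.eventually (gt_mem_nhds (show (0:ℝ) < ε / 4 by positivity))
  filter_upwards [eventually_ge_atTop R', eventually_ge_atTop (1:ℝ), ev2, ev3] with T hTR hT1 h2 h3
  have hT0 : (0:ℝ) < T := lt_of_lt_of_le one_pos hT1
  have h2T : (0:ℝ) < (2 * T) ^ d := by positivity
  have hfint : IntegrableOn f (Q d T) volume :=
    integrableOn_of_bdd hfmeas hf0 hfM (volQ_ne_top T)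
  have hiconst : IntegrableOn (fun _ : Fin d → ℝ => ε / 4) (Q d T) volume :=
    integrableOn_const (volQ_ne_top T)
  have hiM : IntegrableOn (fun _ : Fin d → ℝ => M) (Q d T) volume :=
    integrableOn_const (volQ_ne_top T)
  have hind1 : IntegrableOn ((Q d R').indicator fun _ => M) (Q d T) volume :=
    hiM.indicator (measQ R')
  have hind2 : IntegrableOn (Dᶜ.indicator fun _ => M) (Q d T) volume :=
    hiM.indicator hDmeas.compl
  set g : (Fin d → ℝ) → ℝ :=
    fun t => ε / 4 + (Q d R').indicator (fun _ => M) t + Dᶜ.indicator (fun _ => M) t with hg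
  have hgint : IntegrableOn g (Q d T) volume := (hiconst.add hind1).add hind2
  have hpt : ∀ t ∈ Q d T, f t ≤ g t := by
    intro t _
    have i1 : (0:ℝ) ≤ (Q d R').indicator (fun _ => M) t :=
      Set.indicator_nonneg (fun _ _ => hM0) t
    have i2 : (0:ℝ) ≤ Dᶜ.indicator (fun _ => M) t :=
      Set.indicator_nonneg (fun _ _ => hM0) t
    by_cases htD : t ∈ D
    · by_cases htR2 : ‖t‖ < R'
      · have hmem : t ∈ Q d R' := mem_Q_of_norm_lt htR2
        have e1 : (Q d R').indicator (fun _ => M) t = M := Set.indicator_of_mem hmem _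
        simp only [hg]
        rw [e1]
        linarith [hfM t]
      · push_neg at htR2
        have := hR t htD (le_trans (le_max_left _ _) htR2)
        simp only [hg]
        linarith
    · have e2 : Dᶜ.indicator (fun _ => M) t = M := Set.indicator_of_mem (Set.mem_compl htD) _
      simp only [hg]
      rw [e2]
      linarith [hfM t]
  have hint_le : ∫ t in Q d T, f t ≤ ∫ t in Q d T, g t :=
    setIntegral_mono_on hfint hgint (measQ T) hpt
  -- compute/bound the integral of g
  have hvol1 : (volume (Q d T ∩ Q d R')).toReal ≤ (2 * R') ^ d := by
    rw [← volQ_toReal hR'0.le]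
    exact ENNReal.toReal_mono (volQ_ne_top R') (measure_mono inter_subset_right)
  have hgcalc : ∫ t in Q d T, g t ≤
      ε / 4 * (2 * T) ^ d + M * (2 * R') ^ d + M * (volume (Dᶜ ∩ Q d T)).toReal := by
    have e0 : ∫ t in Q d T, (ε / 4 : ℝ) = ε / 4 * (2 * T) ^ d := by
      rw [setIntegral_const, Measure.real_def, volQ_toReal hT0.le, smul_eq_mul, mul_comm]
    have e1 : ∫ t in Q d T, (Q d R').indicator (fun _ => M) t =
        M * (volume (Q d T ∩ Q d R')).toReal := by
      rw [setIntegral_indicator (measQ R'), setIntegral_const, Measure.real_def, smul_eq_mul, mul_comm]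
    have e2 : ∫ t in Q d T, Dᶜ.indicator (fun _ => M) t =
        M * (volume (Dᶜ ∩ Q d T)).toReal := by
      rw [setIntegral_indicator hDmeas.compl, setIntegral_const, Measure.real_def, smul_eq_mul, mul_comm,
        inter_comm]
    have hsplit : ∫ t in Q d T, g t = (∫ t in Q d T, (ε / 4 : ℝ)) +
        (∫ t in Q d T, (Q d R').indicator (fun _ => M) t) +
        ∫ t in Q d T, Dᶜ.indicator (fun _ => M) t := by
      simp only [hg]
      have A := integral_add (μ := volume.restrict (Q d T)) (hiconst.add hind1) hind2
      have B := integral_add (μ := volume.restrict (Q d T)) hiconst hind1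
      simp only [Pi.add_apply] at A B
      rw [A, B]
    rw [hsplit, e0, e1, e2]
    have : M * (volume (Q d T ∩ Q d R')).toReal ≤ M * (2 * R') ^ d :=
      mul_le_mul_of_nonneg_left hvol1 hM0
    linarith
  have hInonneg : (0:ℝ) ≤ ((2 * T) ^ d)⁻¹ * ∫ t in Q d T, f t :=
    mul_nonneg (inv_nonneg.2 h2T.le) (setIntegral_nonneg (measQ T) fun t _ => hf0 t)
  rw [Real.norm_eq_abs, abs_of_nonneg hInonneg]
  have hbound : ((2 * T) ^ d)⁻¹ * ∫ t in Q d T, f t ≤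
      ε / 4 + M * (2 * R') ^ d * ((2 * T) ^ d)⁻¹ +
        M * ((volume (Dᶜ ∩ Q d T)).toReal / (2 * T) ^ d) := by
    have step1 : ((2 * T) ^ d)⁻¹ * ∫ t in Q d T, f t ≤
        ((2 * T) ^ d)⁻¹ * (ε / 4 * (2 * T) ^ d + M * (2 * R') ^ d +
          M * (volume (Dᶜ ∩ Q d T)).toReal) :=
      mul_le_mul_of_nonneg_left (hint_le.trans hgcalc) (inv_nonneg.2 h2T.le)
    have e : ((2 * T) ^ d)⁻¹ * (ε / 4 * (2 * T) ^ d + M * (2 * R') ^ d +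
          M * (volume (Dᶜ ∩ Q d T)).toReal) =
        ε / 4 + M * (2 * R') ^ d * ((2 * T) ^ d)⁻¹ +
          M * ((volume (Dᶜ ∩ Q d T)).toReal / (2 * T) ^ d) := by
      field_simp
    linarith [step1, e.symm.le, e.le]
  linarith [h2, h3, hbound]

end KvN

open MeasureTheory Filter

/-- Koopman–von Neumann lemma, continuous multiparameter case: for a bounded
nonnegative measurable `f : ℝ^d → ℝ`, the averages `(2T)^{-d} ∫_{(−T,T]^d} f(t) dt` tend to `0`
iff there is a measurable density-one set `D ⊆ ℝ^d` such that `f(t_n) → 0` along every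
sequence in `D` with `‖t_n‖_∞ → ∞`.  (Here `‖·‖` on `Fin d → ℝ` is the sup-norm.) -/
theorem stmt15 (d : ℕ) (hd : 0 < d) (f : (Fin d → ℝ) → ℝ) (M : ℝ)
    (hfmeas : Measurable f) (hf0 : ∀ t, 0 ≤ f t) (hfM : ∀ t, f t ≤ M) :
    Tendsto (fun T : ℝ => ((2 * T) ^ d)⁻¹ *
        ∫ t in Set.univ.pi fun _ : Fin d => Set.Ioc (-T) T, f t)
      atTop (nhds 0)
    ↔
    ∃ D : Set (Fin d → ℝ), MeasurableSet D ∧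
      Tendsto (fun T : ℝ =>
          (volume (Dᶜ ∩ Set.univ.pi fun _ : Fin d => Set.Ioc (-T) T)).toReal / (2 * T) ^ d)
        atTop (nhds 0) ∧
      ∀ tseq : ℕ → (Fin d → ℝ), (∀ n, tseq n ∈ D) →
        Tendsto (fun n => ‖tseq n‖) atTop atTop →
        Tendsto (fun n => f (tseq n)) atTop (nhds 0) := by
  constructor
  · intro h
    exact KvN.forward hfmeas hf0 hfM h
  · rintro ⟨D, hD, hdens, hseq⟩
    exact KvN.backward hd hfmeas hf0 hfM hD hdens hseq
end

section
/- Let P be a probability measure on the product space ℝ^{ℤ^d} (with the product σ-algebra) that is invariant under all shifts θ_τ, where (θ_τ x)(t) := x(t+τ) for τ, t ∈ ℤ^d. Suppose P is positively dependent (associated): for every n ∈ ℕ, all indices t_1,…,t_n ∈ ℤ^d, and all bounded measurable functions g₁, g₂ : ℝ^n → ℝ that are nondecreasing in each coordinate, the covariance under P of g₁(x_{t_1},…,x_{t_n}) and g₂(x_{t_1},…,x_{t_n}) is nonnegative. Then P is ergodic if and only if P is weakly mixing, where P is ergodic if lim_{T→∞} (2T)^{-d} Σ_{τ ∈ (−T,T]^d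 ∩ ℤ^d} P(A ∩ θ_τ(B)) = P(A)P(B) for all measurable A, B, and P is weakly mixing if lim_{T→∞} (2T)^{-d} Σ_{τ ∈ (−T,T]^d ∩ ℤ^d} |P(A ∩ θ_τ(B)) − P(A)P(B)| = 0 for all measurable A, B. -/
open MeasureTheory Filter

namespace S17

/-! ### Averaging infrastructure -/

noncomputable abbrev grid (d T : ℕ) : Finset (Fin d → ℤ) :=
  Fintype.piFinset fun _ : Fin d => Finset.Ioc (-(T : ℤ)) (T : ℤ)

noncomputable abbrev avg (d : ℕ) (f : (Fin d → ℤ) → ℝ) (T : ℕ) : ℝ :=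
  ((2 * T : ℝ) ^ d)⁻¹ * ∑ τ ∈ grid d T, f τ

lemma grid_card (d T : ℕ) : ((grid d T).card : ℝ) = (2 * T : ℝ) ^ d := by
  rw [Fintype.card_piFinset]
  simp only [Int.card_Ioc]
  rw [Finset.prod_const]
  have : ((T:ℤ) - -(T:ℤ)).toNat = 2 * T := by omega
  rw [this, Finset.card_univ, Fintype.card_fin]
  push_cast
  ring

lemma avg_const (d : ℕ) (K : ℝ) {T : ℕ} (hT : 1 ≤ T) : avg d (fun _ => K) T = K := by
  rw [avg, Finset.sum_const, nsmul_eq_mul, grid_card, ← mul_assoc,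
    inv_mul_cancel₀, one_mul]
  positivity

lemma avg_nonneg {d : ℕ} {f : (Fin d → ℤ) → ℝ} (h : ∀ τ, 0 ≤ f τ) (T : ℕ) :
    0 ≤ avg d f T := by
  apply mul_nonneg (by positivity)
  exact Finset.sum_nonneg fun τ _ => h τ

lemma avg_mono {d : ℕ} {f g : (Fin d → ℤ) → ℝ} (h : ∀ τ, f τ ≤ g τ) (T : ℕ) :
    avg d f T ≤ avg d g T := by
  apply mul_le_mul_of_nonneg_left _ (by positivity)
  exact Finset.sum_le_sum fun τ _ => h τ

lemma avg_add (d : ℕ) (f g : (Fin d → ℤ) → ℝ) (T : ℕ) :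
    avg d (fun τ => f τ + g τ) T = avg d f T + avg d g T := by
  rw [avg, Finset.sum_add_distrib, mul_add]

lemma avg_sub (d : ℕ) (f g : (Fin d → ℤ) → ℝ) (T : ℕ) :
    avg d (fun τ => f τ - g τ) T = avg d f T - avg d g T := by
  rw [avg, Finset.sum_sub_distrib, mul_sub]

lemma abs_avg_le (d : ℕ) (f : (Fin d → ℤ) → ℝ) (T : ℕ) :
    |avg d f T| ≤ avg d (fun τ => |f τ|) T := by
  rw [avg, avg, abs_mul, abs_inv, abs_of_nonneg (by positivity : (0:ℝ) ≤ (2*T:ℝ)^d)]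
  exact mul_le_mul_of_nonneg_left (Finset.abs_sum_le_sum_abs _ _) (by positivity)

lemma wlim_zero (d : ℕ) : Tendsto (avg d fun _ => (0:ℝ)) atTop (nhds 0) := by
  have : avg d (fun _ => (0:ℝ)) = fun _ => (0:ℝ) := by
    funext T; simp [avg]
  rw [this]
  exact tendsto_const_nhds

lemma wlim_abs_add {d : ℕ} {f g : (Fin d → ℤ) → ℝ}
    (hf : Tendsto (avg d fun τ => |f τ|) atTop (nhds 0))
    (hg : Tendsto (avg d fun τ => |g τ|) atTop (nhds 0)) :
    Tendsto (avg d fun τ => |f τ + g τ|) atTop (nhds 0) := by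
  apply squeeze_zero (fun T => avg_nonneg (fun τ => abs_nonneg _) T)
    (g := fun T => avg d (fun τ => |f τ| + |g τ|) T)
    (fun T => avg_mono (fun τ => abs_add_le _ _) T)
  have := hf.add hg
  rw [add_zero] at this
  refine this.congr fun T => ?_
  rw [← avg_add]

lemma wlim_approx {d : ℕ} {g : (Fin d → ℤ) → ℝ}
    (h : ∀ ε > (0:ℝ), ∃ f : (Fin d → ℤ) → ℝ,
      Tendsto (avg d fun τ => |f τ|) atTop (nhds 0) ∧ ∀ τ, |g τ - f τ| ≤ ε) :
    Tendsto (avg d fun τ => |g τ|) atTop (nhds 0) := by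
  rw [Metric.tendsto_atTop]
  intro ε hε
  obtain ⟨f, hf, hfg⟩ := h (ε/2) (by linarith)
  rw [Metric.tendsto_atTop] at hf
  obtain ⟨N, hN⟩ := hf (ε/2) (by linarith)
  refine ⟨max N 1, fun T hT => ?_⟩
  have hT1 : 1 ≤ T := le_trans (le_max_right _ _) hT
  have hTN := hN T (le_trans (le_max_left _ _) hT)
  rw [Real.dist_eq, sub_zero] at hTN ⊢
  rw [abs_of_nonneg (avg_nonneg (fun τ => abs_nonneg _) T)] at hTN ⊢
  have h1 : avg d (fun τ => |g τ|) T ≤ avg d (fun τ => |f τ| + ε/2) T := by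
    apply avg_mono
    intro τ
    calc |g τ| = |f τ + (g τ - f τ)| := by ring_nf
    _ ≤ |f τ| + |g τ - f τ| := abs_add_le _ _
    _ ≤ |f τ| + ε/2 := by linarith [hfg τ]
  rw [avg_add, avg_const d (ε/2) hT1] at h1
  linarith

/-! ### The generating π-system of upper cylinder sets -/

def upSets (d : ℕ) : Set (Set ((Fin d → ℤ) → ℝ)) :=
  {s | ∃ (n : ℕ) (t : Fin n → Fin d → ℤ) (a : Fin n → ℝ),
    s = {x | ∀ i, a i < x (t i)}}

lemma isPiSystem_upSets (d : ℕ) : IsPiSystem (upSets d) := by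
  rintro s ⟨n, t, a, rfl⟩ u ⟨m, v, b, rfl⟩ -
  refine ⟨n + m, Fin.append t v, Fin.append a b, ?_⟩
  ext x
  simp only [Set.mem_inter_iff, Set.mem_setOf_eq]
  constructor
  · rintro ⟨h1, h2⟩ k
    refine Fin.addCases (fun i => ?_) (fun j => ?_) k
    · rw [Fin.append_left, Fin.append_left]; exact h1 i
    · rw [Fin.append_right, Fin.append_right]; exact h2 j
  · intro h
    constructor
    · intro i
      have := h (Fin.castAdd m i)
      rwa [Fin.append_left, Fin.append_left] at this
    · intro j
      have := h (Fin.natAdd n j)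
      rwa [Fin.append_right, Fin.append_right] at this

lemma measurableSet_upSets {d : ℕ} {s : Set ((Fin d → ℤ) → ℝ)} (hs : s ∈ upSets d) :
    MeasurableSet s := by
  obtain ⟨n, t, a, rfl⟩ := hs
  have : {x : (Fin d → ℤ) → ℝ | ∀ i, a i < x (t i)} =
      ⋂ i, (fun x : (Fin d → ℤ) → ℝ => x (t i)) ⁻¹' Set.Ioi (a i) := by
    ext x; simp [Set.mem_iInter]
  rw [this]
  exact MeasurableSet.iInter fun i => (measurable_pi_apply (t i)) measurableSet_Ioi

lemma pi_eq_generateFrom (d : ℕ) :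
    (inferInstance : MeasurableSpace ((Fin d → ℤ) → ℝ)) =
      MeasurableSpace.generateFrom (upSets d) := by
  apply le_antisymm
  · have hpi : (inferInstance : MeasurableSpace ((Fin d → ℤ) → ℝ)) =
        ⨆ t, MeasurableSpace.comap (fun x : (Fin d → ℤ) → ℝ => x t)
          (borel ℝ) := by
      rw [← BorelSpace.measurable_eq (α := ℝ)]
      rfl
    rw [hpi]
    apply iSup_le
    intro t
    rw [borel_eq_generateFrom_Ioi, MeasurableSpace.comap_generateFrom]
    apply MeasurableSpace.generateFrom_le
    rintro s ⟨u, ⟨a, rfl⟩, rfl⟩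
    apply MeasurableSpace.measurableSet_generateFrom
    refine ⟨1, fun _ => t, fun _ => a, ?_⟩
    ext x
    simp [Fin.forall_fin_one]
  · exact MeasurableSpace.generateFrom_le fun s hs => measurableSet_upSets hs

/-! ### The shift maps -/

def sh {d : ℕ} (τ : Fin d → ℤ) (x : (Fin d → ℤ) → ℝ) : (Fin d → ℤ) → ℝ :=
  fun t => x (t + τ)

lemma measurable_sh {d : ℕ} (τ : Fin d → ℤ) : Measurable (sh τ) :=
  measurable_pi_lambda _ fun t => measurable_pi_apply (t + τ)

def shEquiv {d : ℕ} (τ : Fin d → ℤ) : ((Fin d → ℤ) → ℝ) ≃ ((Fin d → ℤ) → ℝ) where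
  toFun := sh τ
  invFun := sh (-τ)
  left_inv x := by funext t; simp [sh]
  right_inv x := by funext t; simp [sh]

noncomputable def cfn {d : ℕ} (P : Measure ((Fin d → ℤ) → ℝ))
    (θ : (Fin d → ℤ) → ((Fin d → ℤ) → ℝ) → ((Fin d → ℤ) → ℝ))
    (A B : Set ((Fin d → ℤ) → ℝ)) (τ : Fin d → ℤ) : ℝ :=
  (P (A ∩ θ τ '' B)).toReal - (P A).toReal * (P B).toReal

set_option linter.unusedSectionVars false

section

variable {d : ℕ} {P : Measure ((Fin d → ℤ) → ℝ)} [IsProbabilityMeasure P]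
  {θ : (Fin d → ℤ) → ((Fin d → ℤ) → ℝ) → ((Fin d → ℤ) → ℝ)}

lemma theta_eq (hθ : ∀ τ x t, θ τ x t = x (t + τ)) (τ : Fin d → ℤ) : θ τ = sh τ := by
  funext x t; exact hθ τ x t

lemma image_theta (hθ : ∀ τ x t, θ τ x t = x (t + τ)) (τ : Fin d → ℤ)
    (B : Set ((Fin d → ℤ) → ℝ)) : θ τ '' B = sh (-τ) ⁻¹' B := by
  rw [theta_eq hθ]
  exact (shEquiv τ).image_eq_preimage_symm B

lemma measurableSet_image_theta (hθ : ∀ τ x t, θ τ x t = x (t + τ)) (τ : Fin d → ℤ)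
    {B : Set ((Fin d → ℤ) → ℝ)} (hB : MeasurableSet B) : MeasurableSet (θ τ '' B) := by
  rw [image_theta hθ]
  exact measurable_sh (-τ) hB

lemma measure_image_theta (hθ : ∀ τ x t, θ τ x t = x (t + τ))
    (hinv : ∀ τ, P.map (θ τ) = P) (τ : Fin d → ℤ) {B : Set ((Fin d → ℤ) → ℝ)}
    (hB : MeasurableSet B) : P (θ τ '' B) = P B := by
  rw [image_theta hθ, ← Measure.map_apply (measurable_sh (-τ)) hB,
    ← theta_eq hθ, hinv]

/-! ### Algebra of the covariance function `cfn` -/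

lemma toReal_diff' {s t : Set ((Fin d → ℤ) → ℝ)} (ht : MeasurableSet t) :
    (P (s \ t)).toReal = (P s).toReal - (P (s ∩ t)).toReal := by
  have h := measure_inter_add_diff (μ := P) s ht
  have := ENNReal.toReal_add (measure_ne_top P (s ∩ t)) (measure_ne_top P (s \ t))
  rw [h] at this
  linarith

lemma toReal_mono' {s t : Set ((Fin d → ℤ) → ℝ)} (h : s ⊆ t) :
    (P s).toReal ≤ (P t).toReal :=
  ENNReal.toReal_mono (measure_ne_top P t) (measure_mono h)

lemma toReal_subadd' {s t u : Set ((Fin d → ℤ) → ℝ)} (h : s ⊆ t ∪ u) :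
    (P s).toReal ≤ (P t).toReal + (P u).toReal := by
  calc (P s).toReal ≤ (P (t ∪ u)).toReal := toReal_mono' h
  _ ≤ _ := by
    rw [← ENNReal.toReal_add (measure_ne_top P t) (measure_ne_top P u)]
    exact ENNReal.toReal_mono (by finiteness) (measure_union_le t u)

lemma toReal_le_one' (s : Set ((Fin d → ℤ) → ℝ)) : (P s).toReal ≤ 1 := by
  rw [← ENNReal.toReal_one]
  exact ENNReal.toReal_mono (by simp) prob_le_one

variable (hθ : ∀ τ x t, θ τ x t = x (t + τ)) (hinv : ∀ τ, P.map (θ τ) = P)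

include hθ hinv

lemma cfn_empty_left (B : Set ((Fin d → ℤ) → ℝ)) (τ : Fin d → ℤ) :
    cfn P θ ∅ B τ = 0 := by simp [cfn]

lemma cfn_empty_right (A : Set ((Fin d → ℤ) → ℝ)) (τ : Fin d → ℤ) :
    cfn P θ A ∅ τ = 0 := by simp [cfn]

lemma cfn_compl_left {A B : Set ((Fin d → ℤ) → ℝ)} (hA : MeasurableSet A)
    (hB : MeasurableSet B) (τ : Fin d → ℤ) :
    cfn P θ Aᶜ B τ = - cfn P θ A B τ := by
  have hS := measurableSet_image_theta hθ τ hB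
  have h1 : Aᶜ ∩ θ τ '' B = (θ τ '' B) \ A := by
    rw [Set.diff_eq, Set.inter_comm]
  have h2 : (P Aᶜ).toReal = 1 - (P A).toReal := by
    rw [prob_compl_eq_one_sub hA, ENNReal.toReal_sub_of_le prob_le_one (by simp),
      ENNReal.toReal_one]
  have h3 : (P (θ τ '' B ∩ A)).toReal = (P (A ∩ θ τ '' B)).toReal := by
    rw [Set.inter_comm]
  have h4 := toReal_diff' (P := P) (s := θ τ '' B) hA
  have h5 := measure_image_theta hθ hinv τ hB
  rw [cfn, cfn, h1, h4, h3, h2, h5]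
  ring

lemma cfn_compl_right {A B : Set ((Fin d → ℤ) → ℝ)} (hA : MeasurableSet A)
    (hB : MeasurableSet B) (τ : Fin d → ℤ) :
    cfn P θ A Bᶜ τ = - cfn P θ A B τ := by
  have hS := measurableSet_image_theta hθ τ hB
  have h1 : θ τ '' Bᶜ = (θ τ '' B)ᶜ := by
    rw [theta_eq hθ]
    exact Set.image_compl_eq (shEquiv τ).bijective
  have h2 : A ∩ (θ τ '' B)ᶜ = A \ θ τ '' B := by rw [Set.diff_eq]
  have h3 : (P Bᶜ).toReal = 1 - (P B).toReal := by
    rw [prob_compl_eq_one_sub hB, ENNReal.toReal_sub_of_le prob_le_one (by simp),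
      ENNReal.toReal_one]
  rw [cfn, cfn, h1, h2, toReal_diff' hS, h3]
  ring

lemma cfn_union_left {A₁ A₂ B : Set ((Fin d → ℤ) → ℝ)} (h12 : Disjoint A₁ A₂)
    (hA₂ : MeasurableSet A₂) (hB : MeasurableSet B) (τ : Fin d → ℤ) :
    cfn P θ (A₁ ∪ A₂) B τ = cfn P θ A₁ B τ + cfn P θ A₂ B τ := by
  have hS := measurableSet_image_theta hθ τ hB
  have h1 : (A₁ ∪ A₂) ∩ θ τ '' B = (A₁ ∩ θ τ '' B) ∪ (A₂ ∩ θ τ '' B) :=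
    Set.union_inter_distrib_right _ _ _
  have h2 : P ((A₁ ∩ θ τ '' B) ∪ (A₂ ∩ θ τ '' B)) =
      P (A₁ ∩ θ τ '' B) + P (A₂ ∩ θ τ '' B) :=
    measure_union (h12.mono Set.inter_subset_left Set.inter_subset_left) (hA₂.inter hS)
  have h3 : P (A₁ ∪ A₂) = P A₁ + P A₂ := measure_union h12 hA₂
  rw [cfn, cfn, cfn, h1, h2, h3,
    ENNReal.toReal_add (measure_ne_top _ _) (measure_ne_top _ _),
    ENNReal.toReal_add (measure_ne_top _ _) (measure_ne_top _ _)]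
  ring

lemma cfn_union_right {A B₁ B₂ : Set ((Fin d → ℤ) → ℝ)} (h12 : Disjoint B₁ B₂)
    (hA : MeasurableSet A) (hB₂ : MeasurableSet B₂) (τ : Fin d → ℤ) :
    cfn P θ A (B₁ ∪ B₂) τ = cfn P θ A B₁ τ + cfn P θ A B₂ τ := by
  have hS₂ := measurableSet_image_theta hθ τ hB₂
  have hdisj : Disjoint (θ τ '' B₁) (θ τ '' B₂) := by
    rw [theta_eq hθ]
    exact (Set.disjoint_image_iff (shEquiv τ).injective).mpr h12
  have h1 : A ∩ θ τ '' (B₁ ∪ B₂) = (A ∩ θ τ '' B₁) ∪ (A ∩ θ τ '' B₂) := by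
    rw [Set.image_union, Set.inter_union_distrib_left]
  have h2 : P ((A ∩ θ τ '' B₁) ∪ (A ∩ θ τ '' B₂)) =
      P (A ∩ θ τ '' B₁) + P (A ∩ θ τ '' B₂) :=
    measure_union (hdisj.mono Set.inter_subset_right Set.inter_subset_right) (hA.inter hS₂)
  have h3 : P (B₁ ∪ B₂) = P B₁ + P B₂ := measure_union h12 hB₂
  rw [cfn, cfn, cfn, h1, h2, h3,
    ENNReal.toReal_add (measure_ne_top _ _) (measure_ne_top _ _),
    ENNReal.toReal_add (measure_ne_top _ _) (measure_ne_top _ _)]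
  ring

lemma cfn_approx_left {A A' B : Set ((Fin d → ℤ) → ℝ)} (hsub : A' ⊆ A)
    (τ : Fin d → ℤ) :
    |cfn P θ A B τ - cfn P θ A' B τ| ≤ 2 * (P (A \ A')).toReal := by
  set S := θ τ '' B
  have e1 : (P (A' ∩ S)).toReal ≤ (P (A ∩ S)).toReal :=
    toReal_mono' (Set.inter_subset_inter_left _ hsub)
  have e2 : (P (A ∩ S)).toReal ≤ (P (A' ∩ S)).toReal + (P (A \ A')).toReal := by
    apply toReal_subadd'
    intro x hx
    by_cases h : x ∈ A'
    · exact Or.inl ⟨h, hx.2⟩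
    · exact Or.inr ⟨hx.1, h⟩
  have e3 : (P A').toReal ≤ (P A).toReal := toReal_mono' hsub
  have e4 : (P A).toReal ≤ (P A').toReal + (P (A \ A')).toReal := by
    apply toReal_subadd'
    intro x hx
    by_cases h : x ∈ A'
    · exact Or.inl h
    · exact Or.inr ⟨hx, h⟩
  have e5 : (P B).toReal ≤ 1 := toReal_le_one' B
  have e6 : (0:ℝ) ≤ (P B).toReal := ENNReal.toReal_nonneg
  rw [cfn, cfn, abs_le]
  constructor <;> nlinarith

lemma cfn_approx_right {A B B' : Set ((Fin d → ℤ) → ℝ)} (hsub : B' ⊆ B)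
    (hB : MeasurableSet B) (hB' : MeasurableSet B') (τ : Fin d → ℤ) :
    |cfn P θ A B τ - cfn P θ A B' τ| ≤ 2 * (P (B \ B')).toReal := by
  have himg : θ τ '' B \ θ τ '' B' = θ τ '' (B \ B') := by
    rw [theta_eq hθ]
    exact (Set.image_diff (shEquiv τ).injective _ _).symm
  have hPdiff : (P (θ τ '' B \ θ τ '' B')).toReal = (P (B \ B')).toReal := by
    rw [himg, measure_image_theta hθ hinv τ (hB.diff hB')]
  have e1 : (P (A ∩ θ τ '' B')).toReal ≤ (P (A ∩ θ τ '' B)).toReal :=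
    toReal_mono' (Set.inter_subset_inter_right _ (Set.image_mono hsub))
  have e2 : (P (A ∩ θ τ '' B)).toReal ≤
      (P (A ∩ θ τ '' B')).toReal + (P (B \ B')).toReal := by
    rw [← hPdiff]
    apply toReal_subadd'
    intro x hx
    by_cases h : x ∈ θ τ '' B'
    · exact Or.inl ⟨hx.1, h⟩
    · exact Or.inr ⟨hx.2, h⟩
  have e3 : (P B').toReal ≤ (P B).toReal := toReal_mono' hsub
  have e4 : (P B).toReal ≤ (P B').toReal + (P (B \ B')).toReal := by
    apply toReal_subadd'
    intro x hx
    by_cases h : x ∈ B'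
    · exact Or.inl h
    · exact Or.inr ⟨hx, h⟩
  have e5 : (P A).toReal ≤ 1 := toReal_le_one' A
  have e6 : (0:ℝ) ≤ (P A).toReal := ENNReal.toReal_nonneg
  rw [cfn, cfn, abs_le]
  constructor <;> nlinarith

end

/-! ### Indicator helpers -/

lemma ind_mul {α : Type*} (s t : Set α) (x : α) :
    s.indicator (1 : α → ℝ) x * t.indicator (1 : α → ℝ) x
      = (s ∩ t).indicator (1 : α → ℝ) x := by
  rw [← Set.inter_indicator_mul]
  simp [Set.indicator]

lemma ind_abs_le {α : Type*} (s : Set α) (x : α) : |s.indicator (1 : α → ℝ) x| ≤ 1 := by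
  by_cases h : x ∈ s <;> simp [Set.indicator, h]

lemma ind_mono {β : Type*} [Preorder β] {s : Set β}
    (hs : ∀ ⦃u v : β⦄, u ≤ v → u ∈ s → v ∈ s) :
    Monotone (s.indicator (1 : β → ℝ)) := by
  intro u v huv
  by_cases hu : u ∈ s
  · rw [Set.indicator_of_mem hu, Set.indicator_of_mem (hs huv hu)]
    simp
  · rw [Set.indicator_of_notMem hu]
    exact Set.indicator_nonneg (fun _ _ => by norm_num) _

section Main

variable {d : ℕ} {P : Measure ((Fin d → ℤ) → ℝ)} [IsProbabilityMeasure P]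
  {θ : (Fin d → ℤ) → ((Fin d → ℤ) → ℝ) → ((Fin d → ℤ) → ℝ)}
  (hθ : ∀ τ x t, θ τ x t = x (t + τ)) (hinv : ∀ τ, P.map (θ τ) = P)

include hθ hinv

/-- Association: the covariance of indicator functions of upper cylinder sets is
nonnegative. -/
lemma cfn_nonneg
    (hassoc : ∀ (n : ℕ) (ts : Fin n → (Fin d → ℤ)) (g₁ g₂ : (Fin n → ℝ) → ℝ),
      Measurable g₁ → Measurable g₂ →
      (∃ C, ∀ u, |g₁ u| ≤ C) → (∃ C, ∀ u, |g₂ u| ≤ C) →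
      Monotone g₁ → Monotone g₂ →
      0 ≤ (∫ x, g₁ (fun i => x (ts i)) * g₂ (fun i => x (ts i)) ∂P) -
        (∫ x, g₁ (fun i => x (ts i)) ∂P) * (∫ x, g₂ (fun i => x (ts i)) ∂P))
    {A B : Set ((Fin d → ℤ) → ℝ)} (hA : A ∈ upSets d) (hB : B ∈ upSets d)
    (τ : Fin d → ℤ) : 0 ≤ cfn P θ A B τ := by
  classical
  have hAmeas := measurableSet_upSets hA
  have hBmeas := measurableSet_upSets hB
  have hSmeas := measurableSet_image_theta hθ τ hBmeas
  obtain ⟨n, t, a, rfl⟩ := hA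
  obtain ⟨m, u, b, rfl⟩ := hB
  set A : Set ((Fin d → ℤ) → ℝ) := {x | ∀ i, a i < x (t i)} with hAdef
  set B : Set ((Fin d → ℤ) → ℝ) := {x | ∀ j, b j < x (u j)} with hBdef
  set S₁ : Set (Fin (n + m) → ℝ) := {v | ∀ i : Fin n, a i < v (Fin.castAdd m i)} with hS₁def
  set S₂ : Set (Fin (n + m) → ℝ) := {v | ∀ j : Fin m, b j < v (Fin.natAdd n j)} with hS₂def
  set ts : Fin (n + m) → Fin d → ℤ := Fin.append t (fun j => u j + -τ) with htsdef
  have hS₁meas : MeasurableSet S₁ := by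
    have : S₁ = ⋂ i : Fin n, (fun v : Fin (n+m) → ℝ => v (Fin.castAdd m i)) ⁻¹'
        Set.Ioi (a i) := by ext v; simp [hS₁def, Set.mem_iInter]
    rw [this]
    exact MeasurableSet.iInter fun i => (measurable_pi_apply _) measurableSet_Ioi
  have hS₂meas : MeasurableSet S₂ := by
    have : S₂ = ⋂ j : Fin m, (fun v : Fin (n+m) → ℝ => v (Fin.natAdd n j)) ⁻¹'
        Set.Ioi (b j) := by ext v; simp [hS₂def, Set.mem_iInter]
    rw [this]
    exact MeasurableSet.iInter fun j => (measurable_pi_apply _) measurableSet_Ioi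
  have hmem₁ : ∀ x : (Fin d → ℤ) → ℝ, ((fun i => x (ts i)) ∈ S₁ ↔ x ∈ A) := by
    intro x
    constructor
    · intro h i
      simpa only [htsdef, Fin.append_left] using h i
    · intro h i
      show a i < x (ts (Fin.castAdd m i))
      rw [htsdef, Fin.append_left]
      exact h i
  have hmem₂ : ∀ x : (Fin d → ℤ) → ℝ, ((fun i => x (ts i)) ∈ S₂ ↔ x ∈ θ τ '' B) := by
    intro x
    rw [image_theta hθ]
    constructor
    · intro h j
      simpa only [htsdef, Fin.append_right, sh] using h j
    · intro h j
      show b j < x (ts (Fin.natAdd n j))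
      rw [htsdef, Fin.append_right]
      exact h j
  have h₁ : ∀ x : (Fin d → ℤ) → ℝ,
      S₁.indicator (1 : (Fin (n+m) → ℝ) → ℝ) (fun i => x (ts i))
        = A.indicator (1 : ((Fin d → ℤ) → ℝ) → ℝ) x := by
    intro x
    simp only [Set.indicator_apply, Pi.one_apply]
    exact if_congr (hmem₁ x) rfl rfl
  have h₂ : ∀ x : (Fin d → ℤ) → ℝ,
      S₂.indicator (1 : (Fin (n+m) → ℝ) → ℝ) (fun i => x (ts i))
        = (θ τ '' B).indicator (1 : ((Fin d → ℤ) → ℝ) → ℝ) x := by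
    intro x
    simp only [Set.indicator_apply, Pi.one_apply]
    exact if_congr (hmem₂ x) rfl rfl
  have key := hassoc (n + m) ts (S₁.indicator 1) (S₂.indicator 1)
    (measurable_one.indicator hS₁meas) (measurable_one.indicator hS₂meas)
    ⟨1, ind_abs_le S₁⟩ ⟨1, ind_abs_le S₂⟩
    (ind_mono fun v w hvw hv i => lt_of_lt_of_le (hv i) (hvw _))
    (ind_mono fun v w hvw hv j => lt_of_lt_of_le (hv j) (hvw _))
  simp only [h₁, h₂, ind_mul] at key
  rwa [integral_indicator_one (hAmeas.inter hSmeas), integral_indicator_one hAmeas,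
    integral_indicator_one hSmeas, measureReal_def, measureReal_def,
    measureReal_def, measure_image_theta hθ hinv τ hBmeas] at key

/-- Main lemma: ergodicity plus association implies weak mixing. -/
lemma main_mixing
    (hassoc : ∀ (n : ℕ) (ts : Fin n → (Fin d → ℤ)) (g₁ g₂ : (Fin n → ℝ) → ℝ),
      Measurable g₁ → Measurable g₂ →
      (∃ C, ∀ u, |g₁ u| ≤ C) → (∃ C, ∀ u, |g₂ u| ≤ C) →
      Monotone g₁ → Monotone g₂ →
      0 ≤ (∫ x, g₁ (fun i => x (ts i)) * g₂ (fun i => x (ts i)) ∂P) -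
        (∫ x, g₁ (fun i => x (ts i)) ∂P) * (∫ x, g₂ (fun i => x (ts i)) ∂P))
    (herg : ∀ A B : Set ((Fin d → ℤ) → ℝ), MeasurableSet A → MeasurableSet B →
      Tendsto (avg d fun τ => (P (A ∩ θ τ '' B)).toReal)
        atTop (nhds ((P A).toReal * (P B).toReal))) :
    ∀ A B : Set ((Fin d → ℤ) → ℝ), MeasurableSet A → MeasurableSet B →
      Tendsto (avg d fun τ => |cfn P θ A B τ|) atTop (nhds 0) := by
  -- convergence of the (signed) averages, for arbitrary measurable sets
  have hsigned : ∀ A B : Set ((Fin d → ℤ) → ℝ), MeasurableSet A → MeasurableSet B →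
      Tendsto (avg d (cfn P θ A B)) atTop (nhds 0) := by
    intro A B hAm hBm
    have h2 : Tendsto (fun T => avg d (fun τ => (P (A ∩ θ τ '' B)).toReal) T -
        (P A).toReal * (P B).toReal) atTop (nhds 0) := by
      simpa using (herg A B hAm hBm).sub
        (tendsto_const_nhds (x := (P A).toReal * (P B).toReal))
    refine Tendsto.congr' ?_ h2
    filter_upwards [eventually_ge_atTop 1] with T hT
    rw [← avg_const d ((P A).toReal * (P B).toReal) hT, ← avg_sub]
    rfl
  -- base case : both sets in the generating π-system
  have hbase : ∀ A B : Set ((Fin d → ℤ) → ℝ), A ∈ upSets d → B ∈ upSets d →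
      Tendsto (avg d fun τ => |cfn P θ A B τ|) atTop (nhds 0) := by
    intro A B hA hB
    have habs : (fun τ => |cfn P θ A B τ|) = cfn P θ A B := by
      funext τ
      exact abs_of_nonneg (cfn_nonneg hθ hinv hassoc hA hB τ)
    rw [habs]
    exact hsigned A B (measurableSet_upSets hA) (measurableSet_upSets hB)
  -- step 1 : extend in the first variable
  have hstep1 : ∀ B ∈ upSets d, ∀ A : Set ((Fin d → ℤ) → ℝ), MeasurableSet A →
      Tendsto (avg d fun τ => |cfn P θ A B τ|) atTop (nhds 0) := by
    intro B hB
    have hBm := measurableSet_upSets hB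
    have main := MeasurableSpace.induction_on_inter
      (C := fun A _ => Tendsto (avg d fun τ => |cfn P θ A B τ|) atTop (nhds 0))
      (pi_eq_generateFrom d) (isPiSystem_upSets d)
      (by
        show Tendsto (avg d fun τ => |cfn P θ (∅ : Set ((Fin d → ℤ) → ℝ)) B τ|) atTop (nhds 0)
        have : (fun τ => |cfn P θ (∅ : Set ((Fin d → ℤ) → ℝ)) B τ|) = fun _ => (0:ℝ) := by
          funext τ; rw [cfn_empty_left hθ hinv, abs_zero]
        rw [this]
        exact wlim_zero d)
      (fun A hA => hbase A B hA hB)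
      (by
        intro A hAm hA
        have : (fun τ => |cfn P θ Aᶜ B τ|) = fun τ => |cfn P θ A B τ| := by
          funext τ; rw [cfn_compl_left hθ hinv hAm hBm, abs_neg]
        rw [this]
        exact hA)
      (by
        intro f hdisj hmeas hC
        set F : ℕ → Set ((Fin d → ℤ) → ℝ) := fun N => ⋃ i ∈ Finset.range N, f i with hFdef
        have hFmeas : ∀ N, MeasurableSet (F N) := fun N =>
          MeasurableSet.biUnion (Finset.range N).countable_toSet (fun i _ => hmeas i)
        have hFC : ∀ N, Tendsto (avg d fun τ => |cfn P θ (F N) B τ|) atTop (nhds 0) := by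
          intro N
          induction N with
          | zero =>
            have hF0 : F 0 = ∅ := by simp [hFdef]
            have : (fun τ => |cfn P θ (F 0) B τ|) = fun _ => (0:ℝ) := by
              funext τ; rw [hF0, cfn_empty_left hθ hinv, abs_zero]
            rw [this]
            exact wlim_zero d
          | succ N ih =>
            have hFsucc : F (N + 1) = f N ∪ F N := by
              simp only [hFdef]
              rw [Finset.range_add_one, Finset.set_biUnion_insert]
            have hdisjN : Disjoint (f N) (F N) := by
              simp only [hFdef]
              simp only [Set.disjoint_iUnion_right]
              intro i hi
              simp only [Finset.mem_coe, Finset.mem_range] at hi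
              exact hdisj (Nat.ne_of_gt hi)
            have heq : (fun τ => |cfn P θ (F (N+1)) B τ|) =
                fun τ => |cfn P θ (f N) B τ + cfn P θ (F N) B τ| := by
              funext τ
              rw [hFsucc, cfn_union_left hθ hinv hdisjN (hFmeas N) hBm]
            rw [heq]
            exact wlim_abs_add (hC N) ih
        apply wlim_approx
        intro ε hε
        have hthin : ⋂ N, ((⋃ i, f i) \ F N) = ∅ := by
          apply Set.eq_empty_iff_forall_notMem.mpr
          intro x hx
          obtain ⟨i, hi⟩ := Set.mem_iUnion.mp (Set.mem_iInter.mp hx 0).1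
          exact (Set.mem_iInter.mp hx (i + 1)).2
            (Set.mem_biUnion (Finset.mem_coe.mpr (Finset.mem_range.mpr (Nat.lt_succ_self i))) hi)
        have hanti : Antitone fun N => (⋃ i, f i) \ F N := by
          intro N M hNM
          apply Set.diff_subset_diff_right
          intro x hx
          simp only [hFdef, Set.mem_iUnion, Finset.mem_range, exists_prop] at hx ⊢
          obtain ⟨i, hiN, hxi⟩ := hx
          exact ⟨i, lt_of_lt_of_le hiN hNM, hxi⟩
        have htend : Tendsto (fun N => P ((⋃ i, f i) \ F N)) atTop (nhds 0) := by
          have := tendsto_measure_iInter_atTop (μ := P)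
            (fun N => ((MeasurableSet.iUnion hmeas).diff (hFmeas N)).nullMeasurableSet)
            hanti ⟨0, measure_ne_top _ _⟩
          rw [hthin] at this
          simpa [Function.comp_def] using this
        have htendR : Tendsto (fun N => (P ((⋃ i, f i) \ F N)).toReal) atTop (nhds 0) := by
          have := (ENNReal.tendsto_toReal (a := 0) (by simp)).comp htend
          simpa [Function.comp_def] using this
        have hev : ∀ᶠ N in atTop, 2 * (P ((⋃ i, f i) \ F N)).toReal < ε := by
          have := htendR.const_mul 2
          rw [mul_zero] at this
          exact this.eventually_lt_const hε
        obtain ⟨N, hN⟩ := hev.exists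
        refine ⟨cfn P θ (F N) B, hFC N, fun τ => ?_⟩
        have hsub : F N ⊆ ⋃ i, f i := by
          simp only [hFdef]
          exact Set.iUnion₂_subset fun i _ => Set.subset_iUnion f i
        exact le_of_lt (lt_of_le_of_lt (cfn_approx_left hθ hinv hsub τ) hN))
    exact fun A hA => main A hA
  -- step 2 : extend in the second variable
  intro A B hA hB
  have main := MeasurableSpace.induction_on_inter
    (C := fun B _ => Tendsto (avg d fun τ => |cfn P θ A B τ|) atTop (nhds 0))
    (pi_eq_generateFrom d) (isPiSystem_upSets d)
    (by
      show Tendsto (avg d fun τ => |cfn P θ A (∅ : Set ((Fin d → ℤ) → ℝ)) τ|) atTop (nhds 0)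
      have : (fun τ => |cfn P θ A (∅ : Set ((Fin d → ℤ) → ℝ)) τ|) = fun _ => (0:ℝ) := by
        funext τ; rw [cfn_empty_right hθ hinv, abs_zero]
      rw [this]
      exact wlim_zero d)
    (fun B hB => hstep1 B hB A hA)
    (by
      intro B hBm hBC
      have : (fun τ => |cfn P θ A Bᶜ τ|) = fun τ => |cfn P θ A B τ| := by
        funext τ; rw [cfn_compl_right hθ hinv hA hBm, abs_neg]
      rw [this]
      exact hBC)
    (by
      intro f hdisj hmeas hC
      set F : ℕ → Set ((Fin d → ℤ) → ℝ) := fun N => ⋃ i ∈ Finset.range N, f i with hFdef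
      have hFmeas : ∀ N, MeasurableSet (F N) := fun N =>
        MeasurableSet.biUnion (Finset.range N).countable_toSet (fun i _ => hmeas i)
      have hFC : ∀ N, Tendsto (avg d fun τ => |cfn P θ A (F N) τ|) atTop (nhds 0) := by
        intro N
        induction N with
        | zero =>
          have hF0 : F 0 = ∅ := by simp [hFdef]
          have : (fun τ => |cfn P θ A (F 0) τ|) = fun _ => (0:ℝ) := by
            funext τ; rw [hF0, cfn_empty_right hθ hinv, abs_zero]
          rw [this]
          exact wlim_zero d
        | succ N ih =>
          have hFsucc : F (N + 1) = f N ∪ F N := by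
            simp only [hFdef]
            rw [Finset.range_add_one, Finset.set_biUnion_insert]
          have hdisjN : Disjoint (f N) (F N) := by
            simp only [hFdef]
            simp only [Set.disjoint_iUnion_right]
            intro i hi
            simp only [Finset.mem_coe, Finset.mem_range] at hi
            exact hdisj (Nat.ne_of_gt hi)
          have heq : (fun τ => |cfn P θ A (F (N+1)) τ|) =
              fun τ => |cfn P θ A (f N) τ + cfn P θ A (F N) τ| := by
            funext τ
            rw [hFsucc, cfn_union_right hθ hinv hdisjN hA (hFmeas N)]
          rw [heq]
          exact wlim_abs_add (hC N) ih
      apply wlim_approx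
      intro ε hε
      have hthin : ⋂ N, ((⋃ i, f i) \ F N) = ∅ := by
        apply Set.eq_empty_iff_forall_notMem.mpr
        intro x hx
        obtain ⟨i, hi⟩ := Set.mem_iUnion.mp (Set.mem_iInter.mp hx 0).1
        exact (Set.mem_iInter.mp hx (i + 1)).2
          (Set.mem_biUnion (Finset.mem_coe.mpr (Finset.mem_range.mpr (Nat.lt_succ_self i))) hi)
      have hanti : Antitone fun N => (⋃ i, f i) \ F N := by
        intro N M hNM
        apply Set.diff_subset_diff_right
        intro x hx
        simp only [hFdef, Set.mem_iUnion, Finset.mem_range, exists_prop] at hx ⊢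
        obtain ⟨i, hiN, hxi⟩ := hx
        exact ⟨i, lt_of_lt_of_le hiN hNM, hxi⟩
      have htend : Tendsto (fun N => P ((⋃ i, f i) \ F N)) atTop (nhds 0) := by
        have := tendsto_measure_iInter_atTop (μ := P)
          (fun N => ((MeasurableSet.iUnion hmeas).diff (hFmeas N)).nullMeasurableSet)
          hanti ⟨0, measure_ne_top _ _⟩
        rw [hthin] at this
        simpa [Function.comp_def] using this
      have htendR : Tendsto (fun N => (P ((⋃ i, f i) \ F N)).toReal) atTop (nhds 0) := by
        have := (ENNReal.tendsto_toReal (a := 0) (by simp)).comp htend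
        simpa [Function.comp_def] using this
      have hev : ∀ᶠ N in atTop, 2 * (P ((⋃ i, f i) \ F N)).toReal < ε := by
        have := htendR.const_mul 2
        rw [mul_zero] at this
        exact this.eventually_lt_const hε
      obtain ⟨N, hN⟩ := hev.exists
      refine ⟨cfn P θ A (F N), hFC N, fun τ => ?_⟩
      have hsub : F N ⊆ ⋃ i, f i := by
        simp only [hFdef]
        exact Set.iUnion₂_subset fun i _ => Set.subset_iUnion f i
      exact le_of_lt (lt_of_le_of_lt
        (cfn_approx_right hθ hinv hsub (MeasurableSet.iUnion hmeas) (hFmeas N) τ) hN))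
  exact main B hB

end Main

end S17

/-- A shift-invariant, positively dependent (associated) probability measure `P`
on `ℝ^{ℤ^d}` (with the product σ-algebra) is ergodic iff it is weakly mixing, where
ergodicity and weak mixing are expressed by Cesàro averages of `P(A ∩ θ_τ(B)) − P(A)P(B)`
and of its absolute value, respectively. -/
theorem stmt17 (d : ℕ)
    (P : Measure ((Fin d → ℤ) → ℝ)) [IsProbabilityMeasure P]
    (θ : (Fin d → ℤ) → ((Fin d → ℤ) → ℝ) → ((Fin d → ℤ) → ℝ))
    (hθ : ∀ τ x t, θ τ x t = x (t + τ))
    (hinv : ∀ τ, P.map (θ τ) = P)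
    (hassoc : ∀ (n : ℕ) (ts : Fin n → (Fin d → ℤ)) (g₁ g₂ : (Fin n → ℝ) → ℝ),
      Measurable g₁ → Measurable g₂ →
      (∃ C, ∀ u, |g₁ u| ≤ C) → (∃ C, ∀ u, |g₂ u| ≤ C) →
      Monotone g₁ → Monotone g₂ →
      0 ≤ (∫ x, g₁ (fun i => x (ts i)) * g₂ (fun i => x (ts i)) ∂P) -
        (∫ x, g₁ (fun i => x (ts i)) ∂P) * (∫ x, g₂ (fun i => x (ts i)) ∂P)) :
    (∀ A B : Set ((Fin d → ℤ) → ℝ), MeasurableSet A → MeasurableSet B →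
      Tendsto (fun T : ℕ => ((2 * T : ℝ) ^ d)⁻¹ *
          ∑ τ ∈ Fintype.piFinset fun _ : Fin d => Finset.Ioc (-(T : ℤ)) (T : ℤ),
            (P (A ∩ θ τ '' B)).toReal)
        atTop (nhds ((P A).toReal * (P B).toReal)))
    ↔
    (∀ A B : Set ((Fin d → ℤ) → ℝ), MeasurableSet A → MeasurableSet B →
      Tendsto (fun T : ℕ => ((2 * T : ℝ) ^ d)⁻¹ *
          ∑ τ ∈ Fintype.piFinset fun _ : Fin d => Finset.Ioc (-(T : ℤ)) (T : ℤ),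
            |(P (A ∩ θ τ '' B)).toReal - (P A).toReal * (P B).toReal|)
        atTop (nhds 0)) := by
  constructor
  · intro herg A B hA hB
    have herg' : ∀ A B : Set ((Fin d → ℤ) → ℝ), MeasurableSet A → MeasurableSet B →
        Tendsto (S17.avg d fun τ => (P (A ∩ θ τ '' B)).toReal)
          atTop (nhds ((P A).toReal * (P B).toReal)) :=
      fun A B hA hB => herg A B hA hB
    exact S17.main_mixing hθ hinv hassoc herg' A B hA hB
  · intro hweak A B hA hB
    have h : Tendsto (S17.avg d fun τ => |S17.cfn P θ A B τ|) atTop (nhds 0) :=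
      hweak A B hA hB
    have h0 : Tendsto (S17.avg d (S17.cfn P θ A B)) atTop (nhds 0) :=
      squeeze_zero_norm (fun T => by
        rw [Real.norm_eq_abs]; exact S17.abs_avg_le d _ T) h
    have h1 : Tendsto (fun T => S17.avg d (S17.cfn P θ A B) T +
        (P A).toReal * (P B).toReal) atTop (nhds ((P A).toReal * (P B).toReal)) := by
      simpa using h0.add (tendsto_const_nhds (x := (P A).toReal * (P B).toReal))
    refine Tendsto.congr' ?_ h1
    filter_upwards [eventually_ge_atTop 1] with T hT
    have : S17.avg d (S17.cfn P θ A B) T =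
        S17.avg d (fun τ => (P (A ∩ θ τ '' B)).toReal) T -
          S17.avg d (fun _ => (P A).toReal * (P B).toReal) T := by
      rw [← S17.avg_sub]
      rfl
    rw [this, S17.avg_const d _ hT]
    ring
end

section
/- Let (S, 𝓑, μ) be a standard Borel space with a σ-finite measure μ, let {φ_t}_{t∈ℝ^d} be a nonsingular ℝ^d-action on (S,μ) with (s,t) ↦ φ_t(s) jointly measurable, and let w : ℝ^d × S → (0,∞) be jointly measurable such that for each t ∈ ℝ^d, w(t,·) is a version of the Radon–Nikodym derivative of the measure A ↦ μ(φ_t(A)) with respect to μ, and w(t+h,s) = w(h,s)·w(t,φ_h(s)) for all t,h ∈ ℝ^d and all s ∈ S. For h ∈ L¹(S,μ) with h ≥ 0, define U_t h := w(t,·)·(h∘φ_t) and R(t) := ∫_S min((U_t h)(s), h(s)) μ(ds). Then (t,τ) ↦ R(t − τ) is nonnegative definite on ℝ^d × ℝ^d: for every n ∈ ℕ, all t_1,…,t_n ∈ ℝ^d and all real c_1,…,c_n, Σ_{i=1}^n Σ_{j=1}^n c_i c_j R(t_i − t_j) ≥ 0. -/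
open MeasureTheory Filter
open scoped ENNReal

/-- For a nonsingular jointly measurable `ℝ^d`-action with Radon–Nikodym
cocycle `w`, and `h ∈ L¹(μ)` nonnegative, the function
`R(t) = ∫ min((U_t h)(s), h(s)) dμ(s)` with `U_t h = w(t,·)·(h∘φ_t)` is such that
`(t,τ) ↦ R(t−τ)` is nonnegative definite on `ℝ^d × ℝ^d`. -/
theorem stmt19 {S : Type*} [MeasurableSpace S] [StandardBorelSpace S]
    (μ : Measure S) [SigmaFinite μ] (d : ℕ)
    (φ : (Fin d → ℝ) → S → S)
    (hφjoint : Measurable fun p : (Fin d → ℝ) × S => φ p.1 p.2)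
    (hid : ∀ s, φ 0 s = s)
    (hcomp : ∀ u v s, φ (u + v) s = φ u (φ v s))
    (hns : ∀ t, μ.map (φ t) ≪ μ ∧ μ ≪ μ.map (φ t))
    (w : (Fin d → ℝ) → S → ℝ)
    (hwjoint : Measurable fun p : (Fin d → ℝ) × S => w p.1 p.2)
    (hwpos : ∀ t s, 0 < w t s)
    (hwver : ∀ t, (fun s => ENNReal.ofReal (w t s)) =ᵐ[μ] (μ.map (φ (-t))).rnDeriv μ)
    (hwcoc : ∀ t h : Fin d → ℝ, ∀ s, w (t + h) s = w h s * w t (φ h s))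
    (h : S → ℝ) (hint : Integrable h μ) (hpos : ∀ s, 0 ≤ h s)
    (R : (Fin d → ℝ) → ℝ)
    (hR : ∀ t, R t = ∫ s, min (w t s * h (φ t s)) (h s) ∂μ) :
    ∀ (n : ℕ) (t : Fin n → (Fin d → ℝ)) (c : Fin n → ℝ),
      0 ≤ ∑ i, ∑ j, c i * c j * R (t i - t j) := by
  intro n t c
  -- basic measurability
  have hφm : ∀ u, Measurable (φ u) := fun u =>
    hφjoint.comp (measurable_const.prodMk measurable_id)
  have hwm : ∀ u, Measurable (w u) := fun u =>
    hwjoint.comp (measurable_const.prodMk measurable_id)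
  -- measurable nonneg representative of h
  obtain ⟨h0, h0m, h0ae⟩ := hint.aestronglyMeasurable.aemeasurable
  set h2 : S → ℝ := fun s => max (h0 s) 0 with hh2
  have h2m : Measurable h2 := h0m.max measurable_const
  have h2nn : ∀ s, 0 ≤ h2 s := fun s => le_max_right _ _
  have h2ae : h =ᵐ[μ] h2 := by
    filter_upwards [h0ae] with s hs
    simp [hh2, ← hs, max_eq_left (hpos s)]
  -- transfer a.e. equality through φ u
  have hcompae : ∀ u, (fun s => h (φ u s)) =ᵐ[μ] fun s => h2 (φ u s) := by
    intro u
    have hN : μ (toMeasurable μ {s | h s ≠ h2 s}) = 0 := by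
      rw [measure_toMeasurable]; exact h2ae
    have h0' : μ ((φ u) ⁻¹' toMeasurable μ {s | h s ≠ h2 s}) = 0 := by
      have := (hns u).1 hN
      rwa [Measure.map_apply (hφm u) (measurableSet_toMeasurable _ _)] at this
    refine ae_iff.2 (measure_mono_null (fun s hs => ?_) h0')
    exact subset_toMeasurable μ _ hs
  have hR2 : ∀ u, R u = ∫ s, min (w u s * h2 (φ u s)) (h2 s) ∂μ := by
    intro u
    rw [hR u]
    refine integral_congr_ae ?_
    filter_upwards [h2ae, hcompae u] with s hs1 hs2
    rw [hs1, hs2]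
  -- the isometry lemma
  have key : ∀ (u : Fin d → ℝ) (G : S → ℝ≥0∞), Measurable G →
      ∫⁻ s, ENNReal.ofReal (w u s) * G (φ u s) ∂μ = ∫⁻ s, G s ∂μ := by
    intro u G hG
    have : SigmaFinite (μ.map (φ (-u))) :=
      MeasurableEquiv.sigmaFinite_map
        ⟨⟨φ (-u), φ u, fun s => by rw [← hcomp, add_neg_cancel, hid],
          fun s => by rw [← hcomp, neg_add_cancel, hid]⟩, hφm (-u), hφm u⟩
    have h1 : ∫⁻ s, ENNReal.ofReal (w u s) * (G ∘ (φ u)) s ∂μ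
        = ∫⁻ s, (μ.map (φ (-u))).rnDeriv μ s * (G ∘ (φ u)) s ∂μ := by
      refine lintegral_congr_ae ?_
      filter_upwards [hwver u] with s hs
      rw [hs]
    have h2 : ∫⁻ s, (μ.map (φ (-u))).rnDeriv μ s * (G ∘ (φ u)) s ∂μ
        = ∫⁻ s, (G ∘ (φ u)) s ∂(μ.map (φ (-u))) :=
      lintegral_rnDeriv_mul (hns (-u)).1 ((hG.comp (hφm u)).aemeasurable)
    have h3 : ∫⁻ s, (G ∘ (φ u)) s ∂(μ.map (φ (-u))) = ∫⁻ s, G s ∂μ := by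
      rw [lintegral_map (hG.comp (hφm u)) (hφm (-u))]
      refine lintegral_congr fun s => ?_
      simp only [Function.comp]
      rw [← hcomp, add_neg_cancel, hid]
    calc ∫⁻ s, ENNReal.ofReal (w u s) * G (φ u s) ∂μ
        = ∫⁻ s, (G ∘ (φ u)) s ∂(μ.map (φ (-u))) := by rw [← h2, ← h1]; rfl
      _ = ∫⁻ s, G s ∂μ := h3
  -- elementary functions g i
  set g : Fin n → S → ℝ := fun i s => w (t i) s * h2 (φ (t i) s) with hg
  have hgm : ∀ i, Measurable (g i) := fun i => (hwm _).mul (h2m.comp (hφm _))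
  have hgnn : ∀ i s, 0 ≤ g i s := fun i s =>
    mul_nonneg (hwpos _ _).le (h2nn _)
  -- R (t i - t j) as a lintegral of min (g i) (g j)
  have hRij : ∀ i j, R (t i - t j)
      = (∫⁻ s, ENNReal.ofReal (min (g i s) (g j s)) ∂μ).toReal := by
    intro i j
    set u := t i - t j with hu
    have hmm : Measurable fun s => min (w u s * h2 (φ u s)) (h2 s) :=
      ((hwm u).mul (h2m.comp (hφm u))).min h2m
    have step1 : R u = (∫⁻ s, ENNReal.ofReal (min (w u s * h2 (φ u s)) (h2 s)) ∂μ).toReal := by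
      rw [hR2 u, integral_eq_lintegral_of_nonneg_ae]
      · exact ae_of_all _ fun s => le_min (mul_nonneg (hwpos _ _).le (h2nn _)) (h2nn _)
      · exact hmm.aestronglyMeasurable
    have step2 : ∫⁻ s, ENNReal.ofReal (min (w u s * h2 (φ u s)) (h2 s)) ∂μ
        = ∫⁻ s, ENNReal.ofReal (min (g i s) (g j s)) ∂μ := by
      have := key (t j) (fun s => ENNReal.ofReal (min (w u s * h2 (φ u s)) (h2 s)))
        (ENNReal.measurable_ofReal.comp hmm)
      rw [← this]
      refine lintegral_congr fun s => ?_
      rw [← ENNReal.ofReal_mul (hwpos (t j) s).le]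
      congr 1
      have e1 : φ u (φ (t j) s) = φ (t i) s := by
        rw [← hcomp, hu, sub_add_cancel]
      have e2 : w (t j) s * w u (φ (t j) s) = w (t i) s := by
        rw [← hwcoc u (t j) s, hu, sub_add_cancel]
      rw [mul_min_of_nonneg _ _ (hwpos (t j) s).le, ← mul_assoc, e2, e1]
    rw [step1, step2]
  -- finiteness
  have hfin : ∀ i, ∫⁻ s, ENNReal.ofReal (g i s) ∂μ ≠ ⊤ := by
    intro i
    have hh2int : Integrable h2 μ := hint.congr h2ae
    have : ∫⁻ s, ENNReal.ofReal (g i s) ∂μ = ∫⁻ s, ENNReal.ofReal (h2 s) ∂μ := by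
      have := key (t i) (fun s => ENNReal.ofReal (h2 s)) (ENNReal.measurable_ofReal.comp h2m)
      rw [← this]
      refine lintegral_congr fun s => ?_
      show ENNReal.ofReal (g i s) = ENNReal.ofReal (w (t i) s) * ENNReal.ofReal (h2 (φ (t i) s))
      exact ENNReal.ofReal_mul (hwpos _ _).le
    rw [this]
    exact (hh2int.lintegral_lt_top).ne -- name guess
  -- product measure and sets
  set ν := μ.prod (volume : Measure ℝ) with hν
  set A : Fin n → Set (S × ℝ) := fun i => {p | p.2 ∈ Set.Ioc 0 (g i p.1)} with hA
  have hAm : ∀ i, MeasurableSet (A i) := by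
    intro i
    have : A i = {p : S × ℝ | 0 < p.2} ∩ {p : S × ℝ | p.2 ≤ g i p.1} := by
      ext p; simp [hA, Set.mem_Ioc, and_comm]
    rw [this]
    exact (measurableSet_lt measurable_const measurable_snd).inter
      (measurableSet_le measurable_snd ((hgm i).comp measurable_fst))
  have hAν : ∀ i j, ν (A i ∩ A j) = ∫⁻ s, ENNReal.ofReal (min (g i s) (g j s)) ∂μ := by
    intro i j
    rw [hν, Measure.prod_apply ((hAm i).inter (hAm j))]
    refine lintegral_congr fun s => ?_
    have : Prod.mk s ⁻¹' (A i ∩ A j) = Set.Ioc 0 (min (g i s) (g j s)) := by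
      ext x
      simp [hA, Set.mem_Ioc, and_assoc, and_comm, and_left_comm, le_min_iff]
    rw [this, Real.volume_Ioc, sub_zero]
  have hAfin : ∀ i j, ν (A i ∩ A j) ≠ ⊤ := by
    intro i j
    rw [hAν i j]
    refine ne_top_of_le_ne_top (hfin i) (lintegral_mono fun s => ?_)
    exact ENNReal.ofReal_le_ofReal (min_le_left _ _)
  -- indicator functions
  set e : Fin n → S × ℝ → ℝ := fun i => (A i).indicator 1 with he
  have heij : ∀ i j, (fun p => e i p * e j p) = (A i ∩ A j).indicator 1 := by
    intro i j
    rw [Set.inter_indicator_one]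
    rfl
  have hinte : ∀ i j, Integrable (fun p => e i p * e j p) ν := by
    intro i j
    rw [heij]
    rw [integrable_indicator_iff ((hAm i).inter (hAm j))]
    exact integrableOn_const (hAfin i j)
  have hRe : ∀ i j, R (t i - t j) = ∫ p, e i p * e j p ∂ν := by
    intro i j
    rw [hRij i j, ← hAν i j, heij, integral_indicator_one ((hAm i).inter (hAm j))]; rfl
  -- final computation
  have hsum : ∑ i, ∑ j, c i * c j * R (t i - t j)
      = ∫ p, (∑ i, c i * e i p) ^ 2 ∂ν := by
    have hterm : ∀ (i j : Fin n), Integrable (fun p => (c i * e i p) * (c j * e j p)) ν := by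
      intro i j
      have : (fun p => (c i * e i p) * (c j * e j p))
          = fun p => (c i * c j) * (e i p * e j p) := by
        funext p; ring
      rw [this]
      exact (hinte i j).const_mul _
    have expand : ∀ p, (∑ i, c i * e i p) ^ 2
        = ∑ i, ∑ j, (c i * e i p) * (c j * e j p) := by
      intro p
      rw [sq, Finset.sum_mul_sum]
    calc ∑ i, ∑ j, c i * c j * R (t i - t j)
        = ∑ i, ∑ j, ∫ p, (c i * e i p) * (c j * e j p) ∂ν := by
          refine Finset.sum_congr rfl fun i _ => Finset.sum_congr rfl fun j _ => ?_
          rw [hRe i j]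
          rw [show (fun p => (c i * e i p) * (c j * e j p))
              = fun p => (c i * c j) * (e i p * e j p) by funext p; ring]
          rw [integral_const_mul]
      _ = ∫ p, ∑ i, ∑ j, (c i * e i p) * (c j * e j p) ∂ν := by
          rw [integral_finset_sum _ (fun i _ => integrable_finset_sum _ (fun j _ => hterm i j))]
          exact Finset.sum_congr rfl fun i _ => (integral_finset_sum _ (fun j _ => hterm i j)).symm
      _ = ∫ p, (∑ i, c i * e i p) ^ 2 ∂ν := by
          exact integral_congr_ae (ae_of_all _ fun p => (expand p).symm)
  rw [hsum]
  exact integral_nonneg fun p => sq_nonneg _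
end
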